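/- arXiv:2005.07835 — 17 statements merged into one kernel-verified Lean document; each statement's English description precedes it below -/
import Mathlib

section
/- For any finite simple graph G with maximum degree Δ(G) ≥ k, where k ≥ 2 is an integer, the k-domination number satisfies γ_k(G) ≥ γ(G) + k − 2. -/
/-- `D` is a `k`-dominating set of `G`: every vertex outside `D` has
at least `k` neighbors in `D`. -/
def IsKDomSet {V : Type*} (G : SimpleGraph V) (k : ℕ) (D : Set V) : Prop :=
  ∀ v ∉ D, k ≤ (G.neighborSet v ∩ D).ncard

/-- The `k`-domination number: minimum cardinality of a `k`-dominating set. -/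
noncomputable def kdomNum {V : Type*} (G : SimpleGraph V) (k : ℕ) : ℕ :=
  sInf {n | ∃ D : Set V, IsKDomSet G k D ∧ D.ncard = n}

/-- For any finite simple graph `G` with `Δ(G) ≥ k ≥ 2`,
`γ_k(G) ≥ γ(G) + k − 2`. -/
theorem statement0 {V : Type*} [Fintype V] (G : SimpleGraph V) [DecidableRel G.Adj]
    (k : ℕ) (hk : 2 ≤ k) (hΔ : k ≤ G.maxDegree) :
    kdomNum G 1 + (k - 2) ≤ kdomNum G k := by
  classical
  -- the defining set of kdomNum G k is nonempty
  have hne : {n | ∃ D : Set V, IsKDomSet G k D ∧ D.ncard = n}.Nonempty := by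
    exact ⟨(Set.univ : Set V).ncard, Set.univ, fun v hv => absurd (Set.mem_univ v) hv, rfl⟩
  obtain ⟨D, hD, hDcard⟩ := Nat.sInf_mem hne
  have hgk : kdomNum G k = D.ncard := hDcard.symm
  rw [hgk]
  by_cases hU : D = Set.univ
  · -- D = univ : use the compl of max degree vertex's neighborhood
    have hVne : Nonempty V := by
      by_contra h
      simp only [not_nonempty_iff] at h
      have : G.maxDegree = 0 := by
        rw [SimpleGraph.maxDegree]
        simp [Finset.univ_eq_empty]
      omega
    obtain ⟨v, hv⟩ := G.exists_maximal_degree_vertex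
    set D1 : Set V := (G.neighborSet v)ᶜ with hD1
    have hDom : IsKDomSet G 1 D1 := by
      intro w hw
      simp only [hD1, Set.mem_compl_iff, not_not] at hw
      have hvmem : v ∈ G.neighborSet w ∩ D1 := by
        constructor
        · exact (G.adj_symm hw)
        · simp [hD1, SimpleGraph.mem_neighborSet, G.irrefl]
      have : 0 < (G.neighborSet w ∩ D1).ncard := by
        rw [Set.ncard_pos (Set.toFinite _)]
        exact ⟨v, hvmem⟩
      omega
    have hle : kdomNum G 1 ≤ D1.ncard := Nat.sInf_le ⟨D1, hDom, rfl⟩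
    have hcompl : (G.neighborSet v).ncard + D1.ncard = Nat.card V :=
      Set.ncard_add_ncard_compl _
    have hNdeg : (G.neighborSet v).ncard = G.degree v := by
      rw [Set.ncard_eq_toFinset_card']
      rfl
    have hdeg : k ≤ G.degree v := hv ▸ hΔ
    have hUcard : D.ncard = Fintype.card V := by rw [hU, Set.ncard_univ, Nat.card_eq_fintype_card]
    have hNatcard : Nat.card V = Fintype.card V := Nat.card_eq_fintype_card
    omega
  · -- D ≠ univ : pick u ∉ D, swap k-1 of its D-neighbors for u
    have : ∃ u, u ∉ D := by
      by_contra h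
      push_neg at h
      exact hU (Set.eq_univ_of_forall h)
    obtain ⟨u, hu⟩ := this
    have hku : k ≤ (G.neighborSet u ∩ D).ncard := hD u hu
    obtain ⟨A, hAsub, hAcard⟩ : ∃ A ⊆ G.neighborSet u ∩ D, A.ncard = k - 1 :=
      Set.exists_subset_card_eq (by omega)
    have hAD : A ⊆ D := hAsub.trans Set.inter_subset_right
    have hAN : A ⊆ G.neighborSet u := hAsub.trans Set.inter_subset_left
    set D1 : Set V := insert u (D \ A) with hD1
    have hDom : IsKDomSet G 1 D1 := by
      intro w hw
      simp only [hD1, Set.mem_insert_iff, not_or, Set.mem_diff] at hw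
      obtain ⟨hwu, hwDA⟩ := hw
      suffices h : (G.neighborSet w ∩ D1).Nonempty by
        have := (Set.ncard_pos (Set.toFinite _)).mpr h
        omega
      by_cases hwA : w ∈ A
      · exact ⟨u, G.adj_symm (hAN hwA), Set.mem_insert _ _⟩
      · have hwD : w ∉ D := fun h => hwDA ⟨h, hwA⟩
        have hkw : k ≤ (G.neighborSet w ∩ D).ncard := hD w hwD
        -- neighbor in D not in A
        have : ((G.neighborSet w ∩ D) \ A).Nonempty := by
          rw [← Set.ncard_pos (Set.toFinite _)]
          have h3 : (G.neighborSet w ∩ D).ncard ≤ ((G.neighborSet w ∩ D) \ A).ncard + A.ncard := by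
              calc (G.neighborSet w ∩ D).ncard
                  ≤ (((G.neighborSet w ∩ D) \ A) ∪ A).ncard := by
                    apply Set.ncard_le_ncard
                    · intro x hx
                      by_cases hxA : x ∈ A
                      · exact Or.inr hxA
                      · exact Or.inl ⟨hx, hxA⟩
                    · exact (Set.toFinite _).union (Set.toFinite _)
                _ ≤ ((G.neighborSet w ∩ D) \ A).ncard + A.ncard :=
                    Set.ncard_union_le _ _
          omega
        obtain ⟨x, ⟨hxN, hxD⟩, hxA⟩ := this
        exact ⟨x, hxN, Or.inr ⟨hxD, hxA⟩⟩
    have hle : kdomNum G 1 ≤ D1.ncard := Nat.sInf_le ⟨D1, hDom, rfl⟩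
    have hD1card : D1.ncard = D.ncard - (k - 1) + 1 := by
      rw [hD1, Set.ncard_insert_of_notMem (fun h => hu h.1) (Set.toFinite _),
        Set.ncard_diff hAD (Set.toFinite _), hAcard]
    have hkD : k - 1 ≤ D.ncard := hAcard ▸ Set.ncard_le_ncard hAD (Set.toFinite _)
    omega
end

section
/- Let k ≥ 2 be an integer and let G be a finite simple graph with Δ(G) ≥ k. If D is a minimum k-dominating set of G and γ_k(G) = γ(G) + k − 2, then the domination number of the induced subgraph G[D] satisfies γ(G[D]) ≥ γ_k(G) − k + 2. -/
/-- If `D` is a minimum `k`-dominating set of `G` (where `Δ(G) ≥ k ≥ 2`) and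
`γ_k(G) = γ(G) + k − 2`, then `γ(G[D]) ≥ γ_k(G) − k + 2`
(stated equivalently as `γ_k(G) ≤ γ(G[D]) + (k − 2)`). -/
theorem statement1 {V : Type*} [Fintype V] (G : SimpleGraph V) [DecidableRel G.Adj]
    (k : ℕ) (hk : 2 ≤ k) (hΔ : k ≤ G.maxDegree)
    (D : Set V) (hD : IsKDomSet G k D) (hmin : D.ncard = kdomNum G k)
    (heq : kdomNum G k = kdomNum G 1 + (k - 2)) :
    kdomNum G k ≤ kdomNum (G.induce D) 1 + (k - 2) := by
  -- It suffices to show γ(G) ≤ γ(G[D]).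
  suffices h1 : kdomNum G 1 ≤ kdomNum (G.induce D) 1 by omega
  by_contra hcon
  push_neg at hcon
  -- obtain a minimum dominating set S' of G[D]
  have hne : {n | ∃ S : Set ↥D, IsKDomSet (G.induce D) 1 S ∧ S.ncard = n}.Nonempty :=
    ⟨(Set.univ : Set ↥D).ncard, Set.univ, fun v hv => absurd (Set.mem_univ v) hv, rfl⟩
  obtain ⟨S', hS'dom, hS'card⟩ := Nat.sInf_mem hne
  set S : Set V := Subtype.val '' S' with hSdef
  have hSsub : S ⊆ D := by rintro _ ⟨x, hx, rfl⟩; exact x.2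
  have hScard : S.ncard = kdomNum (G.induce D) 1 := by
    rw [hSdef, Set.ncard_image_of_injective _ Subtype.val_injective]; exact hS'card
  -- every vertex of D outside S has a G-neighbor in S
  have hSdom : ∀ y ∈ D, y ∉ S → ∃ s ∈ S, G.Adj y s := by
    intro y hy hyS
    have hy' : (⟨y, hy⟩ : ↥D) ∉ S' := fun h => hyS ⟨_, h, rfl⟩
    have h1 := hS'dom _ hy'
    have hnonempty : ((G.induce D).neighborSet ⟨y, hy⟩ ∩ S').Nonempty := by
      rw [← Set.ncard_pos]; omega
    obtain ⟨s', hs'⟩ := hnonempty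
    refine ⟨↑s', ⟨s', hs'.2, rfl⟩, ?_⟩
    have : (G.induce D).Adj ⟨y, hy⟩ s' := hs'.1
    simpa using this
  have hDcard : D.ncard = kdomNum G 1 + (k - 2) := by rw [hmin, heq]
  have hsplit : (D \ S).ncard = D.ncard - S.ncard := Set.ncard_diff hSsub
  have hSle : S.ncard ≤ D.ncard := Set.ncard_le_ncard hSsub
  by_cases hcase : k - 1 ≤ (D \ S).ncard
  · -- pick Y ⊆ D \ S of size k - 1, then D \ Y dominates G with |D| - (k-1) < γ(G) vertices
    obtain ⟨Y, hYsub, hYcard⟩ := Set.exists_subset_card_eq hcase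
    have hYD : Y ⊆ D := hYsub.trans Set.diff_subset
    have hdom : IsKDomSet G 1 (D \ Y) := by
      intro v hv
      rw [Nat.one_le_iff_ne_zero, ← Nat.pos_iff_ne_zero, Set.ncard_pos]
      by_cases hvD : v ∈ D
      · -- v ∈ Y : it has a neighbor in S ⊆ D \ Y
        have hvY : v ∈ Y := by
          by_contra hvY; exact hv ⟨hvD, hvY⟩
        have hvS : v ∉ S := (hYsub hvY).2
        obtain ⟨s, hsS, hadj⟩ := hSdom v hvD hvS
        have hsY : s ∉ Y := fun h => (hYsub h).2 hsS
        exact ⟨s, hadj, hSsub hsS, hsY⟩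
      · -- v ∉ D : it has ≥ k neighbors in D, at most k-1 removed
        have hk' := hD v hvD
        by_contra hempty
        rw [Set.not_nonempty_iff_eq_empty] at hempty
        have hsub : G.neighborSet v ∩ D ⊆ Y := by
          intro w hw
          by_contra hwY
          have : w ∈ G.neighborSet v ∩ (D \ Y) := ⟨hw.1, hw.2, hwY⟩
          rw [hempty] at this
          exact this
        have := Set.ncard_le_ncard hsub (Set.toFinite Y)
        omega
    have hle : kdomNum G 1 ≤ (D \ Y).ncard :=
      Nat.sInf_le ⟨D \ Y, hdom, rfl⟩
    have hdiff : (D \ Y).ncard = D.ncard - Y.ncard := Set.ncard_diff hYD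
    omega
  · omega
end

section
/- Let k ≥ 2 be an integer and let G be a finite simple graph with Δ(G) ≥ k. If D is a minimum k-dominating set of G and γ_k(G) = γ(G) + k − 2, then the maximum degree of the induced subgraph G[D] satisfies Δ(G[D]) ≤ k − 2. -/
lemma one_le_domNum {V : Type*} [Fintype V] [Nonempty V] (G : SimpleGraph V) :
    1 ≤ kdomNum G 1 := by
  have hne : {n | ∃ D : Set V, IsKDomSet G 1 D ∧ D.ncard = n}.Nonempty := by
    exact ⟨(Set.univ : Set V).ncard, Set.univ, fun v hv => absurd (Set.mem_univ v) hv, rfl⟩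
  have hmem := Nat.sInf_mem hne
  obtain ⟨D₁, hD₁, hcard⟩ := hmem
  by_contra h
  have h0 : D₁.ncard = 0 := by unfold kdomNum at h; omega
  have hD₁e : D₁ = ∅ := (Set.ncard_eq_zero (Set.toFinite _)).mp h0
  obtain ⟨v⟩ := ‹Nonempty V›
  have h1 := hD₁ v (by simp [hD₁e])
  rw [hD₁e] at h1
  simp at h1

/-- If `D` is a minimum `k`-dominating set of `G` (where `Δ(G) ≥ k ≥ 2`) and
`γ_k(G) = γ(G) + k − 2`, then `Δ(G[D]) ≤ k − 2`, i.e. every vertex of `D`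
has at most `k − 2` neighbors inside `D`. -/
theorem statement2 {V : Type*} [Fintype V] (G : SimpleGraph V) [DecidableRel G.Adj]
    (k : ℕ) (hk : 2 ≤ k) (hΔ : k ≤ G.maxDegree)
    (D : Set V) (hD : IsKDomSet G k D) (hmin : D.ncard = kdomNum G k)
    (heq : kdomNum G k = kdomNum G 1 + (k - 2)) :
    ∀ v ∈ D, (G.neighborSet v ∩ D).ncard ≤ k - 2 := by
  -- V is nonempty
  have hne : Nonempty V := by
    by_contra h
    have : G.maxDegree = 0 := by
      unfold SimpleGraph.maxDegree
      simp [Finset.univ_eq_empty_iff.mpr (not_nonempty_iff.mp h)]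
    omega
  have hγ : 1 ≤ kdomNum G 1 := one_le_domNum G
  intro v hv
  by_contra hlt
  push_neg at hlt
  have hge : k - 1 ≤ (G.neighborSet v ∩ D).ncard := by omega
  obtain ⟨S, hS, hScard⟩ := Set.exists_subset_card_eq hge
  have hSD : S ⊆ D := hS.trans Set.inter_subset_right
  have hvS : v ∉ S := fun h => (G.irrefl (hS h).1)
  -- D \ S is a dominating set
  have hdom : IsKDomSet G 1 (D \ S) := by
    intro w hw
    by_cases hwD : w ∈ D
    · -- then w ∈ S, and v is a neighbor of w in D \ S
      have hwS : w ∈ S := by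
        by_contra h; exact hw ⟨hwD, h⟩
      have hadj : G.Adj w v := ((hS hwS).1 : G.Adj v w).symm
      have : v ∈ G.neighborSet w ∩ (D \ S) := ⟨hadj, hv, hvS⟩
      have := Set.ncard_pos (Set.toFinite _) |>.mpr ⟨v, this⟩
      omega
    · have hk' := hD w hwD
      have hsub : (G.neighborSet w ∩ D) \ S ⊆ G.neighborSet w ∩ (D \ S) := by
        intro x hx; exact ⟨hx.1.1, hx.1.2, hx.2⟩
      have h1 : (G.neighborSet w ∩ D).ncard ≤ ((G.neighborSet w ∩ D) \ S).ncard + S.ncard := by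
        have : G.neighborSet w ∩ D ⊆ ((G.neighborSet w ∩ D) \ S) ∪ S := by
          intro x hx
          by_cases hxS : x ∈ S
          · exact Or.inr hxS
          · exact Or.inl ⟨hx, hxS⟩
        calc (G.neighborSet w ∩ D).ncard
            ≤ (((G.neighborSet w ∩ D) \ S) ∪ S).ncard :=
              Set.ncard_le_ncard this (Set.toFinite _)
          _ ≤ ((G.neighborSet w ∩ D) \ S).ncard + S.ncard := Set.ncard_union_le _ _
      have h2 : ((G.neighborSet w ∩ D) \ S).ncard ≤ (G.neighborSet w ∩ (D \ S)).ncard :=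
        Set.ncard_le_ncard hsub (Set.toFinite _)
      omega
  have hle : kdomNum G 1 ≤ (D \ S).ncard := Nat.sInf_le ⟨D \ S, hdom, rfl⟩
  have hdcard : (D \ S).ncard = D.ncard - S.ncard := Set.ncard_diff hSD
  rw [hmin, heq] at *
  omega
end

section
/- Let k ≥ 2 be an integer and let G be a connected finite simple graph with Δ(G) ≥ k satisfying γ_k(G) = γ(G) + k − 2, and let D be a minimum k-dominating set of G. Then for every k distinct vertices v_1, …, v_k in D that have at least one common neighbor in G, there exist two distinct nonadjacent vertices x, y in V(G) \ D such that N(x) ∩ D = N(y) ∩ D = {v_1, …, v_k}. -/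
lemma helper3 {V : Type*} [Fintype V] (G : SimpleGraph V)
    (k : ℕ) (hk : 2 ≤ k)
    (heq : kdomNum G k = kdomNum G 1 + (k - 2))
    (D : Set V) (hD : IsKDomSet G k D) (hmin : D.ncard = kdomNum G k)
    (S : Finset V) (hScard : S.card = k) (hSsub : ↑S ⊆ D)
    (z : V) (hz : ∀ v ∈ S, G.Adj z v) :
    ∃ x, x ∉ D ∧ x ≠ z ∧ ¬ G.Adj z x ∧ G.neighborSet x ∩ D = ↑S := by
  set A : Set V := (D \ ↑S) ∪ {z} with hA
  have hSD : (↑S : Set V).ncard = k := by rw [Set.ncard_coe_finset, hScard]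
  have hkD : k ≤ D.ncard := by
    rw [← hSD]; exact Set.ncard_le_ncard hSsub (Set.toFinite D)
  have hdiff : (D \ ↑S).ncard = D.ncard - k := by
    rw [Set.ncard_diff hSsub, hSD]
  have hAcard : A.ncard < kdomNum G 1 := by
    have h1 : A.ncard ≤ (D \ ↑S).ncard + 1 := by
      calc A.ncard ≤ (D \ ↑S).ncard + ({z} : Set V).ncard := Set.ncard_union_le _ _
      _ = (D \ ↑S).ncard + 1 := by rw [Set.ncard_singleton]
    have h2 : D.ncard = kdomNum G 1 + (k - 2) := by rw [hmin, heq]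
    omega
  have hnd : ¬ IsKDomSet G 1 A := by
    intro h
    have : kdomNum G 1 ≤ A.ncard := Nat.sInf_le ⟨A, h, rfl⟩
    omega
  rw [IsKDomSet] at hnd
  push_neg at hnd
  obtain ⟨x, hxA, hxlt⟩ := hnd
  have hempty : G.neighborSet x ∩ A = ∅ := by
    have h0 : (G.neighborSet x ∩ A).ncard = 0 := by omega
    exact (Set.ncard_eq_zero (Set.toFinite _)).mp h0
  have hxz : x ≠ z := by
    intro h; exact hxA (Or.inr (by simp [h]))
  have hxS : x ∉ S := by
    intro hxS
    have hzA : z ∈ G.neighborSet x ∩ A := ⟨(hz x hxS).symm, Or.inr rfl⟩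
    rw [hempty] at hzA; exact hzA
  have hxD : x ∉ D := by
    intro hxD
    exact hxA (Or.inl ⟨hxD, hxS⟩)
  have hnadj : ¬ G.Adj z x := by
    intro h
    have hzA : z ∈ G.neighborSet x ∩ A := ⟨h.symm, Or.inr rfl⟩
    rw [hempty] at hzA; exact hzA
  refine ⟨x, hxD, hxz, hnadj, ?_⟩
  have hsub : G.neighborSet x ∩ D ⊆ ↑S := by
    intro v ⟨hv1, hv2⟩
    by_contra hvS
    have : v ∈ G.neighborSet x ∩ A := ⟨hv1, Or.inl ⟨hv2, hvS⟩⟩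
    rw [hempty] at this; exact this
  exact Set.eq_of_subset_of_ncard_le hsub
    (by rw [hSD]; exact hD x hxD) (Set.toFinite _)

/-- Let `G` be a connected graph with `Δ(G) ≥ k ≥ 2` satisfying
`γ_k(G) = γ(G) + k − 2`, and let `D` be a minimum `k`-dominating set.
Then for every `k` distinct vertices of `D` (given as a `k`-element set `S`)
having a common neighbor, there are two distinct nonadjacent vertices
`x, y ∉ D` with `N(x) ∩ D = N(y) ∩ D = S`. -/
theorem statement3 {V : Type*} [Fintype V] (G : SimpleGraph V) [DecidableRel G.Adj]
    (k : ℕ) (hk : 2 ≤ k) (hΔ : k ≤ G.maxDegree) (hconn : G.Connected)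
    (heq : kdomNum G k = kdomNum G 1 + (k - 2))
    (D : Set V) (hD : IsKDomSet G k D) (hmin : D.ncard = kdomNum G k)
    (S : Finset V) (hScard : S.card = k) (hSsub : ↑S ⊆ D)
    (hcommon : ∃ w : V, ∀ v ∈ S, G.Adj w v) :
    ∃ x y : V, x ≠ y ∧ x ∉ D ∧ y ∉ D ∧ ¬ G.Adj x y ∧
      G.neighborSet x ∩ D = ↑S ∧ G.neighborSet y ∩ D = ↑S := by
  obtain ⟨w, hw⟩ := hcommon
  obtain ⟨x, hxD, _, _, hxN⟩ := helper3 G k hk heq D hD hmin S hScard hSsub w hw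
  have hxadj : ∀ v ∈ S, G.Adj x v := by
    intro v hv
    have : v ∈ G.neighborSet x ∩ D := by rw [hxN]; exact_mod_cast hv
    exact this.1
  obtain ⟨y, hyD, hyx, hnadj, hyN⟩ := helper3 G k hk heq D hD hmin S hScard hSsub x hxadj
  exact ⟨x, y, hyx.symm, hxD, hyD, hnadj, hxN, hyN⟩
end

section
/- Let k ≥ 3 be an integer and let G be a connected bipartite finite simple graph with Δ(G) ≥ k satisfying γ_k(G) = γ(G) + k − 2. Then every minimum k-dominating set D of G is a partite class of G; that is, both D and V(G) \ D are independent sets of vertices. -/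
private lemma kdom_le' {V : Type*} (G : SimpleGraph V) (E : Set V)
    (hE : IsKDomSet G 1 E) : kdomNum G 1 ≤ E.ncard :=
  Nat.sInf_le ⟨E, hE, rfl⟩

/-- Core construction for part 1: if `D` is `k`-dominating, `x ∉ D`, and
`w₀ w₁ ∈ D` are adjacent with `w₀` in the same partite class as `x`, then
we get a small dominating set. -/
private lemma core1 {V : Type*} [Fintype V] (G : SimpleGraph V)
    (k : ℕ) (hk : 3 ≤ k) (A : Set V)
    (hA : ∀ u v : V, G.Adj u v → (u ∈ A ↔ v ∉ A))
    (D : Set V) (hD : IsKDomSet G k D)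
    (x : V) (hxD : x ∉ D)
    (w₀ w₁ : V) (hw₀ : w₀ ∈ D) (hw₁ : w₁ ∈ D) (hadj : G.Adj w₀ w₁)
    (hclass : (x ∈ A ↔ w₀ ∈ A)) :
    kdomNum G 1 + k ≤ D.ncard + 1 := by
  have hxk : k ≤ (G.neighborSet x ∩ D).ncard := hD x hxD
  have h1 : k - 1 ≤ ((G.neighborSet x ∩ D) \ {w₁}).ncard := by
    have := Set.pred_ncard_le_ncard_diff_singleton (G.neighborSet x ∩ D) w₁
    omega
  obtain ⟨S, hSsub, hScard⟩ := Set.exists_subset_card_eq h1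
  have hSnx : S ⊆ G.neighborSet x := fun a ha => ((hSsub ha).1).1
  have hSD : S ⊆ D := fun a ha => ((hSsub ha).1).2
  have hw₁S : w₁ ∉ S := fun h => (hSsub h).2 rfl
  have hw₀S : w₀ ∉ S := by
    intro h
    have := hA x w₀ (hSnx h)
    tauto
  set T : Set V := insert w₀ S with hT
  have hTD : T ⊆ D := by
    intro a ha
    rcases ha with rfl | ha
    · exact hw₀
    · exact hSD ha
  have hTcard : T.ncard = k := by
    rw [hT, Set.ncard_insert_of_notMem hw₀S (Set.toFinite S)]
    omega
  set E : Set V := insert x (D \ T) with hE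
  have hxDT : x ∉ D \ T := fun h => hxD h.1
  have hEcard : E.ncard = D.ncard - k + 1 := by
    rw [hE, Set.ncard_insert_of_notMem hxDT (Set.toFinite _),
      Set.ncard_diff hTD (Set.toFinite T), hTcard]
  have hkD : k ≤ D.ncard := by
    calc k ≤ (G.neighborSet x ∩ D).ncard := hxk
    _ ≤ D.ncard := Set.ncard_le_ncard Set.inter_subset_right (Set.toFinite D)
  have hEdom : IsKDomSet G 1 E := by
    intro w hw
    have hne : (G.neighborSet w ∩ E).Nonempty := by
      by_cases hwS : w ∈ S
      · exact ⟨x, (hSnx hwS).symm, Set.mem_insert _ _⟩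
      by_cases hww₀ : w = w₀
      · refine ⟨w₁, ?_, ?_⟩
        · rw [hww₀]; exact hadj
        · refine Set.mem_insert_of_mem _ ⟨hw₁, ?_⟩
          intro h
          rcases h with h | h
          · exact G.ne_of_adj hadj h.symm
          · exact hw₁S h
      -- now w ∉ T, and w ∉ E, so w ∉ D and w ≠ x
      have hwT : w ∉ T := by
        intro h
        rcases h with h | h
        · exact hww₀ h
        · exact hwS h
      have hwD : w ∉ D := by
        intro h
        exact hw (Set.mem_insert_of_mem _ ⟨h, hwT⟩)
      have hwx : w ≠ x := by
        intro h; exact hw (h ▸ Set.mem_insert _ _)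
      have hwk : k ≤ (G.neighborSet w ∩ D).ncard := hD w hwD
      have hnsub : ¬ (G.neighborSet w ∩ D ⊆ T) := by
        intro hsub
        by_cases hwA : (w ∈ A ↔ x ∈ A)
        · have h1 : G.neighborSet w ∩ D ⊆ S := by
            rintro d ⟨hd1, hd2⟩
            rcases hsub ⟨hd1, hd2⟩ with h | h
            · exfalso
              have := hA w w₀ (h ▸ hd1)
              tauto
            · exact h
          have := Set.ncard_le_ncard h1 (Set.toFinite S)
          omega
        · have h1 : G.neighborSet w ∩ D ⊆ {w₀} := by
            rintro d ⟨hd1, hd2⟩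
            rcases hsub ⟨hd1, hd2⟩ with h | h
            · exact h
            · exfalso
              have h2 := hA x d (hSnx h)
              have h3 := hA w d hd1
              tauto
          have := Set.ncard_le_ncard h1 (Set.toFinite _)
          rw [Set.ncard_singleton] at this
          omega
      obtain ⟨d, hd, hdT⟩ := Set.not_subset.1 hnsub
      exact ⟨d, hd.1, Set.mem_insert_of_mem _ ⟨hd.2, hdT⟩⟩
    have := (Set.ncard_pos (Set.toFinite _)).2 hne
    omega
  have := kdom_le' G E hEdom
  omega

/-- Let `k ≥ 3` and let `G` be a connected bipartite graph with `Δ(G) ≥ k`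
satisfying `γ_k(G) = γ(G) + k − 2`. Then every minimum `k`-dominating set `D`
is a partite class of `G`: both `D` and its complement are independent. -/
theorem statement4 {V : Type*} [Fintype V] (G : SimpleGraph V) [DecidableRel G.Adj]
    (k : ℕ) (hk : 3 ≤ k) (hΔ : k ≤ G.maxDegree) (hconn : G.Connected)
    (hbip : ∃ A : Set V, ∀ u v : V, G.Adj u v → (u ∈ A ↔ v ∉ A))
    (heq : kdomNum G k = kdomNum G 1 + (k - 2))
    (D : Set V) (hD : IsKDomSet G k D) (hmin : D.ncard = kdomNum G k) :
    (∀ u ∈ D, ∀ v ∈ D, ¬ G.Adj u v) ∧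
    (∀ u ∉ D, ∀ v, v ∉ D → ¬ G.Adj u v) := by
  classical
  obtain ⟨A, hA⟩ := hbip
  constructor
  · -- D is independent
    intro u hu v hv hadj
    -- first, find x ∉ D
    by_cases hxe : ∃ x, x ∉ D
    · obtain ⟨x, hxD⟩ := hxe
      have hcore : kdomNum G 1 + k ≤ D.ncard + 1 := by
        by_cases hcl : (x ∈ A ↔ u ∈ A)
        · exact core1 G k hk A hA D hD x hxD u v hu hv hadj hcl
        · have hcl' : (x ∈ A ↔ v ∈ A) := by
            have := hA u v hadj
            tauto
          exact core1 G k hk A hA D hD x hxD v u hv hu hadj.symm hcl'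
      omega
    · -- D = univ : use a max-degree vertex
      push_neg at hxe
      have hVne : Nonempty V := ⟨u⟩
      obtain ⟨v₀, hv₀⟩ := G.exists_maximal_degree_vertex
      have hdeg : k ≤ (G.neighborSet v₀).ncard := by
        have h1 : G.maxDegree ≤ G.degree v₀ := hv₀.le
        have h2 : (G.neighborSet v₀).ncard = G.degree v₀ := by
          rw [← Nat.card_coe_set_eq, Nat.card_eq_fintype_card,
            G.card_neighborSet_eq_degree]
        omega
      have h1 : k - 1 ≤ (G.neighborSet v₀).ncard := by omega
      obtain ⟨S, hSsub, hScard⟩ := Set.exists_subset_card_eq h1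
      have hv₀S : v₀ ∉ S := by
        intro h
        exact G.irrefl (hSsub h)
      set E : Set V := Set.univ \ S with hE
      have hEdom : IsKDomSet G 1 E := by
        intro w hw
        have hwS : w ∈ S := by
          by_contra h
          exact hw ⟨Set.mem_univ w, h⟩
        have hne : (G.neighborSet w ∩ E).Nonempty :=
          ⟨v₀, (hSsub hwS).symm, Set.mem_univ v₀, hv₀S⟩
        have := (Set.ncard_pos (Set.toFinite _)).2 hne
        omega
      have hEcard : E.ncard = (Set.univ : Set V).ncard - (k - 1) := by
        rw [hE, Set.ncard_diff (Set.subset_univ S) (Set.toFinite S), hScard]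
      have hDuniv : D = Set.univ := Set.eq_univ_of_forall hxe
      have hSle : k - 1 ≤ (Set.univ : Set V).ncard := by
        rw [← hScard]
        exact Set.ncard_le_ncard (Set.subset_univ S) (Set.toFinite _)
      have := kdom_le' G E hEdom
      have hDcard : D.ncard = (Set.univ : Set V).ncard := by rw [hDuniv]
      omega
  · -- complement of D is independent
    intro y hy z hz hadj
    have hyk : k ≤ (G.neighborSet y ∩ D).ncard := hD y hy
    have hzk : k ≤ (G.neighborSet z ∩ D).ncard := hD z hz
    obtain ⟨Sy, hSysub, hSycard⟩ := Set.exists_subset_card_eq (s := G.neighborSet y ∩ D) (n := k - 1) (by omega)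
    obtain ⟨Sz, hSzsub, hSzcard⟩ := Set.exists_subset_card_eq (s := G.neighborSet z ∩ D) (n := k - 1) (by omega)
    have hSyn : Sy ⊆ G.neighborSet y := fun a ha => (hSysub ha).1
    have hSyD : Sy ⊆ D := fun a ha => (hSysub ha).2
    have hSzn : Sz ⊆ G.neighborSet z := fun a ha => (hSzsub ha).1
    have hSzD : Sz ⊆ D := fun a ha => (hSzsub ha).2
    have hdisj : Disjoint Sy Sz := by
      rw [Set.disjoint_left]
      intro s hsy hsz
      have h1 := hA y s (hSyn hsy)
      have h2 := hA z s (hSzn hsz)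
      have h3 := hA y z hadj
      tauto
    set T : Set V := Sy ∪ Sz with hT
    have hTD : T ⊆ D := Set.union_subset hSyD hSzD
    have hTcard : T.ncard = (k - 1) + (k - 1) := by
      rw [hT, Set.ncard_union_eq hdisj (Set.toFinite Sy) (Set.toFinite Sz), hSycard, hSzcard]
    set E : Set V := insert y (insert z (D \ T)) with hE
    have hyz : y ≠ z := G.ne_of_adj hadj
    have hzDT : z ∉ D \ T := fun h => hz h.1
    have hyDT : y ∉ insert z (D \ T) := by
      intro h
      rcases h with h | h
      · exact hyz h
      · exact hy h.1
    have hEcard : E.ncard = D.ncard - ((k - 1) + (k - 1)) + 1 + 1 := by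
      rw [hE, Set.ncard_insert_of_notMem hyDT (Set.toFinite _),
        Set.ncard_insert_of_notMem hzDT (Set.toFinite _),
        Set.ncard_diff hTD (Set.toFinite T), hTcard]
    have hTle : (k - 1) + (k - 1) ≤ D.ncard := by
      rw [← hTcard]
      exact Set.ncard_le_ncard hTD (Set.toFinite D)
    have hEdom : IsKDomSet G 1 E := by
      intro w hw
      have hne : (G.neighborSet w ∩ E).Nonempty := by
        by_cases hwSy : w ∈ Sy
        · exact ⟨y, (hSyn hwSy).symm, Set.mem_insert _ _⟩
        by_cases hwSz : w ∈ Sz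
        · exact ⟨z, (hSzn hwSz).symm, Set.mem_insert_of_mem _ (Set.mem_insert _ _)⟩
        have hwT : w ∉ T := by
          intro h
          rcases h with h | h
          · exact hwSy h
          · exact hwSz h
        have hwD : w ∉ D := by
          intro h
          exact hw (Set.mem_insert_of_mem _ (Set.mem_insert_of_mem _ ⟨h, hwT⟩))
        have hwk : k ≤ (G.neighborSet w ∩ D).ncard := hD w hwD
        have hnsub : ¬ (G.neighborSet w ∩ D ⊆ T) := by
          intro hsub
          by_cases hwA : (w ∈ A ↔ y ∈ A)
          · have h1 : G.neighborSet w ∩ D ⊆ Sy := by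
              rintro d ⟨hd1, hd2⟩
              rcases hsub ⟨hd1, hd2⟩ with h | h
              · exact h
              · exfalso
                have h2 := hA z d (hSzn h)
                have h3 := hA w d hd1
                have h4 := hA y z hadj
                tauto
            have := Set.ncard_le_ncard h1 (Set.toFinite Sy)
            omega
          · have h1 : G.neighborSet w ∩ D ⊆ Sz := by
              rintro d ⟨hd1, hd2⟩
              rcases hsub ⟨hd1, hd2⟩ with h | h
              · exfalso
                have h2 := hA y d (hSyn h)
                have h3 := hA w d hd1
                tauto
              · exact h
            have := Set.ncard_le_ncard h1 (Set.toFinite Sz)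
            omega
        obtain ⟨d, hd, hdT⟩ := Set.not_subset.1 hnsub
        exact ⟨d, hd.1, Set.mem_insert_of_mem _ (Set.mem_insert_of_mem _ ⟨hd.2, hdT⟩)⟩
      have := (Set.ncard_pos (Set.toFinite _)).2 hne
      omega
    have := kdom_le' G E hEdom
    omega
end

section
/- Let H be a hypergraph of order n having at least one edge, and let r be the smallest cardinality of an edge of H. Then tc(H) ≤ n − r + 2. -/
/-- `(T, R)` is a TC-set of the hypergraph with edge family `E`:
`T` is a transversal (meets every edge) and the edges in `R ⊆ E`
together cover every vertex outside `T`. -/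
def IsTCSet {V : Type*} [DecidableEq V] (E : Finset (Finset V))
    (T : Finset V) (R : Finset (Finset V)) : Prop :=
  (∀ e ∈ E, (e ∩ T).Nonempty) ∧ R ⊆ E ∧ ∀ v : V, v ∉ T → ∃ e ∈ R, v ∈ e

/-- The TC-number: the minimum of `|T| + |R|` over all TC-sets `(T, R)`. -/
noncomputable def tcNum {V : Type*} [DecidableEq V] (E : Finset (Finset V)) : ℕ :=
  sInf {n | ∃ T R, IsTCSet E T R ∧ T.card + R.card = n}

/-- If `H` is a hypergraph of order `n` with at least one edge (each edge of
size at least 2) and `r` is the smallest size of an edge, then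
`tc(H) ≤ n − r + 2`. -/
theorem statement5 {V : Type*} [Fintype V] [DecidableEq V] (E : Finset (Finset V))
    (hcard : ∀ e ∈ E, 2 ≤ e.card) (hne : E.Nonempty)
    (r : ℕ) (hr : ∃ e ∈ E, e.card = r) (hrmin : ∀ e ∈ E, r ≤ e.card) :
    tcNum E ≤ Fintype.card V - r + 2 := by
  obtain ⟨e₀, he₀E, he₀r⟩ := hr
  have hr2 : 2 ≤ r := he₀r ▸ hcard e₀ he₀E
  have hne₀ : e₀.Nonempty := Finset.card_pos.mp (by omega)
  obtain ⟨v₀, hv₀⟩ := hne₀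
  set T : Finset V := (Finset.univ \ e₀) ∪ {v₀} with hT
  have hTcard : T.card = Fintype.card V - r + 1 := by
    rw [hT, Finset.card_union_of_disjoint (by simp [hv₀]), Finset.card_sdiff_of_subset (Finset.subset_univ _),
      Finset.card_singleton, Finset.card_univ, he₀r]
  have htc : IsTCSet E T {e₀} := by
    refine ⟨?_, by simpa using he₀E, ?_⟩
    · intro f hfE
      by_contra h
      rw [Finset.not_nonempty_iff_eq_empty] at h
      have hsub : f ⊆ e₀ \ {v₀} := by
        intro x hx
        have hxT : x ∉ T := fun hxT => by
          have : x ∈ f ∩ T := Finset.mem_inter.mpr ⟨hx, hxT⟩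
          simp [h] at this
        simp only [hT, Finset.mem_union, Finset.mem_sdiff, Finset.mem_univ, true_and,
          Finset.mem_singleton, not_or, not_not] at hxT
        simp [Finset.mem_sdiff, hxT.1, hxT.2]
      have := Finset.card_le_card hsub
      have hcs : (e₀ \ {v₀}).card = r - 1 := by
        rw [Finset.card_sdiff_of_subset (by simpa using hv₀), he₀r, Finset.card_singleton]
      have := hrmin f hfE
      omega
    · intro v hvT
      refine ⟨e₀, Finset.mem_singleton_self _, ?_⟩
      by_contra hv
      exact hvT (by simp [hT, hv])
  have hmem : Fintype.card V - r + 2 ∈ {n | ∃ T R, IsTCSet E T R ∧ T.card + R.card = n} := by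
    exact ⟨T, {e₀}, htc, by simp [hTcard]⟩
  exact Nat.sInf_le hmem
end

section
/- Let k ≥ 2 and let H be a k-uniform hypergraph of order n having at least one edge. Then tc(H) ≤ n − k + 2. -/
/-- If `H` is a `k`-uniform hypergraph (`k ≥ 2`) of order `n` with at least
one edge, then `tc(H) ≤ n − k + 2`. -/
theorem statement6 {V : Type*} [Fintype V] [DecidableEq V] (E : Finset (Finset V))
    (k : ℕ) (hk : 2 ≤ k) (huni : ∀ e ∈ E, e.card = k) (hne : E.Nonempty) :
    tcNum E ≤ Fintype.card V - k + 2 := by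
  obtain ⟨e, he⟩ := hne
  have hec : e.card = k := huni e he
  have hene : e.Nonempty := Finset.card_pos.mp (by omega)
  obtain ⟨v, hv⟩ := hene
  set T : Finset V := (Finset.univ \ e) ∪ {v} with hT
  have hcardT : T.card = Fintype.card V - k + 1 := by
    rw [hT, Finset.card_union_of_disjoint (by simp [hv]), Finset.card_sdiff_of_subset (Finset.subset_univ e)]
    simp [hec, Finset.card_univ]
  apply Nat.sInf_le
  refine ⟨T, {e}, ⟨?_, by simpa using he, ?_⟩, ?_⟩
  · intro e' he'
    by_cases hsub : e' ⊆ e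
    · have : e' = e := Finset.eq_of_subset_of_card_le hsub (by rw [hec, huni e' he'])
      exact ⟨v, by simp [this, hv, hT]⟩
    · obtain ⟨x, hx, hxe⟩ := Finset.not_subset.mp hsub
      exact ⟨x, by simp [hT, hx, hxe]⟩
  · intro u hu
    refine ⟨e, by simp, ?_⟩
    simp only [hT, Finset.mem_union, Finset.mem_sdiff, Finset.mem_univ, true_and,
      Finset.mem_singleton, not_or, not_not] at hu
    exact hu.1
  · simp [hcardT]
end

section
/- If H is a 2-uniform hypergraph (that is, a finite simple graph regarded as a hypergraph) of order n, then tc(H) = n. -/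
/-- If `H` is a `2`-uniform hypergraph (a simple graph regarded as a
hypergraph) of order `n`, then `tc(H) = n`. -/
theorem statement7 {V : Type*} [Fintype V] [DecidableEq V] (E : Finset (Finset V))
    (huni : ∀ e ∈ E, e.card = 2) :
    tcNum E = Fintype.card V := by
  have hmem : Fintype.card V ∈ {n | ∃ T R, IsTCSet E T R ∧ T.card + R.card = n} := by
    refine ⟨Finset.univ, ∅, ⟨fun e he => ?_, Finset.empty_subset _, fun v hv => absurd (Finset.mem_univ v) hv⟩, by simp⟩
    rw [Finset.inter_univ]
    exact Finset.card_pos.mp (by rw [huni e he]; norm_num)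
  refine le_antisymm (Nat.sInf_le hmem) (le_csInf ⟨_, hmem⟩ ?_)
  rintro n ⟨T, R, ⟨htrans, hRE, hcov⟩, rfl⟩
  -- each vertex outside T picks an edge in R; this assignment is injective
  choose f hfR hfv using hcov
  have hinj : Set.InjOn (fun v : V => if h : v ∈ T then ∅ else f v h) ((Finset.univ \ T : Finset V) : Set V) := by
    intro a ha b hb hab
    simp only [Finset.coe_sdiff, Set.mem_diff, Finset.coe_univ, Finset.mem_coe] at ha hb
    have haT : a ∉ T := ha.2
    have hbT : b ∉ T := hb.2
    simp only [dif_neg haT, dif_neg hbT] at hab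
    by_contra hne
    -- f a haT = f b hbT contains a, b ∉ T, but also meets T and has card 2
    set e := f a haT with he
    have hae : a ∈ e := hfv a haT
    have hbe : b ∈ e := hab ▸ hfv b hbT
    have heE : e ∈ E := hRE (hfR a haT)
    obtain ⟨t, ht⟩ := htrans e heE
    rw [Finset.mem_inter] at ht
    have hcard := huni e heE
    have : ({a, b, t} : Finset V) ⊆ e := by
      intro x hx
      simp only [Finset.mem_insert, Finset.mem_singleton] at hx
      rcases hx with rfl | rfl | rfl
      exacts [hae, hbe, ht.1]
    have h3 : ({a, b, t} : Finset V).card = 3 := by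
      rw [Finset.card_insert_of_notMem, Finset.card_insert_of_notMem, Finset.card_singleton]
      · simp only [Finset.mem_singleton]
        rintro rfl; exact hbT ht.2
      · simp only [Finset.mem_insert, Finset.mem_singleton]
        rintro (rfl | rfl)
        exacts [hne rfl, haT ht.2]
    have := Finset.card_le_card this
    omega
  have hle : (Finset.univ \ T : Finset V).card ≤ R.card := by
    apply Finset.card_le_card_of_injOn (fun v => if h : v ∈ T then ∅ else f v h) _ hinj
    intro v hv
    rw [Finset.mem_coe, Finset.mem_sdiff] at hv
    simp only [dif_neg hv.2]
    exact hfR v hv.2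
  have := Finset.card_sdiff_add_card_eq_card (Finset.subset_univ T)
  simp only [Finset.card_univ] at this
  omega
end

section
/- For all integers n ≥ k ≥ 2, the complete k-uniform hypergraph K_n^k on n vertices satisfies tc(K_n^k) = n − k + 2. -/
/-- For all `n ≥ k ≥ 2`, the complete `k`-uniform hypergraph on an
`n`-element vertex set (whose edges are all `k`-element subsets) satisfies
`tc(K_n^k) = n − k + 2`. -/
theorem statement8 {V : Type*} [Fintype V] [DecidableEq V] (k : ℕ)
    (hk : 2 ≤ k) (hn : k ≤ Fintype.card V) :
    tcNum (Finset.powersetCard k (Finset.univ : Finset V))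
      = Fintype.card V - k + 2 := by
  classical
  set n := Fintype.card V with hncard
  set E := Finset.powersetCard k (Finset.univ : Finset V) with hE
  -- membership: construct a TC-set of size n - k + 2
  obtain ⟨T, hTsub, hTcard⟩ :=
    Finset.exists_subset_card_eq (show n - k + 1 ≤ (Finset.univ : Finset V).card by
      rw [Finset.card_univ, ← hncard]; omega)
  have hcomplcard : Tᶜ.card = k - 1 := by
    rw [Finset.card_compl, hTcard]; omega
  obtain ⟨e, hTe, heuniv, hecard⟩ :=
    Finset.exists_subsuperset_card_eq (n := k) (Finset.subset_univ Tᶜ)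
      (by rw [hcomplcard]; omega) (by simpa using hn)
  have hmem : (n - k + 2) ∈ {m | ∃ T R, IsTCSet E T R ∧ T.card + R.card = m} := by
    refine ⟨T, {e}, ⟨?_, ?_, ?_⟩, ?_⟩
    · intro f hf
      rw [hE, Finset.mem_powersetCard] at hf
      by_contra h
      rw [Finset.not_nonempty_iff_eq_empty] at h
      have hfsub : f ⊆ Tᶜ := fun x hx => Finset.mem_compl.mpr (fun hxT =>
        Finset.notMem_empty x (h ▸ Finset.mem_inter.mpr ⟨hx, hxT⟩))
      have := Finset.card_le_card hfsub
      rw [hf.2, hcomplcard] at this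
      omega
    · intro f hf
      rw [Finset.mem_singleton] at hf
      subst hf
      rw [hE, Finset.mem_powersetCard]
      exact ⟨heuniv, hecard⟩
    · intro v hv
      exact ⟨e, Finset.mem_singleton_self e, hTe (Finset.mem_compl.mpr hv)⟩
    · rw [hTcard, Finset.card_singleton]
  -- lower bound
  have hlb : ∀ m ∈ {m | ∃ T R, IsTCSet E T R ∧ T.card + R.card = m}, n - k + 2 ≤ m := by
    rintro m ⟨T, R, ⟨htr, hRE, hcov⟩, hm⟩
    have hTbig : n - k + 1 ≤ T.card := by
      by_contra h
      push_neg at h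
      have hcc : k ≤ Tᶜ.card := by
        rw [Finset.card_compl]; omega
      obtain ⟨f, hfsub, hfcard⟩ := Finset.exists_subset_card_eq hcc
      have hfE : f ∈ E := by
        rw [hE, Finset.mem_powersetCard]; exact ⟨Finset.subset_univ f, hfcard⟩
      obtain ⟨x, hx⟩ := htr f hfE
      rw [Finset.mem_inter] at hx
      exact Finset.mem_compl.mp (hfsub hx.1) hx.2
    rcases eq_or_lt_of_le (Finset.card_le_univ T) with hfull | hlt
    · have : T.card = n := by rw [hfull]
      omega
    · have : (Finset.univ \ T).Nonempty := by
        rw [← Finset.card_pos, Finset.card_sdiff_of_subset (Finset.subset_univ T)]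
        simp only [Finset.card_univ] at hlt ⊢
        omega
      obtain ⟨v, hv⟩ := this
      rw [Finset.mem_sdiff] at hv
      obtain ⟨f, hfR, _⟩ := hcov v hv.2
      have hR1 : 1 ≤ R.card := Finset.card_pos.mpr ⟨f, hfR⟩
      omega
  refine le_antisymm (Nat.sInf_le hmem) ?_
  have hne : {m | ∃ T R, IsTCSet E T R ∧ T.card + R.card = m}.Nonempty := ⟨_, hmem⟩
  exact hlb _ (Nat.sInf_mem hne)
end

section
/- Let k ≥ 2 and let H be a k-uniform hypergraph of order n having at least one edge. Then tc(H) = n − k + 2 if and only if for every integer ℓ with 1 ≤ ℓ ≤ k − 1 and for every ℓ distinct edges e_1, …, e_ℓ of H, every weakly independent subset of the union e_1 ∪ ⋯ ∪ e_ℓ has at most ℓ + k − 2 vertices. -/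
lemma shrink {V : Type*} [DecidableEq V] (k : ℕ) (hk : 2 ≤ k) :
    ∀ (R : Finset (Finset V)) (S : Finset V), S ⊆ R.biUnion id →
      R.card + k ≤ S.card + 1 →
      ∃ R', R' ⊆ R ∧ R'.Nonempty ∧ R'.card + 1 ≤ k ∧
        R'.card + k ≤ (S ∩ R'.biUnion id).card + 1 := by
  intro R
  induction R using Finset.strongInduction with
  | _ R ih =>
    intro S hS hcard
    by_cases hle : R.card + 1 ≤ k
    · have hSR : S ∩ R.biUnion id = S := Finset.inter_eq_left.mpr hS
      have hRne : R.Nonempty := by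
        have hSne : S.Nonempty := by
          rw [← Finset.card_pos]; omega
        obtain ⟨v, hv⟩ := hSne
        obtain ⟨e, he, _⟩ := Finset.mem_biUnion.mp (hS hv)
        exact ⟨e, he⟩
      exact ⟨R, subset_rfl, hRne, hle, by rw [hSR]; exact hcard⟩
    · -- R.card ≥ k; find an edge with few private vertices
      set A : Finset V → Finset V := fun e => S \ ((R.erase e).biUnion id) with hA
      have hdisj : ∀ e ∈ R, ∀ f ∈ R, e ≠ f → Disjoint (A e) (A f) := by
        intro e he f hf hef
        rw [Finset.disjoint_left]
        intro v hve hvf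
        obtain ⟨g, hg, hvg⟩ := Finset.mem_biUnion.mp (hS (Finset.mem_sdiff.mp hve).1)
        rcases ne_or_eq g e with h | h
        · exact (Finset.mem_sdiff.mp hve).2
            (Finset.mem_biUnion.mpr ⟨g, Finset.mem_erase.mpr ⟨h, hg⟩, hvg⟩)
        · exact (Finset.mem_sdiff.mp hvf).2
            (Finset.mem_biUnion.mpr ⟨g, Finset.mem_erase.mpr ⟨by rw [h]; exact hef, hg⟩, hvg⟩)
      have hsum : ∑ e ∈ R, (A e).card ≤ S.card := by
        rw [← Finset.card_biUnion hdisj]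
        apply Finset.card_le_card
        intro v hv
        obtain ⟨e, _, hve⟩ := Finset.mem_biUnion.mp hv
        exact (Finset.mem_sdiff.mp hve).1
      -- there exists e with (A e).card small
      obtain ⟨t, ht⟩ : ∃ t, R.card + k + t = S.card + 1 := ⟨S.card + 1 - (R.card + k), by omega⟩
      have hex : ∃ e ∈ R, (A e).card ≤ t + 1 := by
        by_contra hno
        push_neg at hno
        have : R.card * (t + 2) ≤ ∑ e ∈ R, (A e).card := by
          calc R.card * (t + 2) = ∑ _e ∈ R, (t + 2) := by
                rw [Finset.sum_const, smul_eq_mul, mul_comm]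
              _ ≤ ∑ e ∈ R, (A e).card := Finset.sum_le_sum (fun e he => hno e he)
        have hRk : k ≤ R.card := by omega
        nlinarith [hsum, this]
      obtain ⟨e, he, hpe⟩ := hex
      set S' := S ∩ ((R.erase e).biUnion id) with hS'
      have hpart : (A e).card + S'.card = S.card := by
        rw [hS', hA]
        simp only []
        rw [Finset.card_sdiff_add_card_inter]
      have hsub : S' ⊆ (R.erase e).biUnion id := Finset.inter_subset_right
      have hcard' : (R.erase e).card + k ≤ S'.card + 1 := by
        have : (R.erase e).card + 1 = R.card := Finset.card_erase_add_one he
        omega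
      obtain ⟨R', hR'sub, hR'ne, hR'k, hR'card⟩ :=
        ih (R.erase e) (Finset.erase_ssubset he) S' hsub hcard'
      refine ⟨R', hR'sub.trans (Finset.erase_subset e R), hR'ne, hR'k, ?_⟩
      have hmono : S' ∩ R'.biUnion id ⊆ S ∩ R'.biUnion id :=
        Finset.inter_subset_inter Finset.inter_subset_left subset_rfl
      have := Finset.card_le_card hmono
      omega

/-- A `k`-uniform hypergraph (`k ≥ 2`) of order `n` with at least one edge
satisfies `tc(H) = n − k + 2` iff for every `ℓ` with `1 ≤ ℓ ≤ k − 1` and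
every `ℓ` distinct edges, every weakly independent subset of their union
(`S` containing no edge of `H`) has at most `ℓ + k − 2` vertices. -/
theorem statement9 {V : Type*} [Fintype V] [DecidableEq V] (E : Finset (Finset V))
    (k : ℕ) (hk : 2 ≤ k) (huni : ∀ e ∈ E, e.card = k) (hne : E.Nonempty) :
    tcNum E = Fintype.card V - k + 2 ↔
      ∀ ℓ : ℕ, 1 ≤ ℓ → ℓ ≤ k - 1 → ∀ R ⊆ E, R.card = ℓ →
        ∀ S : Finset V, S ⊆ R.biUnion id → (∀ e ∈ E, ¬ e ⊆ S) →
          S.card ≤ ℓ + k - 2 := by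
  classical
  unfold tcNum
  set n := Fintype.card V with hn
  obtain ⟨e₀, he₀⟩ := hne
  have he₀k : e₀.card = k := huni e₀ he₀
  have hkn : k ≤ n := by
    rw [← he₀k, hn, ← Finset.card_univ]
    exact Finset.card_le_card (Finset.subset_univ e₀)
  obtain ⟨x, hx⟩ : e₀.Nonempty := by rw [← Finset.card_pos, he₀k]; omega
  -- the canonical TC-set of weight n - k + 2
  have hmem : n - k + 2 ∈ {m | ∃ T R, IsTCSet E T R ∧ T.card + R.card = m} := by
    refine ⟨insert x (Finset.univ \ e₀), {e₀}, ⟨?_, ?_, ?_⟩, ?_⟩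
    · intro f hf
      by_cases hfe : f = e₀
      · exact ⟨x, Finset.mem_inter.mpr ⟨hfe ▸ hx, Finset.mem_insert_self x _⟩⟩
      · have : ¬ f ⊆ e₀ := by
          intro hsub
          exact hfe (Finset.eq_of_subset_of_card_le hsub (by rw [huni f hf, he₀k]))
        obtain ⟨v, hvf, hve⟩ := Finset.not_subset.mp this
        exact ⟨v, Finset.mem_inter.mpr ⟨hvf, Finset.mem_insert_of_mem
          (Finset.mem_sdiff.mpr ⟨Finset.mem_univ v, hve⟩)⟩⟩
    · simpa using he₀
    · intro v hv
      refine ⟨e₀, Finset.mem_singleton_self e₀, ?_⟩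
      by_contra hve
      exact hv (Finset.mem_insert_of_mem (Finset.mem_sdiff.mpr ⟨Finset.mem_univ v, hve⟩))
    · have hxnot : x ∉ Finset.univ \ e₀ := by simp [hx]
      rw [Finset.card_insert_of_notMem hxnot, Finset.card_sdiff_of_subset (Finset.subset_univ e₀),
        Finset.card_univ, Finset.card_singleton, he₀k]
    -- card: (n - k) + 1 + 1 = n - k + 2  -- handled by rw; check
  have hsetne : {m | ∃ T R, IsTCSet E T R ∧ T.card + R.card = m}.Nonempty := ⟨_, hmem⟩
  have hub : tcNum E ≤ n - k + 2 := Nat.sInf_le hmem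
  constructor
  · -- tc = n-k+2 → condition
    intro htc ℓ hℓ1 hℓk R hRE hRcard S hSsub hSind
    by_contra hbig
    have hScard : ℓ + k ≤ S.card + 1 := by omega
    -- build a TC-set of weight ≤ n - k + 1
    have hmem2 : (n - S.card) + ℓ ∈ {m | ∃ T R, IsTCSet E T R ∧ T.card + R.card = m} := by
      refine ⟨Sᶜ, R, ⟨?_, hRE, ?_⟩, ?_⟩
      · intro f hf
        obtain ⟨v, hvf, hvS⟩ := Finset.not_subset.mp (hSind f hf)
        exact ⟨v, Finset.mem_inter.mpr ⟨hvf, Finset.mem_compl.mpr hvS⟩⟩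
      · intro v hv
        have hvS : v ∈ S := by simpa using hv
        obtain ⟨f, hf, hvf⟩ := Finset.mem_biUnion.mp (hSsub hvS)
        exact ⟨f, hf, hvf⟩
      · rw [Finset.card_compl, hRcard]
    have hSn : S.card ≤ n := by
      rw [hn, ← Finset.card_univ]; exact Finset.card_le_card (Finset.subset_univ S)
    have := Nat.sInf_le hmem2
    omega
  · -- condition → tc = n-k+2
    intro hcond
    refine le_antisymm hub ?_
    have hmm := Nat.sInf_mem hsetne
    obtain ⟨T, R, ⟨htrans, hRE, hcover⟩, hw⟩ := hmm
    by_contra hlt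
    push_neg at hlt
    have hwlt : T.card + R.card + k ≤ n + 1 := by omega
    set S := Tᶜ with hS
    have hTS : T.card + S.card = n := by
      rw [hS, Finset.card_compl]
      have : T.card ≤ n := by
        rw [hn, ← Finset.card_univ]; exact Finset.card_le_card (Finset.subset_univ T)
      omega
    have hSsub : S ⊆ R.biUnion id := by
      intro v hv
      obtain ⟨f, hf, hvf⟩ := hcover v (by simpa [hS] using hv)
      exact Finset.mem_biUnion.mpr ⟨f, hf, hvf⟩
    have hScard : R.card + k ≤ S.card + 1 := by omega
    obtain ⟨R', hR'R, hR'ne, hR'k, hR'card⟩ := shrink k hk R S hSsub hScard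
    have hℓ1 : 1 ≤ R'.card := Finset.card_pos.mpr hR'ne
    have hcontra := hcond R'.card hℓ1 (by omega) R' (hR'R.trans hRE) rfl
      (S ∩ R'.biUnion id) Finset.inter_subset_right ?_
    · omega
    · intro f hf hfsub
      obtain ⟨v, hv⟩ := htrans f hf
      have hvf := (Finset.mem_inter.mp hv).1
      have hvT := (Finset.mem_inter.mp hv).2
      have : v ∈ S ∩ R'.biUnion id := hfsub hvf
      have hvS : v ∈ S := (Finset.mem_inter.mp this).1
      rw [hS, Finset.mem_compl] at hvS
      exact hvS hvT
end

section
/- Let k ≥ 3 and let F be a k-uniform hypergraph of order n having at least one edge. Then tc(F) = n − k + 2 if and only if there is no vertex subset W of F for which the induced subhypergraph H = F[W] satisfies both ρ(H) ≤ k − 1 and α_w(H) ≥ ρ(H) + k − 1 (in particular, H must admit a cover of all its vertices by its edges). -/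
/-- The standard TC-set: all vertices outside an edge plus one vertex of the
edge, together with that edge as the covering family. -/
lemma standard_tcset {V : Type*} [Fintype V] [DecidableEq V] (E : Finset (Finset V))
    (k : ℕ) (hk : 3 ≤ k) (huni : ∀ e ∈ E, e.card = k) (hne : E.Nonempty) :
    ∃ T R, IsTCSet E T R ∧ T.card + R.card = Fintype.card V - k + 2 := by
  obtain ⟨e, he⟩ := hne
  have hek : e.card = k := huni e he
  obtain ⟨v, hv⟩ : e.Nonempty := Finset.card_pos.mp (by omega)
  refine ⟨insert v eᶜ, {e}, ⟨?_, ?_, ?_⟩, ?_⟩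
  · intro f hf
    by_contra hemp
    rw [Finset.not_nonempty_iff_eq_empty] at hemp
    have hfe : f ⊆ e := by
      intro x hx
      have : x ∉ insert v eᶜ := by
        intro hxT
        have : x ∈ f ∩ insert v eᶜ := Finset.mem_inter.mpr ⟨hx, hxT⟩
        simp [hemp] at this
      simp only [Finset.mem_insert, Finset.mem_compl] at this
      push_neg at this
      exact this.2
    have hfeq : f = e := Finset.eq_of_subset_of_card_le hfe (by rw [hek, huni f hf])
    have hvf : v ∈ f := hfeq.symm ▸ hv
    have : v ∈ f ∩ insert v eᶜ := Finset.mem_inter.mpr ⟨hvf, Finset.mem_insert_self _ _⟩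
    simp [hemp] at this
  · simpa using he
  · intro u hu
    refine ⟨e, Finset.mem_singleton_self e, ?_⟩
    by_contra hue
    exact hu (Finset.mem_insert.mpr (Or.inr (Finset.mem_compl.mpr hue)))
  · have hvn : v ∉ eᶜ := by simp [hv]
    rw [Finset.card_insert_of_notMem hvn, Finset.card_compl, hek, Finset.card_singleton]

lemma tc_upper {V : Type*} [Fintype V] [DecidableEq V] (E : Finset (Finset V))
    (k : ℕ) (hk : 3 ≤ k) (huni : ∀ e ∈ E, e.card = k) (hne : E.Nonempty) :
    tcNum E ≤ Fintype.card V - k + 2 := by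
  obtain ⟨T, R, h, hc⟩ := standard_tcset E k hk huni hne
  exact Nat.sInf_le ⟨T, R, h, hc⟩

/-- If the TC-number is at most `n - k + 1`, then the desired subset `W` exists. -/
lemma exists_W {V : Type*} [Fintype V] [DecidableEq V] (E : Finset (Finset V))
    (k : ℕ) (hk : 3 ≤ k) (huni : ∀ e ∈ E, e.card = k) (hne : E.Nonempty)
    (htc : tcNum E ≤ Fintype.card V - k + 1) :
    ∃ (W : Finset V) (p : ℕ),
        ((∃ R ⊆ E.filter (fun e => e ⊆ W), R.card = p ∧ ∀ v ∈ W, ∃ e ∈ R, v ∈ e) ∧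
          (∀ R ⊆ E.filter (fun e => e ⊆ W), (∀ v ∈ W, ∃ e ∈ R, v ∈ e) → p ≤ R.card)) ∧
        p ≤ k - 1 ∧
        (∃ S ⊆ W, (∀ e ∈ E, e ⊆ W → ¬ e ⊆ S) ∧ p + k - 1 ≤ S.card) := by
  classical
  have hkn : k ≤ Fintype.card V := by
    obtain ⟨e, he⟩ := hne
    calc k = e.card := (huni e he).symm
    _ ≤ Fintype.card V := Finset.card_le_univ e
  -- the set of achievable totals is nonempty
  have hTCne : {n | ∃ T R, IsTCSet E T R ∧ T.card + R.card = n}.Nonempty := by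
    obtain ⟨T, R, h, hc⟩ := standard_tcset E k hk huni hne
    exact ⟨_, T, R, h, hc⟩
  -- a minimum TC-set with minimum |R| among minimum TC-sets
  set M : Set ℕ :=
    {m | ∃ T R, IsTCSet E T R ∧ T.card + R.card = tcNum E ∧ R.card = m} with hM
  have hMne : M.Nonempty := by
    obtain ⟨T, R, h, hc⟩ := Nat.sInf_mem hTCne
    exact ⟨R.card, T, R, h, hc, rfl⟩
  obtain ⟨T, R, hTC, htot, hRm⟩ := Nat.sInf_mem hMne
  obtain ⟨htrans, hRE, hcov⟩ := hTC
  -- facts about S = Tᶜ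
  have hScov : ∀ v ∈ Tᶜ, ∃ e ∈ R, v ∈ e := fun v hv => hcov v (Finset.mem_compl.mp hv)
  have hSindep : ∀ e ∈ E, ¬ e ⊆ Tᶜ := by
    intro e he hsub
    obtain ⟨x, hx⟩ := htrans e he
    rw [Finset.mem_inter] at hx
    exact Finset.mem_compl.mp (hsub hx.1) hx.2
  have hcards : T.card + Tᶜ.card = Fintype.card V := by
    rw [Finset.card_compl]
    have := Finset.card_le_univ T
    omega
  by_cases hp : R.card ≤ k - 1
  · -- case |R| ≤ k - 1: take W = union of R
    set W : Finset V := R.biUnion id with hW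
    have hRfil : R ⊆ E.filter (fun e => e ⊆ W) := by
      intro e heR
      rw [Finset.mem_filter]
      exact ⟨hRE heR, fun x hx => Finset.mem_biUnion.mpr ⟨e, heR, hx⟩⟩
    have hRcoversW : ∀ v ∈ W, ∃ e ∈ R, v ∈ e := by
      intro v hv
      simpa using Finset.mem_biUnion.mp hv
    set C : Set ℕ :=
      {m | ∃ R' ⊆ E.filter (fun e => e ⊆ W), R'.card = m ∧ ∀ v ∈ W, ∃ e ∈ R', v ∈ e}
      with hC
    have hCne : C.Nonempty := ⟨R.card, R, hRfil, rfl, hRcoversW⟩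
    have hp0mem := Nat.sInf_mem hCne
    have hp0le : sInf C ≤ R.card := Nat.sInf_le ⟨R, hRfil, rfl, hRcoversW⟩
    refine ⟨W, sInf C, ⟨hp0mem, ?_⟩, by omega, Tᶜ, ?_, ?_, ?_⟩
    · intro R' hR' hcov'
      exact Nat.sInf_le ⟨R', hR', rfl, hcov'⟩
    · intro v hv
      obtain ⟨e, heR, hve⟩ := hScov v hv
      exact Finset.mem_biUnion.mpr ⟨e, heR, hve⟩
    · intro e he _
      exact hSindep e he
    · omega
  · -- case |R| ≥ k: each edge of R has at least 2 private Tᶜ-vertices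
    push_neg at hp
    have hpk : k ≤ R.card := by omega
    set P : Finset V → Finset V := fun e => (Tᶜ ∩ e) \ (R.erase e).biUnion id with hP
    have claimB : ∀ e ∈ R, 2 ≤ (P e).card := by
      intro e heR
      by_contra hlt
      push_neg at hlt
      have hPe : Disjoint T (P e) := by
        refine Finset.disjoint_left.mpr fun x hxT hxP => ?_
        have : x ∈ Tᶜ := (Finset.mem_inter.mp (Finset.mem_sdiff.mp hxP).1).1
        exact Finset.mem_compl.mp this hxT
      have hTC' : IsTCSet E (T ∪ P e) (R.erase e) := by
        refine ⟨?_, (Finset.erase_subset _ _).trans hRE, ?_⟩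
        · intro f hf
          obtain ⟨x, hx⟩ := htrans f hf
          rw [Finset.mem_inter] at hx
          exact ⟨x, Finset.mem_inter.mpr ⟨hx.1, Finset.mem_union_left _ hx.2⟩⟩
        · intro v hv
          rw [Finset.mem_union] at hv
          push_neg at hv
          obtain ⟨f, hfR, hvf⟩ := hcov v hv.1
          by_cases hbi : v ∈ (R.erase e).biUnion id
          · obtain ⟨g, hg, hvg⟩ := Finset.mem_biUnion.mp hbi
            exact ⟨g, hg, hvg⟩
          · exfalso
            have hfe : f = e := by
              by_contra hne'
              exact hbi (Finset.mem_biUnion.mpr ⟨f, Finset.mem_erase.mpr ⟨hne', hfR⟩, hvf⟩)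
            subst hfe
            exact hv.2 (Finset.mem_sdiff.mpr
              ⟨Finset.mem_inter.mpr ⟨Finset.mem_compl.mpr hv.1, hvf⟩, hbi⟩)
      have hcardU : (T ∪ P e).card = T.card + (P e).card :=
        Finset.card_union_of_disjoint hPe
      have hcardE : (R.erase e).card + 1 = R.card := Finset.card_erase_add_one heR
      have hle : tcNum E ≤ (T ∪ P e).card + (R.erase e).card :=
        Nat.sInf_le ⟨T ∪ P e, R.erase e, hTC', rfl⟩
      -- so P e has card exactly 1, contradicting minimality of |R|
      have hone : (P e).card = 1 := by omega
      have : sInf M ≤ (R.erase e).card :=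
        Nat.sInf_le ⟨T ∪ P e, R.erase e, hTC', by omega, rfl⟩
      omega
    -- pick a (k-1)-subset of R
    obtain ⟨R₀, hR₀R, hR₀card⟩ := Finset.exists_subset_card_eq (show k - 1 ≤ R.card by omega)
    set W : Finset V := R₀.biUnion id with hW
    have hR₀fil : R₀ ⊆ E.filter (fun e => e ⊆ W) := by
      intro e heR
      rw [Finset.mem_filter]
      exact ⟨hRE (hR₀R heR), fun x hx => Finset.mem_biUnion.mpr ⟨e, heR, hx⟩⟩
    have hR₀cov : ∀ v ∈ W, ∃ e ∈ R₀, v ∈ e := by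
      intro v hv
      simpa using Finset.mem_biUnion.mp hv
    set C : Set ℕ :=
      {m | ∃ R' ⊆ E.filter (fun e => e ⊆ W), R'.card = m ∧ ∀ v ∈ W, ∃ e ∈ R', v ∈ e}
      with hC
    have hCne : C.Nonempty := ⟨R₀.card, R₀, hR₀fil, rfl, hR₀cov⟩
    have hp0mem := Nat.sInf_mem hCne
    have hp0le : sInf C ≤ k - 1 := hR₀card ▸ Nat.sInf_le ⟨R₀, hR₀fil, rfl, hR₀cov⟩
    -- the private sets are pairwise disjoint and live in Tᶜ ∩ W
    have hdisj : ∀ e ∈ R₀, ∀ f ∈ R₀, e ≠ f → Disjoint (P e) (P f) := by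
      intro e heR0 f hfR0 hef
      refine Finset.disjoint_left.mpr fun x hxe hxf => ?_
      have hxPf : x ∈ f := (Finset.mem_inter.mp (Finset.mem_sdiff.mp hxf).1).2
      have : x ∈ (R.erase e).biUnion id :=
        Finset.mem_biUnion.mpr ⟨f, Finset.mem_erase.mpr ⟨fun h => hef h.symm, hR₀R hfR0⟩, hxPf⟩
      exact (Finset.mem_sdiff.mp hxe).2 this
    have hsub : R₀.biUnion P ⊆ Tᶜ ∩ W := by
      intro x hx
      obtain ⟨e, heR0, hxe⟩ := Finset.mem_biUnion.mp hx
      have h1 := Finset.mem_inter.mp (Finset.mem_sdiff.mp hxe).1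
      exact Finset.mem_inter.mpr ⟨h1.1, Finset.mem_biUnion.mpr ⟨e, heR0, h1.2⟩⟩
    have hbig : 2 * (k - 1) ≤ (Tᶜ ∩ W).card := by
      calc 2 * (k - 1) = ∑ _e ∈ R₀, 2 := by rw [Finset.sum_const, hR₀card]; ring
      _ ≤ ∑ e ∈ R₀, (P e).card :=
          Finset.sum_le_sum (fun e he => claimB e (hR₀R he))
      _ = (R₀.biUnion P).card := (Finset.card_biUnion hdisj).symm
      _ ≤ (Tᶜ ∩ W).card := Finset.card_le_card hsub
    refine ⟨W, sInf C, ⟨hp0mem, ?_⟩, hp0le, Tᶜ ∩ W, Finset.inter_subset_right, ?_, by omega⟩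
    · intro R' hR' hcov'
      exact Nat.sInf_le ⟨R', hR', rfl, hcov'⟩
    · intro e he _ hsub'
      exact hSindep e he (hsub'.trans Finset.inter_subset_left)

/-- Let `k ≥ 3` and let `F` be a `k`-uniform hypergraph of order `n` with at
least one edge. Then `tc(F) = n − k + 2` iff there is no vertex subset `W`
such that the induced subhypergraph `H = F[W]` (whose edges are the edges of
`F` contained in `W`) has edge cover number `ρ(H) ≤ k − 1` (in particular the
edges of `H` cover all of `W`) and admits a weakly independent set of at
least `ρ(H) + k − 1` vertices. -/
theorem statement10 {V : Type*} [Fintype V] [DecidableEq V] (E : Finset (Finset V))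
    (k : ℕ) (hk : 3 ≤ k) (huni : ∀ e ∈ E, e.card = k) (hne : E.Nonempty) :
    tcNum E = Fintype.card V - k + 2 ↔
      ¬ ∃ (W : Finset V) (p : ℕ),
        -- `p` is the edge cover number of the induced subhypergraph `F[W]`
        ((∃ R ⊆ E.filter (fun e => e ⊆ W), R.card = p ∧ ∀ v ∈ W, ∃ e ∈ R, v ∈ e) ∧
          (∀ R ⊆ E.filter (fun e => e ⊆ W), (∀ v ∈ W, ∃ e ∈ R, v ∈ e) → p ≤ R.card)) ∧
        p ≤ k - 1 ∧
        -- `F[W]` has a weakly independent set of at least `p + k − 1` vertices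
        (∃ S ⊆ W, (∀ e ∈ E, e ⊆ W → ¬ e ⊆ S) ∧ p + k - 1 ≤ S.card) := by
  classical
  have hkn : k ≤ Fintype.card V := by
    obtain ⟨e, he⟩ := hne
    calc k = e.card := (huni e he).symm
    _ ≤ Fintype.card V := Finset.card_le_univ e
  constructor
  · -- tc = n - k + 2 → no such W
    intro htc
    rintro ⟨W, p, ⟨⟨R, hRfil, hRcard, hRcov⟩, -⟩, -, S, hSW, hSindep, hScard⟩
    -- build a TC-set (Sᶜ, R)
    have hTC : IsTCSet E Sᶜ R := by
      refine ⟨?_, fun e he => (Finset.mem_filter.mp (hRfil he)).1, ?_⟩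
      · intro e he
        by_contra hemp
        rw [Finset.not_nonempty_iff_eq_empty] at hemp
        have heS : e ⊆ S := by
          intro x hx
          by_contra hxS
          have : x ∈ e ∩ Sᶜ := Finset.mem_inter.mpr ⟨hx, Finset.mem_compl.mpr hxS⟩
          simp [hemp] at this
        exact hSindep e he (heS.trans hSW) heS
      · intro v hv
        have hvS : v ∈ S := by
          by_contra h
          exact hv (Finset.mem_compl.mpr h)
        obtain ⟨e, heR, hve⟩ := hRcov v (hSW hvS)
        exact ⟨e, heR, hve⟩
    have hle : tcNum E ≤ Sᶜ.card + R.card := Nat.sInf_le ⟨Sᶜ, R, hTC, rfl⟩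
    have hScompl : S.card + Sᶜ.card = Fintype.card V := by
      rw [Finset.card_compl]
      have := Finset.card_le_univ S
      omega
    omega
  · -- no such W → tc = n - k + 2
    intro hnoW
    have hub := tc_upper E k hk huni hne
    by_contra hne'
    have hlt : tcNum E ≤ Fintype.card V - k + 1 := by omega
    exact hnoW (exists_W E k hk huni hne hlt)
end

section
/- Let k ≥ 3 and let F be a connected k-uniform hypergraph with at least one edge, and let G be the double incidence graph of F. Then γ_k(G) = |V(F)|; moreover, V(F) is a minimum k-dominating set of G. -/
/-- Two vertices of a hypergraph are adjacent when some edge contains both. -/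
def HyperAdj {V : Type*} (E : Finset (Finset V)) (u v : V) : Prop :=
  ∃ e ∈ E, u ∈ e ∧ v ∈ e

/-- A hypergraph is connected if any two vertices are joined by a sequence of
consecutively adjacent vertices. -/
def HyperConnected {V : Type*} (E : Finset (Finset V)) : Prop :=
  ∀ u v : V, Relation.ReflTransGen (HyperAdj E) u v

/-- The double incidence graph of a hypergraph with vertex type `V` and edge
family `E`: a bipartite graph on `V ⊕ (E × Bool)` in which `(e, j)` is
adjacent to `v : V` iff `v ∈ e`, and there are no other edges. -/
def doubleIncidence {V : Type*} (E : Finset (Finset V)) :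
    SimpleGraph (V ⊕ ({e // e ∈ E} × Bool)) :=
  SimpleGraph.fromRel fun a b =>
    ∃ (v : V) (e : {e // e ∈ E}) (j : Bool),
      a = Sum.inl v ∧ b = Sum.inr (e, j) ∧ v ∈ e.1

open Sum Finset

lemma adj_il {V : Type*} (E : Finset (Finset V)) (v : V) (p : {e // e ∈ E} × Bool) :
    (doubleIncidence E).Adj (inl v) (inr p) ↔ v ∈ p.1.1 := by
  simp only [doubleIncidence, SimpleGraph.fromRel_adj]
  aesop

lemma adj_ll {V : Type*} (E : Finset (Finset V)) (u v : V) :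
    ¬ (doubleIncidence E).Adj (inl u) (inl v) := by
  simp [doubleIncidence, SimpleGraph.fromRel_adj]

lemma adj_rr {V : Type*} (E : Finset (Finset V)) (p q : {e // e ∈ E} × Bool) :
    ¬ (doubleIncidence E).Adj (inr p) (inr q) := by
  simp [doubleIncidence, SimpleGraph.fromRel_adj]

lemma range_inl_dom {V : Type*} [Fintype V] [DecidableEq V] (E : Finset (Finset V))
    (k : ℕ) (huni : ∀ e ∈ E, e.card = k) :
    IsKDomSet (doubleIncidence E) k (Set.range Sum.inl) := by
  rintro (v | p) hx
  · exact absurd ⟨v, rfl⟩ hx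
  · have hset : (doubleIncidence E).neighborSet (inr p) ∩ Set.range Sum.inl
        = Sum.inl '' (p.1.1 : Set V) := by
      ext x
      cases x with
      | inl w =>
        simp [SimpleGraph.neighborSet, (doubleIncidence E).adj_comm, adj_il]
      | inr q =>
        simp [SimpleGraph.neighborSet, adj_rr]
    rw [hset, Set.ncard_image_of_injective _ Sum.inl_injective, Set.ncard_coe_finset,
      huni p.1.1 p.1.2]

lemma lower_bound {V : Type*} [Fintype V] [DecidableEq V] (E : Finset (Finset V))
    (k : ℕ) (hk : 3 ≤ k) (huni : ∀ e ∈ E, e.card = k)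
    (D : Set (V ⊕ ({e // e ∈ E} × Bool))) (hD : IsKDomSet (doubleIncidence E) k D) :
    Fintype.card V ≤ D.ncard := by
  classical
  set A : Finset V := univ.filter (fun v => inl v ∈ D) with hA
  set B : Finset ({e // e ∈ E} × Bool) := univ.filter (fun p => inr p ∈ D) with hB
  -- each v ∉ A has at least k "edges" in B
  have hv : ∀ v ∈ Aᶜ, k ≤ (B.filter (fun b => v ∈ b.1.1)).card := by
    intro v hv
    have hvD : inl v ∉ D := by simpa [hA] using hv
    have h := hD (inl v) hvD
    have hset : (doubleIncidence E).neighborSet (inl v) ∩ D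
        = Sum.inr '' ((B.filter (fun b => v ∈ b.1.1)) : Set _) := by
      ext x
      cases x with
      | inl w => simp [SimpleGraph.neighborSet, adj_ll, hvD]
      | inr q =>
        simp only [Set.mem_inter_iff, SimpleGraph.mem_neighborSet, adj_il,
          Set.mem_image, Finset.coe_filter, Set.mem_setOf_eq, hB, Finset.mem_filter,
          Finset.mem_univ, true_and]
        constructor
        · rintro ⟨h1, h2⟩
          exact ⟨q, ⟨h2, h1⟩, rfl⟩
        · rintro ⟨b, ⟨h1, h2⟩, hb⟩
          cases Sum.inr_injective hb
          exact ⟨h2, h1⟩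
    rw [hset, Set.ncard_image_of_injective _ Sum.inr_injective, Set.ncard_coe_finset] at h
    exact h
  -- double counting
  have hcount : k * Aᶜ.card ≤ k * B.card := by
    calc k * Aᶜ.card = ∑ _v ∈ Aᶜ, k := by rw [Finset.sum_const, smul_eq_mul, mul_comm]
    _ ≤ ∑ v ∈ Aᶜ, (B.filter (fun b => v ∈ b.1.1)).card := Finset.sum_le_sum hv
    _ = ∑ v ∈ Aᶜ, ∑ b ∈ B, (if v ∈ b.1.1 then 1 else 0) := by
        simp only [Finset.card_filter]
    _ = ∑ b ∈ B, ∑ v ∈ Aᶜ, (if v ∈ b.1.1 then 1 else 0) := Finset.sum_comm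
    _ = ∑ b ∈ B, (Aᶜ.filter (fun v => v ∈ b.1.1)).card := by
        simp only [Finset.card_filter]
    _ ≤ ∑ _b ∈ B, k := by
        refine Finset.sum_le_sum fun b _ => ?_
        calc (Aᶜ.filter (fun v => v ∈ b.1.1)).card ≤ b.1.1.card :=
              Finset.card_le_card (fun v hv => (Finset.mem_filter.mp hv).2)
        _ = k := huni b.1.1 b.1.2
    _ = k * B.card := by rw [Finset.sum_const, smul_eq_mul, mul_comm]
  have hAB : Aᶜ.card ≤ B.card :=
    Nat.le_of_mul_le_mul_left hcount (by omega)
  -- D.ncard ≥ A.card + B.card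
  have hDfin : D.Finite := Set.toFinite D
  have hsub : (A.image Sum.inl ∪ B.image Sum.inr) ⊆ hDfin.toFinset := by
    intro x hx
    rcases Finset.mem_union.mp hx with h | h <;>
      · obtain ⟨y, hy, rfl⟩ := Finset.mem_image.mp h
        simp only [hA, hB, Finset.mem_filter] at hy
        simpa using hy.2
  have hcard : A.card + B.card ≤ D.ncard := by
    rw [Set.ncard_eq_toFinset_card' D]
    have : (A.image Sum.inl ∪ B.image Sum.inr).card = A.card + B.card := by
      rw [Finset.card_union_of_disjoint, Finset.card_image_of_injective _ Sum.inl_injective,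
        Finset.card_image_of_injective _ Sum.inr_injective]
      simp [Finset.disjoint_left]
    rw [← this]
    refine Finset.card_le_card ?_
    intro x hx
    have := hsub hx
    simpa [Set.Finite.mem_toFinset] using this
  calc Fintype.card V = A.card + Aᶜ.card := (Finset.card_add_card_compl A).symm
  _ ≤ A.card + B.card := by omega
  _ ≤ D.ncard := hcard


/-- Let `k ≥ 3` and let `F` be a connected `k`-uniform hypergraph with at
least one edge, and let `G` be its double incidence graph. Then
`γ_k(G) = |V(F)|`, and `V(F)` is a minimum `k`-dominating set of `G`. -/
theorem statement11 {V : Type*} [Fintype V] [DecidableEq V] (E : Finset (Finset V))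
    (k : ℕ) (hk : 3 ≤ k) (huni : ∀ e ∈ E, e.card = k) (hne : E.Nonempty)
    (hconn : HyperConnected E) :
    kdomNum (doubleIncidence E) k = Fintype.card V ∧
    IsKDomSet (doubleIncidence E) k (Set.range Sum.inl) ∧
    (Set.range (Sum.inl : V → V ⊕ ({e // e ∈ E} × Bool))).ncard
      = kdomNum (doubleIncidence E) k := by
  have hdom := range_inl_dom E k huni
  have hrange : (Set.range (Sum.inl : V → V ⊕ ({e // e ∈ E} × Bool))).ncard
      = Fintype.card V := by
    rw [← Set.image_univ, Set.ncard_image_of_injective _ Sum.inl_injective,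
      Set.ncard_univ, Nat.card_eq_fintype_card]
  have hmem : Fintype.card V ∈
      {n | ∃ D : Set (V ⊕ ({e // e ∈ E} × Bool)),
        IsKDomSet (doubleIncidence E) k D ∧ D.ncard = n} :=
    ⟨Set.range Sum.inl, hdom, hrange⟩
  have hle : kdomNum (doubleIncidence E) k ≤ Fintype.card V := Nat.sInf_le hmem
  have hge : Fintype.card V ≤ kdomNum (doubleIncidence E) k := by
    refine le_csInf ⟨_, hmem⟩ ?_
    rintro n ⟨D, hDdom, rfl⟩
    exact lower_bound E k hk huni D hDdom
  have heq : kdomNum (doubleIncidence E) k = Fintype.card V := le_antisymm hle hge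
  exact ⟨heq, hdom, by rw [hrange, heq]⟩
end

section
/- Let k ≥ 3 and let F be a connected k-uniform hypergraph with at least one edge, and let G be the double incidence graph of F. Then the domination number of G equals the TC-number of F, that is, γ(G) = tc(F). -/
section Aux
variable {V : Type*} [Fintype V] [DecidableEq V]

lemma di_adj_inl (E : Finset (Finset V)) (v : V) (p : {e // e ∈ E} × Bool) :
    (doubleIncidence E).Adj (Sum.inl v) (Sum.inr p) ↔ v ∈ p.1.1 := by
  simp [doubleIncidence, SimpleGraph.fromRel_adj]; aesop

lemma di_adj_inl_inl (E : Finset (Finset V)) (v w : V) :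
    ¬ (doubleIncidence E).Adj (Sum.inl v) (Sum.inl w) := by
  simp [doubleIncidence, SimpleGraph.fromRel_adj]

lemma di_adj_inr_inr (E : Finset (Finset V)) (p q : {e // e ∈ E} × Bool) :
    ¬ (doubleIncidence E).Adj (Sum.inr p) (Sum.inr q) := by
  simp [doubleIncidence, SimpleGraph.fromRel_adj]

lemma dom_le (E : Finset (Finset V)) (T : Finset V) (R : Finset (Finset V))
    (h : IsTCSet E T R) : kdomNum (doubleIncidence E) 1 ≤ T.card + R.card := by
  classical
  obtain ⟨htrans, hRE, hcov⟩ := h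
  set Rsub : Finset {e // e ∈ E} := Finset.univ.filter (fun e => e.1 ∈ R) with hRsub
  set Dfin : Finset (V ⊕ ({e // e ∈ E} × Bool)) :=
    T.image Sum.inl ∪ Rsub.image (fun e => Sum.inr (e, false)) with hDfin
  have hRcard : Rsub.card = R.card := by
    rw [← Finset.card_image_of_injective Rsub Subtype.val_injective]
    congr 1
    ext f
    simp only [hRsub, Finset.mem_image, Finset.mem_filter, Finset.mem_univ, true_and]
    constructor
    · rintro ⟨e, he, rfl⟩; exact he
    · intro hf; exact ⟨⟨f, hRE hf⟩, hf, rfl⟩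
  have hcard : Dfin.card = T.card + R.card := by
    rw [hDfin, Finset.card_union_of_disjoint, Finset.card_image_of_injective _ Sum.inl_injective,
      Finset.card_image_of_injective, hRcard]
    · intro a b hab
      simpa [Prod.ext_iff] using hab
    · simp [Finset.disjoint_left]
  have hdom : IsKDomSet (doubleIncidence E) 1 (↑Dfin) := by
    intro x hx
    have hfin : ((doubleIncidence E).neighborSet x ∩ ↑Dfin).Finite := Set.toFinite _
    have hne : ((doubleIncidence E).neighborSet x ∩ ↑Dfin).Nonempty := by
      rcases x with v | p
      · have hvT : v ∉ T := by
          intro hvT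
          exact hx (Finset.mem_coe.mpr
            (Finset.mem_union_left _ (Finset.mem_image_of_mem Sum.inl hvT)))
        obtain ⟨e, heR, hve⟩ := hcov v hvT
        refine ⟨Sum.inr (⟨e, hRE heR⟩, false), Set.mem_inter ?_ ?_⟩
        · exact (di_adj_inl E v _).mpr hve
        · refine Finset.mem_coe.mpr (Finset.mem_union_right _ ?_)
          exact Finset.mem_image_of_mem _ (Finset.mem_filter.mpr ⟨Finset.mem_univ _, heR⟩)
      · obtain ⟨t, ht⟩ := htrans p.1.1 p.1.2
        rw [Finset.mem_inter] at ht
        refine ⟨Sum.inl t, Set.mem_inter ?_ ?_⟩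
        · exact ((doubleIncidence E).adj_symm ((di_adj_inl E t p).mpr ht.1))
        · exact Finset.mem_coe.mpr (Finset.mem_union_left _ (Finset.mem_image_of_mem Sum.inl ht.2))
    exact Nat.one_le_iff_ne_zero.mpr (by
      intro h0
      rw [Set.ncard_eq_zero hfin] at h0
      exact hne.ne_empty h0)
  refine Nat.sInf_le ⟨↑Dfin, hdom, ?_⟩
  rw [Set.ncard_coe_finset, hcard]

lemma tc_le (E : Finset (Finset V)) (k : ℕ) (hk : 3 ≤ k) (huni : ∀ e ∈ E, e.card = k)
    (D : Set (V ⊕ ({e // e ∈ E} × Bool))) (hD : IsKDomSet (doubleIncidence E) 1 D) :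
    tcNum E ≤ D.ncard := by
  classical
  have hEne : ∀ e : {e // e ∈ E}, e.1.Nonempty := fun e =>
    Finset.card_pos.mp (by rw [huni e.1 e.2]; omega)
  have hpickmem : ∀ e : {e // e ∈ E}, (hEne e).choose ∈ e.1 := fun e => (hEne e).choose_spec
  set pick : {e // e ∈ E} → V := fun e => (hEne e).choose with hpick
  set T0 : Finset V := Finset.univ.filter (fun v => Sum.inl v ∈ D) with hT0
  set Rsub : Finset {e // e ∈ E} :=
    Finset.univ.filter (fun e => Sum.inr (e, false) ∈ D ∨ Sum.inr (e, true) ∈ D) with hRsubdef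
  set Xsub : Finset {e // e ∈ E} :=
    Finset.univ.filter (fun e => Sum.inr (e, false) ∈ D ∧ Sum.inr (e, true) ∈ D) with hXsubdef
  set T : Finset V := T0 ∪ Xsub.image pick with hT
  set R : Finset (Finset V) := Rsub.image Subtype.val with hR
  -- helper: if a copy (e, j) is not in D, then some vertex of e is in T0
  have hcopy : ∀ (e : {e // e ∈ E}) (j : Bool), Sum.inr (e, j) ∉ D →
      ∃ w ∈ e.1, w ∈ T0 := by
    intro e j hnot
    have h1 := hD _ hnot
    have hne : ((doubleIncidence E).neighborSet (Sum.inr (e, j)) ∩ D).Nonempty := by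
      by_contra hemp
      rw [Set.not_nonempty_iff_eq_empty] at hemp
      rw [hemp] at h1
      simp at h1
    obtain ⟨x, hxadj, hxD⟩ := hne
    match x with
    | Sum.inl w =>
      have hadj : (doubleIncidence E).Adj (Sum.inl w) (Sum.inr (e, j)) :=
        (doubleIncidence E).adj_symm hxadj
      rw [di_adj_inl] at hadj
      exact ⟨w, hadj, by simp [hT0, hxD]⟩
    | Sum.inr q => exact absurd hxadj (di_adj_inr_inr E _ _)
  have hTC : IsTCSet E T R := by
    refine ⟨?_, ?_, ?_⟩
    · intro e he
      set eh : {e // e ∈ E} := ⟨e, he⟩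
      by_cases h0 : Sum.inr (eh, false) ∈ D
      · by_cases h1 : Sum.inr (eh, true) ∈ D
        · refine ⟨pick eh, Finset.mem_inter.mpr ⟨hpickmem eh, ?_⟩⟩
          rw [hT, Finset.mem_union]
          exact Or.inr (Finset.mem_image.mpr ⟨eh, by simp [hXsubdef, h0, h1], rfl⟩)
        · obtain ⟨w, hwe, hwT0⟩ := hcopy eh true h1
          exact ⟨w, Finset.mem_inter.mpr ⟨hwe, by rw [hT, Finset.mem_union]; exact Or.inl hwT0⟩⟩
      · obtain ⟨w, hwe, hwT0⟩ := hcopy eh false h0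
        exact ⟨w, Finset.mem_inter.mpr ⟨hwe, by rw [hT, Finset.mem_union]; exact Or.inl hwT0⟩⟩
    · intro f hf
      rw [hR, Finset.mem_image] at hf
      obtain ⟨e, _, rfl⟩ := hf
      exact e.2
    · intro v hvT
      have hvD : Sum.inl v ∉ D := by
        intro hvD
        exact hvT (by rw [hT, Finset.mem_union]; exact Or.inl (by simp [hT0, hvD]))
      have h1 := hD _ hvD
      have hne : ((doubleIncidence E).neighborSet (Sum.inl v) ∩ D).Nonempty := by
        by_contra hemp
        rw [Set.not_nonempty_iff_eq_empty] at hemp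
        rw [hemp] at h1
        simp at h1
      obtain ⟨x, hxadj, hxD⟩ := hne
      match x with
      | Sum.inl w => exact absurd hxadj (di_adj_inl_inl E v w)
      | Sum.inr p =>
        rw [SimpleGraph.mem_neighborSet, di_adj_inl] at hxadj
        refine ⟨p.1.1, ?_, hxadj⟩
        rw [hR, Finset.mem_image]
        refine ⟨p.1, ?_, rfl⟩
        simp only [hRsubdef, Finset.mem_filter, Finset.mem_univ, true_and]
        rcases Bool.eq_false_or_eq_true p.2 with h2 | h2
        · right; rw [← h2]; exact hxD
        · left; rw [← h2]; exact hxD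
  -- cardinality bound
  have hfinD : D.Finite := Set.toFinite _
  set S : Finset (V ⊕ ({e // e ∈ E} × Bool)) :=
    T0.image Sum.inl ∪
    (Rsub.image (fun e => Sum.inr (e, if Sum.inr (e, false) ∈ D then false else true)) ∪
     Xsub.image (fun e => Sum.inr (e, true))) with hS
  have hSsub : S ⊆ hfinD.toFinset := by
    intro x hx
    rw [Set.Finite.mem_toFinset]
    rw [hS, Finset.mem_union, Finset.mem_union] at hx
    rcases hx with hx | hx | hx
    · obtain ⟨v, hv, rfl⟩ := Finset.mem_image.mp hx
      simpa [hT0] using (Finset.mem_filter.mp hv).2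
    · obtain ⟨e, he, rfl⟩ := Finset.mem_image.mp hx
      have := (Finset.mem_filter.mp he).2
      by_cases h0 : Sum.inr (e, false) ∈ D
      · simpa [h0] using h0
      · simp only [h0, if_false]
        rcases this with h | h
        · exact absurd h h0
        · exact h
    · obtain ⟨e, he, rfl⟩ := Finset.mem_image.mp hx
      exact (Finset.mem_filter.mp he).2.2
  have hinj1 : ∀ (f : {e // e ∈ E} → Bool), Function.Injective
      (fun e : {e // e ∈ E} => (Sum.inr (e, f e) : V ⊕ ({e // e ∈ E} × Bool))) := by
    intro f a b hab
    exact (by simpa [Prod.ext_iff] using hab : a = b ∧ _).1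
  have hScard : S.card = T0.card + (Rsub.card + Xsub.card) := by
    rw [hS, Finset.card_union_of_disjoint, Finset.card_union_of_disjoint,
      Finset.card_image_of_injective _ Sum.inl_injective,
      Finset.card_image_of_injective _ (hinj1 _),
      Finset.card_image_of_injective _ (hinj1 (fun _ => true))]
    · rw [Finset.disjoint_left]
      intro x hx1 hx2
      obtain ⟨a, ha, rfl⟩ := Finset.mem_image.mp hx1
      obtain ⟨b, hb, hbeq⟩ := Finset.mem_image.mp hx2
      have hab : b = a ∧ true = (if Sum.inr (a, false) ∈ D then false else true) := by
        have := Sum.inr.inj hbeq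
        exact ⟨congrArg Prod.fst this, congrArg Prod.snd this⟩
      obtain ⟨rfl, h2⟩ := hab
      have hbD := (Finset.mem_filter.mp hb).2.1
      rw [if_pos hbD] at h2
      simp at h2
    · rw [Finset.disjoint_left]
      intro x hx1 hx2
      obtain ⟨a, _, rfl⟩ := Finset.mem_image.mp hx1
      rw [Finset.mem_union] at hx2
      rcases hx2 with hx2 | hx2 <;>
      · obtain ⟨b, _, hbeq⟩ := Finset.mem_image.mp hx2
        simp at hbeq
  have hDge : T0.card + (Rsub.card + Xsub.card) ≤ D.ncard := by
    rw [← hScard, Set.ncard_eq_toFinset_card D hfinD]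
    exact Finset.card_le_card hSsub
  have hTcard : T.card ≤ T0.card + Xsub.card :=
    le_trans (Finset.card_union_le _ _) (by gcongr; exact Finset.card_image_le)
  have hRcard : R.card = Rsub.card := Finset.card_image_of_injective _ Subtype.val_injective
  have hsum : T.card + R.card ≤ D.ncard := by
    calc T.card + R.card ≤ (T0.card + Xsub.card) + Rsub.card := by rw [hRcard]; gcongr
    _ = T0.card + (Rsub.card + Xsub.card) := by ring
    _ ≤ D.ncard := hDge
  exact le_trans (Nat.sInf_le ⟨T, R, hTC, rfl⟩) hsum

end Aux

/-- Let `k ≥ 3` and let `F` be a connected `k`-uniform hypergraph with at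
least one edge, and let `G` be its double incidence graph. Then
`γ(G) = tc(F)`. -/
theorem statement12 {V : Type*} [Fintype V] [DecidableEq V] (E : Finset (Finset V))
    (k : ℕ) (hk : 3 ≤ k) (huni : ∀ e ∈ E, e.card = k) (hne : E.Nonempty)
    (hconn : HyperConnected E) :
    kdomNum (doubleIncidence E) 1 = tcNum E := by
  classical
  apply le_antisymm
  · -- kdomNum ≤ tcNum
    have htcne : {n | ∃ T R, IsTCSet E T R ∧ T.card + R.card = n}.Nonempty := by
      refine ⟨Fintype.card V + 0, Finset.univ, ∅, ⟨?_, Finset.empty_subset _, ?_⟩, by simp⟩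
      · intro e he
        rw [Finset.inter_comm, Finset.univ_inter]
        exact Finset.card_pos.mp (by rw [huni e he]; omega)
      · intro v hv
        exact absurd (Finset.mem_univ v) hv
    obtain ⟨T, R, hTR, hsum⟩ := Nat.sInf_mem htcne
    rw [tcNum, ← hsum] at *
    exact dom_le E T R hTR
  · -- tcNum ≤ kdomNum
    have hdomne : {n | ∃ D, IsKDomSet (doubleIncidence E) 1 D ∧ D.ncard = n}.Nonempty :=
      ⟨(Set.univ : Set (V ⊕ ({e // e ∈ E} × Bool))).ncard, Set.univ,
        fun v hv => absurd (Set.mem_univ v) hv, rfl⟩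
    obtain ⟨D, hD, hcard⟩ := Nat.sInf_mem hdomne
    rw [kdomNum, ← hcard]
    exact tc_le E k hk huni D hD
end

section
/- Let k ≥ 3 and let F be a connected k-uniform hypergraph with at least one edge, and let G be the double incidence graph of F. Then γ_k(G) = γ(G) + k − 2 if and only if tc(F) = |V(F)| − k + 2. -/
open Sum

section
variable {V : Type*} [Fintype V] [DecidableEq V] (E : Finset (Finset V))

lemma DI_adj_inl_inr (v : V) (p : {e // e ∈ E} × Bool) :
    (doubleIncidence E).Adj (Sum.inl v) (Sum.inr p) ↔ v ∈ p.1.1 := by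
  constructor
  · rintro ⟨-, ⟨v', e', j', h1, h2, hm⟩ | ⟨v', e', j', h1, h2, hm⟩⟩
    · cases h1; cases h2; exact hm
    · cases h1
  · intro h
    exact ⟨by simp, Or.inl ⟨v, p.1, p.2, rfl, rfl, h⟩⟩

lemma DI_not_adj_inl_inl (u v : V) : ¬ (doubleIncidence E).Adj (Sum.inl u) (Sum.inl v) := by
  rintro ⟨-, ⟨v', e', j', h1, h2, hm⟩ | ⟨v', e', j', h1, h2, hm⟩⟩ <;> cases h2

lemma DI_not_adj_inr_inr (p q : {e // e ∈ E} × Bool) :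
    ¬ (doubleIncidence E).Adj (Sum.inr p) (Sum.inr q) := by
  rintro ⟨-, ⟨v', e', j', h1, h2, hm⟩ | ⟨v', e', j', h1, h2, hm⟩⟩ <;> cases h1

lemma DI_nbr_inl (v : V) :
    (doubleIncidence E).neighborSet (Sum.inl v)
      = Sum.inr '' {p : {e // e ∈ E} × Bool | v ∈ p.1.1} := by
  ext w
  cases w with
  | inl u => simp [SimpleGraph.neighborSet, DI_not_adj_inl_inl]
  | inr p => simp [SimpleGraph.neighborSet, DI_adj_inl_inr]

lemma DI_nbr_inr (p : {e // e ∈ E} × Bool) :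
    (doubleIncidence E).neighborSet (Sum.inr p) = Sum.inl '' ↑p.1.1 := by
  ext w
  cases w with
  | inl u => simp [SimpleGraph.neighborSet, (doubleIncidence E).adj_comm, DI_adj_inl_inr]
  | inr q => simp [SimpleGraph.neighborSet, DI_not_adj_inr_inr]

end
set_option linter.unusedSectionVars false
set_option maxHeartbeats 1000000

section
variable {V : Type*} [Fintype V] [DecidableEq V] (E : Finset (Finset V))

lemma card_pairfilter (P : Finset V → Prop) [DecidablePred P] :
    (Finset.univ.filter (fun p : {e // e ∈ E} × Bool => P p.1.1)).card
      = 2 * (E.filter P).card := by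
  have h1 : (Finset.univ.filter (fun p : {e // e ∈ E} × Bool => P p.1.1))
      = (Finset.univ.filter fun ε : {e // e ∈ E} => P ε.1) ×ˢ (Finset.univ : Finset Bool) := by
    ext p
    simp [Finset.mem_product]
  rw [h1, Finset.card_product, Finset.card_univ, Fintype.card_bool, mul_comm]
  congr 1
  apply Finset.card_bij (fun ε _ => ε.1)
  · intro ε hε
    simp only [Finset.mem_filter] at hε ⊢
    exact ⟨ε.2, hε.2⟩
  · intro a ha b hb hab
    exact Subtype.ext hab
  · intro e he
    simp only [Finset.mem_filter] at he
    exact ⟨⟨e, he.1⟩, by simp [he.2], rfl⟩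

lemma DI_kdom_eq (k : ℕ) (hk1 : 1 ≤ k) (huni : ∀ e ∈ E, e.card = k) :
    kdomNum (doubleIncidence E) k = Fintype.card V := by
  classical
  apply le_antisymm
  · -- upper bound: D = range inl
    apply Nat.sInf_le
    refine ⟨Set.range Sum.inl, ?_, ?_⟩
    · intro w hw
      cases w with
      | inl v => exact absurd (Set.mem_range_self v) hw
      | inr p =>
        rw [DI_nbr_inr, Set.inter_eq_self_of_subset_left (Set.image_subset_range _ _),
          Set.ncard_image_of_injective _ Sum.inl_injective, Set.ncard_coe_finset,
          huni _ p.1.2]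
    · rw [← Set.image_univ, Set.ncard_image_of_injective _ Sum.inl_injective, Set.ncard_univ,
        Nat.card_eq_fintype_card]
  · -- lower bound
    apply le_csInf
    · exact ⟨_, Set.univ, fun v hv => absurd (Set.mem_univ v) hv, rfl⟩
    rintro m ⟨D, hDom, rfl⟩
    set T0 : Finset V := Finset.univ.filter (fun v => Sum.inl v ∈ D) with hT0
    set M : Finset V := Finset.univ.filter (fun v => Sum.inl v ∉ D) with hM
    set C : Finset ({e // e ∈ E} × Bool) := Finset.univ.filter (fun p => Sum.inr p ∈ D) with hC
    have hTM : T0.card + M.card = Fintype.card V := by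
      rw [hT0, hM]
      exact Finset.card_filter_add_card_filter_not _
    have hDcard : D.ncard = T0.card + C.card := by
      have hDeq : D = ↑(T0.image Sum.inl ∪ C.image Sum.inr) := by
        ext w
        cases w with
        | inl v => simp [hT0, hC]
        | inr p => simp [hT0, hC]
      rw [hDeq, Set.ncard_coe_finset, Finset.card_union_of_disjoint (by
        simp [Finset.disjoint_left]),
        Finset.card_image_of_injective _ Sum.inl_injective,
        Finset.card_image_of_injective _ Sum.inr_injective]
    have hboth : ∀ p : {e // e ∈ E} × Bool, (∃ v ∈ M, v ∈ p.1.1) → p ∈ C := by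
      rintro p ⟨v, hvM, hvp⟩
      by_contra hpC
      have hpD : Sum.inr p ∉ D := by
        intro h; exact hpC (by simp [hC, h])
      have hk' := hDom _ hpD
      rw [DI_nbr_inr] at hk'
      have hvD : Sum.inl v ∉ D := by
        rw [hM] at hvM
        exact (Finset.mem_filter.mp hvM).2
      have hsub : ((Sum.inl '' ↑p.1.1 : Set (V ⊕ ({e // e ∈ E} × Bool))) ∩ D)
          ⊆ (Sum.inl '' ↑p.1.1) \ {Sum.inl v} := by
        rintro w ⟨hw1, hw2⟩
        refine ⟨hw1, ?_⟩
        intro hw3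
        rw [Set.mem_singleton_iff] at hw3
        subst hw3
        exact hvD hw2
      have hle := Set.ncard_le_ncard hsub (Set.toFinite _)
      have hmem : (Sum.inl v : V ⊕ ({e // e ∈ E} × Bool)) ∈ Sum.inl '' (↑p.1.1 : Set V) :=
        ⟨v, hvp, rfl⟩
      have hcard2 : ((Sum.inl '' (↑p.1.1 : Set V) : Set (V ⊕ ({e // e ∈ E} × Bool)))
          \ {Sum.inl v}).ncard = k - 1 := by
        rw [Set.ncard_diff_singleton_of_mem hmem,
          Set.ncard_image_of_injective _ Sum.inl_injective, Set.ncard_coe_finset, huni _ p.1.2]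
      omega
    have hdeg : ∀ v ∈ M, k ≤ 2 * (E.filter (fun e => v ∈ e)).card := by
      intro v hv
      have hvD : Sum.inl v ∉ D := by
        rw [hM] at hv
        exact (Finset.mem_filter.mp hv).2
      have hk' := hDom _ hvD
      rw [DI_nbr_inl] at hk'
      have hsub : (Sum.inr '' {p : {e // e ∈ E} × Bool | v ∈ p.1.1} ∩ D)
          ⊆ Sum.inr '' {p : {e // e ∈ E} × Bool | v ∈ p.1.1} := Set.inter_subset_left
      have hle := Set.ncard_le_ncard hsub (Set.toFinite _)
      have heq : (Sum.inr '' {p : {e // e ∈ E} × Bool | v ∈ p.1.1}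
          : Set (V ⊕ ({e // e ∈ E} × Bool))).ncard = 2 * (E.filter (fun e => v ∈ e)).card := by
        rw [Set.ncard_image_of_injective _ Sum.inr_injective]
        have : {p : {e // e ∈ E} × Bool | v ∈ p.1.1}
            = ↑(Finset.univ.filter (fun p : {e // e ∈ E} × Bool => v ∈ p.1.1)) := by
          ext p; simp
        rw [this, Set.ncard_coe_finset]
        exact card_pairfilter E (fun e => v ∈ e)
      omega
    set EM : Finset (Finset V) := E.filter (fun e => ∃ v ∈ M, v ∈ e) with hEM
    have hCM : 2 * EM.card ≤ C.card := by
      rw [hEM]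
      rw [← card_pairfilter E (fun e => ∃ v ∈ M, v ∈ e)]
      apply Finset.card_le_card
      intro p hp
      exact hboth p (by simpa using (Finset.mem_filter.mp hp).2)
    have hsum1 : ∀ v ∈ M, (E.filter (fun e => v ∈ e)).card
        = (EM.filter (fun e => v ∈ e)).card := by
      intro v hv
      congr 1
      ext e
      simp only [hEM, Finset.mem_filter]
      exact ⟨fun h => ⟨⟨h.1, v, hv, h.2⟩, h.2⟩, fun h => ⟨h.1.1, h.2⟩⟩
    have hswap : ∑ v ∈ M, (EM.filter (fun e => v ∈ e)).card
        = ∑ e ∈ EM, (M.filter (fun v => v ∈ e)).card := by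
      simp_rw [Finset.card_filter]
      exact Finset.sum_comm
    have hbound : ∑ e ∈ EM, (M.filter (fun v => v ∈ e)).card ≤ EM.card * k := by
      apply Finset.sum_le_card_nsmul
      intro e he
      have heE : e ∈ E := Finset.mem_of_mem_filter _ (hEM ▸ he)
      calc (M.filter (fun v => v ∈ e)).card ≤ e.card :=
            Finset.card_le_card (fun v hv => (Finset.mem_filter.mp hv).2)
        _ = k := huni _ heE
    have hMle : k * M.card ≤ k * (2 * EM.card) := by
      calc k * M.card = ∑ _v ∈ M, k := by rw [Finset.sum_const, smul_eq_mul, mul_comm]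
        _ ≤ ∑ v ∈ M, 2 * (E.filter (fun e => v ∈ e)).card := Finset.sum_le_sum hdeg
        _ = 2 * ∑ v ∈ M, (E.filter (fun e => v ∈ e)).card := by rw [Finset.mul_sum]
        _ = 2 * ∑ v ∈ M, (EM.filter (fun e => v ∈ e)).card := by
            congr 1; exact Finset.sum_congr rfl hsum1
        _ = 2 * ∑ e ∈ EM, (M.filter (fun v => v ∈ e)).card := by rw [hswap]
        _ ≤ 2 * (EM.card * k) := by omega
        _ = k * (2 * EM.card) := by ring
    have hM2 : M.card ≤ 2 * EM.card := Nat.le_of_mul_le_mul_left hMle (by omega)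
    omega

end
section
variable {V : Type*} [Fintype V] [DecidableEq V] (E : Finset (Finset V))

lemma DI_ncard_split (D : Set (V ⊕ ({e // e ∈ E} × Bool))) :
    D.ncard = {v : V | Sum.inl v ∈ D}.ncard
      + {p : {e // e ∈ E} × Bool | Sum.inr p ∈ D}.ncard := by
  have hDeq : D = (Sum.inl '' {v : V | Sum.inl v ∈ D})
      ∪ (Sum.inr '' {p : {e // e ∈ E} × Bool | Sum.inr p ∈ D}) := by
    ext w
    cases w with
    | inl v => simp
    | inr p => simp
  nth_rewrite 1 [hDeq]
  rw [Set.ncard_union_eq (by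
      rw [Set.disjoint_left]
      rintro w ⟨v, -, rfl⟩ ⟨p, -, h⟩
      exact absurd h (by simp)) (Set.toFinite _) (Set.toFinite _),
    Set.ncard_image_of_injective _ Sum.inl_injective,
    Set.ncard_image_of_injective _ Sum.inr_injective]

lemma DI_dom_eq_tc (hE3 : ∀ e ∈ E, e.Nonempty) :
    kdomNum (doubleIncidence E) 1 = tcNum E := by
  classical
  have htcne : {n | ∃ T R, IsTCSet E T R ∧ T.card + R.card = n}.Nonempty := by
    refine ⟨(Finset.univ : Finset V).card, Finset.univ, ∅, ⟨?_, ?_, ?_⟩, by simp⟩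
    · intro e he
      simpa [Finset.inter_univ] using hE3 e he
    · exact Finset.empty_subset _
    · intro v hv
      exact absurd (Finset.mem_univ v) hv
  have hkdne : {n | ∃ D : Set (V ⊕ ({e // e ∈ E} × Bool)),
      IsKDomSet (doubleIncidence E) 1 D ∧ D.ncard = n}.Nonempty :=
    ⟨_, Set.univ, fun v hv => absurd (Set.mem_univ v) hv, rfl⟩
  apply le_antisymm
  · -- kdomNum ≤ tcNum : from an optimal TC-set build a dominating set
    obtain ⟨T, R, ⟨htrans, hRE, hcov⟩, hsum⟩ := Nat.sInf_mem htcne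
    unfold tcNum
    rw [← hsum]
    set D : Finset (V ⊕ ({e // e ∈ E} × Bool)) :=
      T.image Sum.inl ∪ R.attach.image (fun e => Sum.inr (⟨e.1, hRE e.2⟩, true)) with hD
    apply Nat.sInf_le
    refine ⟨↑D, ?_, ?_⟩
    · intro w hw
      rw [Finset.mem_coe] at hw
      rw [show (1 : ℕ) = 0 + 1 from rfl, Nat.add_one_le_iff, Set.ncard_pos (Set.toFinite _)]
      cases w with
      | inl v =>
        have hvT : v ∉ T := by
          intro hvT
          exact hw (by simp [hD, Finset.mem_union, hvT])
        obtain ⟨e, heR, hve⟩ := hcov v hvT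
        refine ⟨Sum.inr (⟨e, hRE heR⟩, true), ?_, ?_⟩
        · rw [DI_nbr_inl]
          exact ⟨(⟨e, hRE heR⟩, true), hve, rfl⟩
        · rw [Finset.mem_coe, hD, Finset.mem_union]
          right
          exact Finset.mem_image.mpr ⟨⟨e, heR⟩, Finset.mem_attach _ _, rfl⟩
      | inr p =>
        obtain ⟨v, hv⟩ := htrans p.1.1 p.1.2
        rw [Finset.mem_inter] at hv
        refine ⟨Sum.inl v, ?_, ?_⟩
        · rw [DI_nbr_inr]
          exact ⟨v, hv.1, rfl⟩
        · rw [Finset.mem_coe, hD, Finset.mem_union]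
          left
          exact Finset.mem_image.mpr ⟨v, hv.2, rfl⟩
    · rw [Set.ncard_coe_finset, hD, Finset.card_union_of_disjoint (by
        simp [Finset.disjoint_left]),
        Finset.card_image_of_injective _ Sum.inl_injective]
      congr 1
      rw [Finset.card_image_of_injOn (by
        intro a _ b _ hab
        simp only [Sum.inr.injEq, Prod.mk.injEq, Subtype.mk.injEq] at hab
        exact Subtype.ext hab.1), Finset.card_attach]
  · -- tcNum ≤ kdomNum : from an optimal dominating set build a TC-set
    obtain ⟨D, hDom, hDcard⟩ := Nat.sInf_mem hkdne
    unfold kdomNum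
    unfold tcNum
    rw [← hDcard]
    set T0 : Finset V := Finset.univ.filter (fun v => Sum.inl v ∈ D) with hT0
    set C : Finset ({e // e ∈ E} × Bool) := Finset.univ.filter (fun p => Sum.inr p ∈ D) with hC
    have hsplit : D.ncard = T0.card + C.card := by
      rw [DI_ncard_split E D]
      congr 1
      · rw [← Set.ncard_coe_finset T0]
        congr 1
        ext v; simp [hT0]
      · rw [← Set.ncard_coe_finset C]
        congr 1
        ext p; simp [hC]
    -- a copy in D for every edge all of whose copies would otherwise be undominated
    have hcopy : ∀ (ε : {e // e ∈ E}) (j : Bool), Sum.inr (ε, j) ∉ D →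
        ∃ v ∈ ε.1, Sum.inl v ∈ D := by
      intro ε j hj
      have h1 := hDom _ hj
      rw [DI_nbr_inr] at h1
      have h2 : ((Sum.inl '' (↑ε.1 : Set V) : Set (V ⊕ ({e // e ∈ E} × Bool))) ∩ D).Nonempty := by
        rw [← Set.ncard_pos (Set.toFinite _)]
        exact Nat.lt_of_lt_of_le Nat.zero_lt_one h1
      obtain ⟨w, ⟨v, hv1, rfl⟩, hw2⟩ := h2
      exact ⟨v, hv1, hw2⟩
    set Rsub : Finset {e // e ∈ E} := C.image Prod.fst with hRsub
    set R : Finset (Finset V) := Rsub.image (fun ε => ε.1) with hRdef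
    have hRE : R ⊆ E := by
      intro e he
      rw [hRdef] at he
      obtain ⟨ε, -, rfl⟩ := Finset.mem_image.mp he
      exact ε.2
    have hRcard : R.card = Rsub.card :=
      Finset.card_image_of_injective _ Subtype.val_injective
    set Bad : Finset {e // e ∈ E} := Rsub.filter (fun ε => ∀ v ∈ ε.1, Sum.inl v ∉ D) with hBad
    have hBadBoth : ∀ ε ∈ Bad, ∀ j : Bool, (ε, j) ∈ C := by
      intro ε hε j
      rw [hBad, Finset.mem_filter] at hε
      by_contra hj
      have hj' : Sum.inr (ε, j) ∉ D := by
        intro h; exact hj (by simp [hC, h])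
      obtain ⟨v, hv1, hv2⟩ := hcopy ε j hj'
      exact hε.2 v hv1 hv2
    have hCge : Rsub.card + Bad.card ≤ C.card := by
      rw [Finset.card_eq_sum_card_image Prod.fst C, ← hRsub]
      have hperE : ∀ ε ∈ Rsub, 1 + (if ε ∈ Bad then 1 else 0)
          ≤ (C.filter (fun p => p.1 = ε)).card := by
        intro ε hε
        by_cases hb : ε ∈ Bad
        · have hsub2 : ({(ε, true), (ε, false)} : Finset ({e // e ∈ E} × Bool))
              ⊆ C.filter (fun p => p.1 = ε) := by
            intro p hp
            rw [Finset.mem_insert, Finset.mem_singleton] at hp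
            rcases hp with rfl | rfl
            · exact Finset.mem_filter.mpr ⟨hBadBoth ε hb true, rfl⟩
            · exact Finset.mem_filter.mpr ⟨hBadBoth ε hb false, rfl⟩
          have h2 := Finset.card_le_card hsub2
          rw [Finset.card_insert_of_notMem (by simp), Finset.card_singleton] at h2
          simpa [hb] using h2
        · obtain ⟨p, hp1, hp2⟩ := Finset.mem_image.mp (hRsub ▸ hε)
          have : p ∈ C.filter (fun q => q.1 = ε) := Finset.mem_filter.mpr ⟨hp1, hp2⟩
          have := Finset.card_pos.mpr ⟨p, this⟩
          simpa [hb] using this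
      calc Rsub.card + Bad.card
          = ∑ ε ∈ Rsub, (1 + (if ε ∈ Bad then 1 else 0)) := by
            rw [Finset.sum_add_distrib, Finset.sum_const, smul_eq_mul, mul_one,
              ← Finset.card_filter, Finset.filter_mem_eq_inter,
              Finset.inter_eq_right.mpr (Finset.filter_subset _ _)]
        _ ≤ ∑ ε ∈ Rsub, (C.filter (fun p => p.1 = ε)).card := Finset.sum_le_sum hperE
    -- the transversal
    set T1 : Finset V := Bad.attach.image (fun ε => (hE3 ε.1.1 ε.1.2).choose) with hT1
    set T' : Finset V := T0 ∪ T1 with hT'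
    have hTCset : IsTCSet E T' R := by
      refine ⟨?_, hRE, ?_⟩
      · intro e he
        by_cases hcase : ∃ v ∈ e, Sum.inl v ∈ D
        · obtain ⟨v, hv1, hv2⟩ := hcase
          exact ⟨v, Finset.mem_inter.mpr ⟨hv1, Finset.mem_union_left _ (by simp [hT0, hv2])⟩⟩
        · push_neg at hcase
          have hCmem : ((⟨e, he⟩ : {e // e ∈ E}), true) ∈ C := by
            by_contra hc
            have hc' : Sum.inr ((⟨e, he⟩ : {e // e ∈ E}), true) ∉ D := by
              intro h; exact hc (by simp [hC, h])
            obtain ⟨v, hv1, hv2⟩ := hcopy ⟨e, he⟩ true hc'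
            exact hcase v hv1 hv2
          have hBmem : (⟨e, he⟩ : {e // e ∈ E}) ∈ Bad := by
            rw [hBad, Finset.mem_filter]
            exact ⟨Finset.mem_image.mpr ⟨_, hCmem, rfl⟩, hcase⟩
          refine ⟨(hE3 e he).choose, Finset.mem_inter.mpr ⟨(hE3 e he).choose_spec, ?_⟩⟩
          apply Finset.mem_union_right
          rw [hT1]
          exact Finset.mem_image.mpr ⟨⟨⟨e, he⟩, hBmem⟩, Finset.mem_attach _ _, rfl⟩
      · intro v hv
        have hvD : Sum.inl v ∉ D := by
          intro h
          exact hv (Finset.mem_union_left _ (by simp [hT0, h]))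
        have h1 := hDom _ hvD
        rw [DI_nbr_inl] at h1
        have h2 : ((Sum.inr '' {p : {e // e ∈ E} × Bool | v ∈ p.1.1}
            : Set (V ⊕ ({e // e ∈ E} × Bool))) ∩ D).Nonempty := by
          rw [← Set.ncard_pos (Set.toFinite _)]
          exact Nat.lt_of_lt_of_le Nat.zero_lt_one h1
        obtain ⟨w, ⟨p, hp1, rfl⟩, hw2⟩ := h2
        refine ⟨p.1.1, ?_, hp1⟩
        rw [hRdef]
        apply Finset.mem_image.mpr
        refine ⟨p.1, ?_, rfl⟩
        rw [hRsub]
        exact Finset.mem_image.mpr ⟨p, by simp [hC, hw2], rfl⟩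
    have hfinal : T'.card + R.card ≤ D.ncard := by
      have hT'le : T'.card ≤ T0.card + T1.card := Finset.card_union_le _ _
      have hT1le : T1.card ≤ Bad.card := by
        rw [hT1]
        exact le_trans Finset.card_image_le (by rw [Finset.card_attach])
      omega
    exact le_trans (Nat.sInf_le ⟨T', R, hTCset, rfl⟩) hfinal

end
/-- Let `k ≥ 3` and let `F` be a connected `k`-uniform hypergraph with at
least one edge, and let `G` be its double incidence graph. Then
`γ_k(G) = γ(G) + k − 2` if and only if `tc(F) = |V(F)| − k + 2`. -/
theorem statement13 {V : Type*} [Fintype V] [DecidableEq V] (E : Finset (Finset V))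
    (k : ℕ) (hk : 3 ≤ k) (huni : ∀ e ∈ E, e.card = k) (hne : E.Nonempty)
    (hconn : HyperConnected E) :
    kdomNum (doubleIncidence E) k = kdomNum (doubleIncidence E) 1 + (k - 2) ↔
      tcNum E = Fintype.card V - k + 2 := by
  have hn : k ≤ Fintype.card V := by
    obtain ⟨e, he⟩ := hne
    rw [← huni e he, ← Finset.card_univ]
    exact Finset.card_le_card (Finset.subset_univ e)
  have h1 := DI_kdom_eq E k (by omega) huni
  have h2 := DI_dom_eq_tc E (fun e he => Finset.card_pos.mp (by rw [huni e he]; omega))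
  rw [h1, h2]
  omega
end

section
/- For all integers k ≥ 2, r ≥ 1 and i_1, …, i_r with each i_j ≥ k, the graph G = S_k(i_1, …, i_r) satisfies γ_k(G) = r + k − 1 and γ(G) = r + 1; in particular γ_k(G) = γ(G) + k − 2. -/
/-- The graph `S_k(i_1, …, i_r)`: its vertices are `k − 1` "center" vertices
`c_1, …, c_{k−1}`, the vertices `v_1, …, v_r`, and vertices `x_{j,m}` for
`1 ≤ j ≤ r`, `1 ≤ m ≤ i_j`; each `x_{j,m}` is adjacent exactly to `v_j` and
to all the centers, and there are no other edges. -/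
def SGraph (k r : ℕ) (i : Fin r → ℕ) :
    SimpleGraph (Fin (k - 1) ⊕ (Fin r ⊕ (Σ j : Fin r, Fin (i j)))) :=
  SimpleGraph.fromRel fun a b =>
    ∃ (j : Fin r) (m : Fin (i j)),
      b = Sum.inr (Sum.inr ⟨j, m⟩) ∧
      (a = Sum.inr (Sum.inl j) ∨ ∃ c : Fin (k - 1), a = Sum.inl c)

namespace S14
variable {k r : ℕ} {i : Fin r → ℕ}

abbrev VV (k r : ℕ) (i : Fin r → ℕ) := Fin (k - 1) ⊕ (Fin r ⊕ (Σ j : Fin r, Fin (i j)))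

lemma nb_x (j : Fin r) (m : Fin (i j)) :
    (SGraph k r i).neighborSet (Sum.inr (Sum.inr ⟨j, m⟩)) =
      insert (Sum.inr (Sum.inl j)) (Set.range (Sum.inl : Fin (k-1) → VV k r i)) := by
  ext a
  simp only [SimpleGraph.mem_neighborSet, SGraph, SimpleGraph.fromRel_adj, Set.mem_insert_iff,
    Set.mem_range]
  constructor
  · rintro ⟨hne, h | h⟩
    · obtain ⟨j', m', hb, h⟩ := h
      exfalso
      rcases h with h | ⟨c, h⟩ <;> simp_all
    · obtain ⟨j', m', hb, h⟩ := h
      have h2 : (⟨j, m⟩ : Σ j, Fin (i j)) = ⟨j', m'⟩ :=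
        Sum.inr_injective (Sum.inr_injective hb)
      cases h2
      rcases h with h | ⟨c, h⟩
      · left; exact h
      · right; exact ⟨c, h.symm⟩
  · rintro (rfl | ⟨c, rfl⟩)
    · exact ⟨by simp, Or.inr ⟨j, m, rfl, Or.inl rfl⟩⟩
    · exact ⟨by simp, Or.inr ⟨j, m, rfl, Or.inr ⟨c, rfl⟩⟩⟩

lemma nb_v (j : Fin r) :
    (SGraph k r i).neighborSet (Sum.inr (Sum.inl j)) =
      Set.range (fun m : Fin (i j) => (Sum.inr (Sum.inr ⟨j, m⟩) : VV k r i)) := by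
  ext a
  simp only [SimpleGraph.mem_neighborSet, SGraph, SimpleGraph.fromRel_adj, Set.mem_range]
  constructor
  · rintro ⟨hne, h | h⟩
    · obtain ⟨j', m', rfl, h⟩ := h
      rcases h with h | ⟨c, h⟩
      · obtain rfl : j = j' := by simpa using h
        exact ⟨m', rfl⟩
      · simp_all
    · obtain ⟨j', m', hb, h⟩ := h
      exfalso; rcases h with h | ⟨c, h⟩ <;> simp_all
  · rintro ⟨m, rfl⟩
    exact ⟨by simp, Or.inl ⟨j, m, rfl, Or.inl rfl⟩⟩

lemma nb_c (c : Fin (k - 1)) :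
    (SGraph k r i).neighborSet (Sum.inl c) =
      Set.range (fun p : Σ j : Fin r, Fin (i j) => (Sum.inr (Sum.inr p) : VV k r i)) := by
  ext a
  simp only [SimpleGraph.mem_neighborSet, SGraph, SimpleGraph.fromRel_adj, Set.mem_range]
  constructor
  · rintro ⟨hne, h | h⟩
    · obtain ⟨j', m', rfl, h⟩ := h
      exact ⟨⟨j', m'⟩, rfl⟩
    · obtain ⟨j', m', hb, h⟩ := h
      exfalso; rcases h with h | ⟨c', h⟩ <;> simp_all
  · rintro ⟨⟨j, m⟩, rfl⟩
    exact ⟨by simp, Or.inl ⟨j, m, rfl, Or.inr ⟨c, rfl⟩⟩⟩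

lemma ncard_range {α β : Type*} [Fintype α] (f : α → β) (hf : Function.Injective f) :
    (Set.range f).ncard = Fintype.card α := by
  rw [← Set.image_univ, Set.ncard_image_of_injective _ hf, Set.ncard_univ,
    Nat.card_eq_fintype_card]

lemma X_inj {j j' : Fin r} {m : Fin (i j)} {m' : Fin (i j')}
    (h : (Sum.inr (Sum.inr ⟨j, m⟩) : VV k r i) = Sum.inr (Sum.inr ⟨j', m'⟩)) :
    j = j' ∧ (m : ℕ) = (m' : ℕ) := by
  have h2 : (⟨j, m⟩ : Σ j, Fin (i j)) = ⟨j', m'⟩ :=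
    Sum.inr_injective (Sum.inr_injective h)
  cases h2
  exact ⟨rfl, rfl⟩

lemma nb_x_ncard (hk : 1 ≤ k) (j : Fin r) :
    (insert (Sum.inr (Sum.inl j))
      (Set.range (Sum.inl : Fin (k-1) → VV k r i))).ncard = k := by
  rw [Set.ncard_insert_of_notMem (by rintro ⟨c, h⟩; simp at h),
    ncard_range _ Sum.inl_injective]
  simp
  omega

/-- If an `x`-vertex is outside a `k`-dominating set, its whole neighborhood is inside. -/
lemma nbx_sub (hk : 2 ≤ k) {D : Set (VV k r i)} (hD : IsKDomSet (SGraph k r i) k D)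
    {j : Fin r} {m : Fin (i j)} (hm : (Sum.inr (Sum.inr ⟨j, m⟩) : VV k r i) ∉ D) :
    insert (Sum.inr (Sum.inl j)) (Set.range (Sum.inl : Fin (k-1) → VV k r i)) ⊆ D := by
  have h1 := hD _ hm
  rw [nb_x] at h1
  have h2 := Set.eq_of_subset_of_ncard_le (Set.inter_subset_left
    (s := insert (Sum.inr (Sum.inl j)) (Set.range (Sum.inl : Fin (k-1) → VV k r i))) (t := D))
    (by rw [nb_x_ncard (by omega)]; exact h1) (Set.toFinite _)
  rw [← h2]
  exact Set.inter_subset_right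

lemma kdom_lower (hk : 2 ≤ k) (hr : 1 ≤ r) (hi : ∀ j, k ≤ i j)
    (D : Set (VV k r i)) (hD : IsKDomSet (SGraph k r i) k D) :
    r + k - 1 ≤ D.ncard := by
  suffices h : Nat.card (Fin (k-1) ⊕ Fin r) ≤ Nat.card D by
    rw [Nat.card_coe_set_eq] at h
    simp [Nat.card_eq_fintype_card] at h
    omega
  by_cases hx : ∀ j m, (Sum.inr (Sum.inr ⟨j, m⟩) : VV k r i) ∈ D
  · set j0 : Fin r := ⟨0, hr⟩ with hj0
    refine Nat.card_le_card_of_injective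
      (fun p => Sum.elim
        (fun c => (⟨Sum.inr (Sum.inr ⟨j0, ⟨c.1, by have := hi j0; omega⟩⟩), hx _ _⟩ : D))
        (fun j => (⟨Sum.inr (Sum.inr ⟨j, ⟨k - 1, by have := hi j; omega⟩⟩), hx _ _⟩ : D)) p)
      ?_
    rintro (c | j) (c' | j') h <;>
      simp only [Sum.elim_inl, Sum.elim_inr, Subtype.mk.injEq] at h
    · obtain ⟨-, h2⟩ := X_inj h
      simpa [Fin.val_inj] using h2
    · obtain ⟨rfl, h2⟩ := X_inj h
      simp at h2; omega
    · obtain ⟨rfl, h2⟩ := X_inj h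
      simp at h2; omega
    · obtain ⟨rfl, -⟩ := X_inj h
      rfl
  · push_neg at hx
    obtain ⟨j0, m0, hm0⟩ := hx
    have hsub := nbx_sub hk hD hm0
    have hcsub : ∀ c : Fin (k-1), (Sum.inl c : VV k r i) ∈ D := fun c =>
      hsub (Set.mem_insert_of_mem _ ⟨c, rfl⟩)
    have hblock : ∀ j : Fin r, (Sum.inr (Sum.inl j) : VV k r i) ∉ D →
        ∀ m, (Sum.inr (Sum.inr ⟨j, m⟩) : VV k r i) ∈ D := by
      intro j hv m
      by_contra hm
      exact hv (nbx_sub hk hD hm (Set.mem_insert _ _))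
    classical
    refine Nat.card_le_card_of_injective
      (fun p => Sum.elim
        (fun c => (⟨Sum.inl c, hcsub c⟩ : D))
        (fun j =>
          if hv : (Sum.inr (Sum.inl j) : VV k r i) ∈ D then (⟨_, hv⟩ : D)
          else ⟨Sum.inr (Sum.inr ⟨j, ⟨0, by have := hi j; omega⟩⟩), hblock j hv _⟩) p)
      ?_
    rintro (c | j) (c' | j') h <;>
      simp only [Sum.elim_inl, Sum.elim_inr, Subtype.mk.injEq] at h
    · simpa using h
    · split_ifs at h <;> simp at h
    · split_ifs at h <;> simp at h
    · split_ifs at h with h1 h2 h2 <;> simp only [Subtype.mk.injEq] at h ⊢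
      · simpa using h
      · simp at h
      · simp at h
      · obtain ⟨rfl, -⟩ := X_inj h
        rfl

lemma char_kdom (hk : 2 ≤ k) (hr : 1 ≤ r) (hi : ∀ j, k ≤ i j) :
    kdomNum (SGraph k r i) k = r + k - 1 := by
  set D : Set (VV k r i) :=
    Set.range Sum.inl ∪ Set.range (fun j : Fin r => Sum.inr (Sum.inl j)) with hDdef
  have hdom : IsKDomSet (SGraph k r i) k D := by
    intro v hv
    rcases v with c | j | ⟨j, m⟩
    · exact absurd (Or.inl ⟨c, rfl⟩) hv
    · exact absurd (Or.inr ⟨j, rfl⟩) hv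
    · have hsub : (SGraph k r i).neighborSet (Sum.inr (Sum.inr ⟨j, m⟩)) ⊆ D := by
        rw [nb_x]
        rintro a (rfl | ⟨c, rfl⟩)
        · exact Or.inr ⟨j, rfl⟩
        · exact Or.inl ⟨c, rfl⟩
      rw [Set.inter_eq_left.2 hsub, nb_x, nb_x_ncard (by omega)]
  have hcard : D.ncard = r + k - 1 := by
    rw [hDdef, Set.ncard_union_eq ?_ (Set.toFinite _) (Set.toFinite _),
      ncard_range _ Sum.inl_injective,
      ncard_range _ (fun a b h => by simpa using h)]
    · simp; omega
    · rw [Set.disjoint_left]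
      rintro _ ⟨c, rfl⟩ ⟨j, h⟩
      simp at h
  refine le_antisymm (Nat.sInf_le ⟨D, hdom, hcard⟩) (le_csInf ⟨_, D, hdom, hcard⟩ ?_)
  rintro n ⟨D', hD', rfl⟩
  exact kdom_lower hk hr hi D' hD'

lemma char_dom (hk : 2 ≤ k) (hr : 1 ≤ r) (hi : ∀ j, k ≤ i j) :
    kdomNum (SGraph k r i) 1 = r + 1 := by
  classical
  set j0 : Fin r := ⟨0, hr⟩ with hj0def
  have hij0 : 2 ≤ i j0 := le_trans hk (hi j0)
  set x0 : VV k r i := Sum.inr (Sum.inr ⟨j0, ⟨0, by omega⟩⟩) with hx0def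
  set D : Set (VV k r i) :=
    insert x0 (Set.range (fun j : Fin r => Sum.inr (Sum.inl j))) with hDdef
  have hdom : IsKDomSet (SGraph k r i) 1 D := by
    intro v hv
    have hpos : ∀ s : Set (VV k r i), s.Nonempty → 1 ≤ s.ncard := by
      intro s hs
      exact (Set.ncard_pos (Set.toFinite _)).2 hs
    rcases v with c | j | ⟨j, m⟩
    · refine hpos _ ⟨x0, ?_, Set.mem_insert _ _⟩
      rw [nb_c]
      exact ⟨⟨j0, ⟨0, by omega⟩⟩, rfl⟩
    · exact absurd (Set.mem_insert_of_mem _ (Set.mem_range_self j)) hv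
    · refine hpos _ ⟨Sum.inr (Sum.inl j), ?_, Set.mem_insert_of_mem _ ⟨j, rfl⟩⟩
      rw [nb_x]
      exact Set.mem_insert _ _
  have hcard : D.ncard = r + 1 := by
    rw [hDdef, Set.ncard_insert_of_notMem (by rintro ⟨j, h⟩; simp [hx0def] at h),
      ncard_range _ (fun a b h => by simpa using h)]
    simp
  refine le_antisymm (Nat.sInf_le ⟨D, hdom, hcard⟩) (le_csInf ⟨_, D, hdom, hcard⟩ ?_)
  rintro n ⟨E, hE, rfl⟩
  -- lower bound: any dominating set has at least r + 1 elements
  have hblock : ∀ j : Fin r, ∃ w, w ∈ E ∧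
      (w = Sum.inr (Sum.inl j) ∨ ∃ m, w = Sum.inr (Sum.inr ⟨j, m⟩)) := by
    intro j
    by_cases hv : (Sum.inr (Sum.inl j) : VV k r i) ∈ E
    · exact ⟨_, hv, Or.inl rfl⟩
    · have h1 := hE _ hv
      rw [nb_v] at h1
      obtain ⟨w, ⟨m, rfl⟩, hw⟩ := (Set.ncard_pos (Set.toFinite _)).1 h1
      exact ⟨_, hw, Or.inr ⟨m, rfl⟩⟩
  choose g hgE hgP using hblock
  have hginj : Function.Injective g := by
    intro a b h
    rcases hgP a with ha | ⟨ma, ha⟩ <;> rcases hgP b with hb | ⟨mb, hb⟩ <;>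
      rw [ha, hb] at h
    · simpa using h
    · simp at h
    · simp at h
    · exact (X_inj h).1
  have hrange : Set.range g ⊆ E := by rintro _ ⟨j, rfl⟩; exact hgE j
  have hcardg : (Set.range g).ncard = r := by
    rw [ncard_range _ hginj]; simp
  by_contra hlt
  push_neg at hlt
  have hEeq : E = Set.range g :=
    (Set.eq_of_subset_of_ncard_le hrange (by omega) (Set.toFinite _)).symm
  have hnoc : ∀ c : Fin (k-1), (Sum.inl c : VV k r i) ∉ E := by
    intro c hc
    rw [hEeq] at hc
    obtain ⟨j, hj⟩ := hc
    rcases hgP j with h | ⟨m, h⟩ <;> rw [h] at hj <;> simp at hj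
  have hc0 := hE _ (hnoc ⟨0, by omega⟩)
  rw [nb_c] at hc0
  obtain ⟨w, ⟨⟨j1, m1⟩, rfl⟩, hw⟩ := (Set.ncard_pos (Set.toFinite _)).1 hc0
  -- the only element of E in block j1 is this x-vertex
  have hw' := hw
  rw [hEeq] at hw'
  obtain ⟨j2, hj2⟩ := hw'
  have hj21 : j2 = j1 := by
    rcases hgP j2 with h | ⟨m, h⟩ <;> rw [h] at hj2
    · simp at hj2
    · exact (X_inj hj2).1
  subst hj21
  have hvj : (Sum.inr (Sum.inl j2) : VV k r i) ∉ E := by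
    intro hv
    rw [hEeq] at hv
    obtain ⟨j3, hj3⟩ := hv
    have hj32 : j3 = j2 := by
      rcases hgP j3 with h | ⟨m, h⟩ <;> rw [h] at hj3
      · exact Sum.inl_injective (Sum.inr_injective hj3)
      · simp at hj3
    subst hj32
    rw [hj2] at hj3
    simp at hj3
  -- pick m2 ≠ m1 in Fin (i j2)
  have hij2 : 2 ≤ i j2 := le_trans hk (hi j2)
  set m2 : Fin (i j2) := if m1.1 = 0 then ⟨1, by omega⟩ else ⟨0, by omega⟩ with hm2def
  have hm21 : m2 ≠ m1 := by
    rw [hm2def]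
    split_ifs with h <;> intro he <;> rw [Fin.ext_iff] at he <;> simp [h] at he
    omega
  have hx2 : (Sum.inr (Sum.inr ⟨j2, m2⟩) : VV k r i) ∉ E := by
    intro hv
    rw [hEeq] at hv
    obtain ⟨j3, hj3⟩ := hv
    have hj32 : j3 = j2 := by
      rcases hgP j3 with h | ⟨m, h⟩ <;> rw [h] at hj3
      · simp at hj3
      · exact (X_inj hj3).1
    subst hj32
    rw [hj2] at hj3
    obtain ⟨-, hm⟩ := X_inj hj3
    exact hm21 (Fin.ext hm.symm)
  have h2 := hE _ hx2
  rw [nb_x] at h2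
  obtain ⟨w, hwN, hwE⟩ := (Set.ncard_pos (Set.toFinite _)).1 h2
  rcases hwN with rfl | ⟨c, rfl⟩
  · exact hvj hwE
  · exact hnoc c hwE

end S14

/-- For all `k ≥ 2`, `r ≥ 1` and `i_j ≥ k`, the graph `G = S_k(i_1, …, i_r)`
satisfies `γ_k(G) = r + k − 1` and `γ(G) = r + 1`; in particular
`γ_k(G) = γ(G) + k − 2`. -/
theorem statement14 (k r : ℕ) (hk : 2 ≤ k) (hr : 1 ≤ r)
    (i : Fin r → ℕ) (hi : ∀ j, k ≤ i j) :
    kdomNum (SGraph k r i) k = r + k - 1 ∧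
    kdomNum (SGraph k r i) 1 = r + 1 ∧
    kdomNum (SGraph k r i) k = kdomNum (SGraph k r i) 1 + (k - 2) := by
  have h1 := S14.char_kdom hk hr hi
  have h2 := S14.char_dom hk hr hi
  exact ⟨h1, h2, by rw [h1, h2]; omega⟩
end

section
/- For all integers k ≥ 2, r ≥ 1 and i_1, …, i_r with each i_j ≥ k, the graph G = S_k(i_1, …, i_r) is (γ, γ_k)-perfect: G has minimum degree at least k, and every nonempty connected induced subgraph H of G with minimum degree δ(H) ≥ k satisfies γ_k(H) = γ(H) + k − 2. -/
open Function Set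
namespace S15
variable {k r : ℕ} {i : Fin r → ℕ}

abbrev V (k r : ℕ) (i : Fin r → ℕ) := Fin (k-1) ⊕ (Fin r ⊕ (Σ j : Fin r, Fin (i j)))

def C (k r : ℕ) (i : Fin r → ℕ) (c : Fin (k-1)) : V k r i := Sum.inl c
def Hb (k r : ℕ) (i : Fin r → ℕ) (j : Fin r) : V k r i := Sum.inr (Sum.inl j)
def L (k r : ℕ) (i : Fin r → ℕ) (j : Fin r) (m : Fin (i j)) : V k r i := Sum.inr (Sum.inr ⟨j,m⟩)

lemma nbC (c : Fin (k-1)) :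
    (SGraph k r i).neighborSet (C k r i c) = {x | ∃ j m, x = L k r i j m} := by
  ext x
  simp only [SimpleGraph.mem_neighborSet, SGraph, SimpleGraph.fromRel_adj, C, Hb, L,
    Set.mem_setOf_eq]
  constructor
  · rintro ⟨hne, ⟨j, m, rfl, -⟩ | ⟨j, m, h, -⟩⟩
    · exact ⟨j, m, rfl⟩
    · simp at h
  · rintro ⟨j, m, rfl⟩
    exact ⟨by simp, Or.inl ⟨j, m, rfl, Or.inr ⟨c, rfl⟩⟩⟩

lemma nbH (j : Fin r) :
    (SGraph k r i).neighborSet (Hb k r i j) = {x | ∃ m, x = L k r i j m} := by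
  ext x
  simp only [SimpleGraph.mem_neighborSet, SGraph, SimpleGraph.fromRel_adj, C, Hb, L,
    Set.mem_setOf_eq]
  constructor
  · rintro ⟨hne, ⟨j', m, rfl, h | h⟩ | ⟨j', m, h, -⟩⟩
    · simp only [Sum.inr.injEq, Sum.inl.injEq] at h
      subst h; exact ⟨m, rfl⟩
    · obtain ⟨c, hc⟩ := h; simp at hc
    · simp at h
  · rintro ⟨m, rfl⟩
    exact ⟨by simp, Or.inl ⟨j, m, rfl, Or.inl rfl⟩⟩

lemma nbL (j : Fin r) (m : Fin (i j)) :
    (SGraph k r i).neighborSet (L k r i j m) =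
      {Hb k r i j} ∪ {x | ∃ c, x = C k r i c} := by
  ext x
  simp only [SimpleGraph.mem_neighborSet, SGraph, SimpleGraph.fromRel_adj, C, Hb, L,
    Set.mem_setOf_eq, Set.mem_union, Set.mem_singleton_iff]
  constructor
  · rintro ⟨hne, ⟨j', m', rfl, hh | ⟨c, hh⟩⟩ | ⟨j', m', h, h2⟩⟩
    · simp at hh
    · simp at hh
    · simp only [Sum.inr.injEq] at h
      obtain ⟨h1, -⟩ := Sigma.mk.inj_iff.mp h
      subst h1
      exact h2
  · rintro (rfl | ⟨c, rfl⟩)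
    · exact ⟨by simp, Or.inr ⟨j, m, rfl, Or.inl rfl⟩⟩
    · exact ⟨by simp, Or.inr ⟨j, m, rfl, Or.inr ⟨c, rfl⟩⟩⟩

def gL (k r : ℕ) (i : Fin r → ℕ) (j : Fin r) : Option (Fin (k-1)) → V k r i
  | none => Hb k r i j
  | some c => C k r i c

lemma L_inj (j : Fin r) : Injective (L k r i j) := by
  intro a b h
  simp only [L, Sum.inr.injEq] at h
  exact eq_of_heq (Sigma.mk.inj_iff.mp h).2

lemma C_inj : Injective (C k r i) := by
  intro a b h; simpa [C] using h

lemma gL_inj (j : Fin r) : Injective (gL k r i j) := by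
  intro a b h
  cases a <;> cases b <;> simp_all [gL, Hb, C]

lemma ncard_range {α β : Type*} (f : α → β) (hf : Injective f) :
    (Set.range f).ncard = Nat.card α := by
  rw [← Set.image_univ, Set.ncard_image_of_injective _ hf, Set.ncard_univ]

lemma setL_eq (j : Fin r) : {x : V k r i | ∃ m, x = L k r i j m} = Set.range (L k r i j) := by
  ext x; simp [eq_comm]

lemma setC_eq : {x : V k r i | ∃ c, x = C k r i c} = Set.range (C k r i) := by
  ext x; simp [eq_comm]

lemma nbL_range (j : Fin r) :
    ({Hb k r i j} ∪ {x | ∃ c, x = C k r i c} : Set (V k r i)) = Set.range (gL k r i j) := by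
  ext x
  simp only [Set.mem_union, Set.mem_singleton_iff, Set.mem_setOf_eq, Set.mem_range]
  constructor
  · rintro (rfl | ⟨c, rfl⟩)
    · exact ⟨none, rfl⟩
    · exact ⟨some c, rfl⟩
  · rintro ⟨o, rfl⟩
    cases o
    · left; rfl
    · right; exact ⟨_, rfl⟩

lemma ncard_nbL (hk : 2 ≤ k) (j : Fin r) :
    ({Hb k r i j} ∪ {x | ∃ c, x = C k r i c} : Set (V k r i)).ncard = k := by
  rw [nbL_range, ncard_range _ (gL_inj j)]
  simp only [Nat.card_eq_fintype_card, Fintype.card_option, Fintype.card_fin]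
  omega

lemma part1 (hk : 2 ≤ k) (hr : 1 ≤ r) (hi : ∀ j, k ≤ i j) (v : V k r i) :
    k ≤ ((SGraph k r i).neighborSet v).ncard := by
  obtain c | j | ⟨j, m⟩ := v
  · rw [show (Sum.inl c : V k r i) = C k r i c from rfl, nbC]
    have hj0 : (0 : ℕ) < r := hr
    calc k ≤ i ⟨0, hj0⟩ := hi _
    _ = (Set.range (L k r i ⟨0, hj0⟩)).ncard := by
        rw [ncard_range _ (L_inj _)]; simp
    _ ≤ _ := by
        apply Set.ncard_le_ncard _ (Set.toFinite _)
        rintro x ⟨m, rfl⟩; exact ⟨_, m, rfl⟩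
  · rw [show (Sum.inr (Sum.inl j) : V k r i) = Hb k r i j from rfl, nbH, setL_eq,
      ncard_range _ (L_inj _)]
    simpa using hi j
  · rw [show (Sum.inr (Sum.inr ⟨j, m⟩) : V k r i) = L k r i j m from rfl, nbL, ncard_nbL hk]


section W
variable (W : Set (V k r i))

/-- image of induced neighborhood -/
lemma val_image_nb (v : ↥W) :
    Subtype.val '' (((SGraph k r i).induce W).neighborSet v)
      = W ∩ (SGraph k r i).neighborSet v.val := by
  ext x
  constructor
  · rintro ⟨⟨y, hy⟩, hadj, rfl⟩
    rw [SimpleGraph.mem_neighborSet] at hadj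
    exact ⟨hy, (SimpleGraph.mem_neighborSet _ _ _).mpr (SimpleGraph.comap_adj.mp hadj)⟩
  · rintro ⟨hx, hadj⟩
    rw [SimpleGraph.mem_neighborSet] at hadj
    exact ⟨⟨x, hx⟩, (SimpleGraph.mem_neighborSet _ _ _).mpr (SimpleGraph.comap_adj.mpr hadj), rfl⟩

lemma hW3' (hW3 : ∀ v, k ≤ (((SGraph k r i).induce W).neighborSet v).ncard)
    (u : V k r i) (hu : u ∈ W) : k ≤ (W ∩ (SGraph k r i).neighborSet u).ncard := by
  rw [← val_image_nb W ⟨u, hu⟩, Set.ncard_image_of_injective _ Subtype.val_injective]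
  exact hW3 _

lemma leaf_force (hk : 2 ≤ k)
    (hW3 : ∀ v, k ≤ (((SGraph k r i).induce W).neighborSet v).ncard)
    (j : Fin r) (m : Fin (i j)) (h : L k r i j m ∈ W) :
    Hb k r i j ∈ W ∧ ∀ c, C k r i c ∈ W := by
  have h1 : W ∩ (SGraph k r i).neighborSet (L k r i j m)
      = (SGraph k r i).neighborSet (L k r i j m) := by
    apply Set.eq_of_subset_of_ncard_le Set.inter_subset_right
    rw [nbL, ncard_nbL hk, ← nbL]
    exact hW3' W hW3 _ h
  have h2 : (SGraph k r i).neighborSet (L k r i j m) ⊆ W := by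
    rw [← h1]; exact Set.inter_subset_left
  rw [nbL] at h2
  constructor
  · exact h2 (Or.inl rfl)
  · intro c; exact h2 (Or.inr ⟨c, rfl⟩)

lemma adj_leaf {a b : V k r i} (h : (SGraph k r i).Adj a b) :
    (∃ j m, b = L k r i j m) ∨ ∃ j m, a = L k r i j m := by
  rw [SGraph, SimpleGraph.fromRel_adj] at h
  rcases h.2 with ⟨j, m, hb, -⟩ | ⟨j, m, ha, -⟩
  · exact Or.inl ⟨j, m, hb⟩
  · exact Or.inr ⟨j, m, ha⟩

lemma ex_leaf (hk : 2 ≤ k) (hW1 : W.Nonempty)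
    (hW3 : ∀ v, k ≤ (((SGraph k r i).induce W).neighborSet v).ncard) :
    ∃ j m, L k r i j m ∈ W := by
  obtain ⟨u, hu⟩ := hW1
  have h := hW3' W hW3 u hu
  have hne : (W ∩ (SGraph k r i).neighborSet u).Nonempty :=
    Set.nonempty_of_ncard_ne_zero (by omega)
  obtain ⟨x, hxW, hadj⟩ := hne
  rcases adj_leaf ((SimpleGraph.mem_neighborSet _ _ _).mp hadj) with ⟨j, m, h⟩ | ⟨j, m, h⟩
  · exact ⟨j, m, h ▸ hxW⟩
  · exact ⟨j, m, h ▸ hu⟩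

lemma hub_leaves (hW3 : ∀ v, k ≤ (((SGraph k r i).induce W).neighborSet v).ncard)
    (j : Fin r) (hj : Hb k r i j ∈ W) :
    k ≤ {m : Fin (i j) | L k r i j m ∈ W}.ncard := by
  have h := hW3' W hW3 _ hj
  rw [nbH] at h
  have heq : W ∩ {x | ∃ m, x = L k r i j m}
      = L k r i j '' {m : Fin (i j) | L k r i j m ∈ W} := by
    ext x
    constructor
    · rintro ⟨hxW, m, rfl⟩; exact ⟨m, hxW, rfl⟩
    · rintro ⟨m, hm, rfl⟩; exact ⟨hm, m, rfl⟩
  rw [heq, Set.ncard_image_of_injective _ (L_inj j)] at h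
  exact h


def J : Set (Fin r) := {j | Hb k r i j ∈ W}
def HubS : Set ↥W := {x | ∃ j, x.val = Hb k r i j}
def CenterS : Set ↥W := {x | ∃ c, x.val = C k r i c}
def AS (j : Fin r) : Set ↥W := {x | x.val = Hb k r i j ∨ ∃ m, x.val = L k r i j m}

lemma AS_eq {x : ↥W} {j j' : Fin r} (h : x ∈ AS W j) (h' : x ∈ AS W j') : j = j' := by
  rcases h with h | ⟨m, h⟩ <;> rcases h' with h' | ⟨m', h'⟩ <;>
    rw [h] at h' <;> simp [Hb, L, Sigma.mk.inj_iff] at h' <;> tauto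

lemma ncard_HubS : (HubS W).ncard = (J W).ncard := by
  have : HubS W = Set.range (fun (j : ↥(J W)) => (⟨Hb k r i j.val, j.2⟩ : ↥W)) := by
    ext x
    constructor
    · rintro ⟨j, hj⟩
      have hjJ : j ∈ J W := by rw [J, Set.mem_setOf_eq, ← hj]; exact x.2
      exact ⟨⟨j, hjJ⟩, Subtype.ext hj.symm⟩
    · rintro ⟨j, rfl⟩; exact ⟨j.val, rfl⟩
  rw [this, ncard_range, Nat.card_coe_set_eq]
  intro a b h
  simp only [Subtype.mk.injEq, Hb, Sum.inr.injEq, Sum.inl.injEq] at h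
  exact Subtype.ext h

lemma ncard_CenterS (hc : ∀ c, C k r i c ∈ W) : (CenterS W).ncard = k - 1 := by
  have : CenterS W = Set.range (fun (c : Fin (k-1)) => (⟨C k r i c, hc c⟩ : ↥W)) := by
    ext x
    constructor
    · rintro ⟨c, hcx⟩; exact ⟨c, Subtype.ext hcx.symm⟩
    · rintro ⟨c, rfl⟩; exact ⟨c, rfl⟩
  rw [this, ncard_range]
  · simp
  · intro a b h
    simp only [Subtype.mk.injEq, C, Sum.inl.injEq] at h
    exact h

lemma adjCL (c : Fin (k-1)) (j : Fin r) (m : Fin (i j)) :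
    (SGraph k r i).Adj (C k r i c) (L k r i j m) := by
  have h : L k r i j m ∈ (SGraph k r i).neighborSet (C k r i c) := by
    rw [nbC]; exact ⟨j, m, rfl⟩
  exact h

lemma adjHL (j : Fin r) (m : Fin (i j)) :
    (SGraph k r i).Adj (Hb k r i j) (L k r i j m) := by
  have h : L k r i j m ∈ (SGraph k r i).neighborSet (Hb k r i j) := by
    rw [nbH]; exact ⟨m, rfl⟩
  exact h

lemma mem_nb {v w : ↥W} (h : (SGraph k r i).Adj v.val w.val) :
    w ∈ ((SGraph k r i).induce W).neighborSet v :=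
  (SimpleGraph.mem_neighborSet _ _ _).mpr (SimpleGraph.comap_adj.mpr h)


lemma one_le_ncard_of_mem {α : Type*} [Finite α] {s : Set α} {a : α} (h : a ∈ s) :
    1 ≤ s.ncard :=
  (Set.ncard_pos (Set.toFinite _)).mpr ⟨a, h⟩

lemma gamma1_ub (hk : 2 ≤ k) (hW1 : W.Nonempty)
    (hW3 : ∀ v, k ≤ (((SGraph k r i).induce W).neighborSet v).ncard) :
    ∃ D : Set ↥W, IsKDomSet ((SGraph k r i).induce W) 1 D ∧ D.ncard = (J W).ncard + 1 := by
  obtain ⟨j0, m0, h0⟩ := ex_leaf W hk hW1 hW3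
  have hHb0 : Hb k r i j0 ∈ W := (leaf_force W hk hW3 j0 m0 h0).1
  refine ⟨insert ⟨L k r i j0 m0, h0⟩ (HubS W), ?_, ?_⟩
  · intro v hv
    obtain ⟨xv, hxW⟩ := v
    obtain c | jj | ⟨jj, mm⟩ := xv
    · exact one_le_ncard_of_mem
        ⟨mem_nb W (v := ⟨Sum.inl c, hxW⟩) (w := ⟨L k r i j0 m0, h0⟩) (adjCL c j0 m0),
          Set.mem_insert _ _⟩
    · exact absurd (Set.mem_insert_of_mem _
        (show (⟨Sum.inr (Sum.inl jj), hxW⟩ : ↥W) ∈ HubS W from ⟨jj, rfl⟩)) hv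
    · have hHb : Hb k r i jj ∈ W := (leaf_force W hk hW3 jj mm hxW).1
      exact one_le_ncard_of_mem
        ⟨mem_nb W (v := ⟨Sum.inr (Sum.inr ⟨jj, mm⟩), hxW⟩) (w := ⟨Hb k r i jj, hHb⟩)
          ((adjHL jj mm).symm),
          Set.mem_insert_of_mem _
            (show (⟨Hb k r i jj, hHb⟩ : ↥W) ∈ HubS W from ⟨jj, rfl⟩)⟩
  · rw [Set.ncard_insert_of_notMem ?_ (Set.toFinite _), ncard_HubS]
    rintro ⟨jj, hjj⟩
    simp [L, Hb] at hjj

lemma gammak_ub (hk : 2 ≤ k) (hW1 : W.Nonempty)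
    (hW3 : ∀ v, k ≤ (((SGraph k r i).induce W).neighborSet v).ncard) :
    ∃ D : Set ↥W, IsKDomSet ((SGraph k r i).induce W) k D
      ∧ D.ncard = (k - 1) + (J W).ncard := by
  obtain ⟨j0, m0, h0⟩ := ex_leaf W hk hW1 hW3
  have hc : ∀ c, C k r i c ∈ W := (leaf_force W hk hW3 j0 m0 h0).2
  refine ⟨CenterS W ∪ HubS W, ?_, ?_⟩
  · intro v hv
    obtain ⟨xv, hxW⟩ := v
    obtain c | jj | ⟨jj, mm⟩ := xv
    · exact absurd (Or.inl ⟨c, rfl⟩) hv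
    · exact absurd (Or.inr ⟨jj, rfl⟩) hv
    · have hHb : Hb k r i jj ∈ W := (leaf_force W hk hW3 jj mm hxW).1
      set gW : Option (Fin (k-1)) → ↥W :=
        fun o => Option.elim o ⟨Hb k r i jj, hHb⟩ (fun c => ⟨C k r i c, hc c⟩) with hgW
      have hinj : Function.Injective gW := by
        intro a b h
        cases a <;> cases b <;> simp_all [hgW, Hb, C]
      have hsub : Set.range gW ⊆
          ((SGraph k r i).induce W).neighborSet ⟨Sum.inr (Sum.inr ⟨jj, mm⟩), hxW⟩
            ∩ (CenterS W ∪ HubS W) := by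
        rintro x ⟨o, rfl⟩
        cases o with
        | none =>
          exact ⟨mem_nb W (v := ⟨Sum.inr (Sum.inr ⟨jj, mm⟩), hxW⟩) (w := ⟨Hb k r i jj, hHb⟩)
            ((adjHL jj mm).symm), Or.inr ⟨jj, rfl⟩⟩
        | some c =>
          exact ⟨mem_nb W (v := ⟨Sum.inr (Sum.inr ⟨jj, mm⟩), hxW⟩) (w := ⟨C k r i c, hc c⟩)
            ((adjCL c jj mm).symm), Or.inl ⟨c, rfl⟩⟩
      calc k = (Set.range gW).ncard := by
            rw [ncard_range _ hinj]
            simp only [Nat.card_eq_fintype_card, Fintype.card_option, Fintype.card_fin]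
            omega
        _ ≤ _ := Set.ncard_le_ncard hsub (Set.toFinite _)
  · rw [Set.ncard_union_eq ?_ (Set.toFinite _) (Set.toFinite _), ncard_CenterS W hc,
      ncard_HubS]
    rw [Set.disjoint_left]
    rintro x ⟨c, hcx⟩ ⟨jj, hjx⟩
    rw [hcx] at hjx
    simp [C, Hb] at hjx


lemma nb_to_G {v w : ↥W} (h : w ∈ ((SGraph k r i).induce W).neighborSet v) :
    w.val ∈ (SGraph k r i).neighborSet v.val :=
  (SimpleGraph.mem_neighborSet _ _ _).mpr
    (SimpleGraph.comap_adj.mp ((SimpleGraph.mem_neighborSet _ _ _).mp h))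

lemma pick_range (D : Set ↥W) (hit : ∀ j ∈ J W, (D ∩ AS W j).Nonempty) :
    ∃ F : ↥(J W) → ↥W, Function.Injective F ∧ (∀ j, F j ∈ D) ∧ ∀ j, F j ∈ AS W j.val := by
  refine ⟨fun j => (hit j.val j.2).choose, ?_, fun j => (hit j.val j.2).choose_spec.1,
    fun j => (hit j.val j.2).choose_spec.2⟩
  intro a b h
  have ha := (hit a.val a.2).choose_spec.2
  have hb := (hit b.val b.2).choose_spec.2
  rw [show (hit a.val a.2).choose = (hit b.val b.2).choose from h] at ha
  exact Subtype.ext (AS_eq W ha hb)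

lemma concl (D : Set ↥W) (F : ↥(J W) → ↥W) (hFinj : Function.Injective F)
    (hFD : ∀ j, F j ∈ D) (e : ↥W) (he : e ∈ D) (henr : e ∉ Set.range F) :
    (J W).ncard + 1 ≤ D.ncard := by
  have h1 : insert e (Set.range F) ⊆ D := by
    rintro x (rfl | ⟨j, rfl⟩)
    · exact he
    · exact hFD j
  have h2 : (insert e (Set.range F)).ncard = (J W).ncard + 1 := by
    rw [Set.ncard_insert_of_notMem henr (Set.toFinite _), ncard_range _ hFinj,
      Nat.card_coe_set_eq]
  rw [← h2]
  exact Set.ncard_le_ncard h1 (Set.toFinite _)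

lemma hit_of_dom {n : ℕ} (hn : 1 ≤ n) (D : Set ↥W)
    (hD : IsKDomSet ((SGraph k r i).induce W) n D) :
    ∀ j ∈ J W, (D ∩ AS W j).Nonempty := by
  intro j hj
  by_cases hhub : (⟨Hb k r i j, hj⟩ : ↥W) ∈ D
  · exact ⟨_, hhub, Or.inl rfl⟩
  · have h := hD _ hhub
    have hne : (((SGraph k r i).induce W).neighborSet ⟨Hb k r i j, hj⟩ ∩ D).Nonempty :=
      Set.nonempty_of_ncard_ne_zero (by omega)
    obtain ⟨w, hwnb, hwD⟩ := hne
    have hwG := nb_to_G W hwnb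
    rw [nbH] at hwG
    obtain ⟨m, hm⟩ := hwG
    exact ⟨w, hwD, Or.inr ⟨m, hm⟩⟩

lemma gamma1_lb (hk : 2 ≤ k) (hW1 : W.Nonempty)
    (hW3 : ∀ v, k ≤ (((SGraph k r i).induce W).neighborSet v).ncard)
    (D : Set ↥W) (hD : IsKDomSet ((SGraph k r i).induce W) 1 D) :
    (J W).ncard + 1 ≤ D.ncard := by
  obtain ⟨F, hFinj, hFD, hFA⟩ := pick_range W D (hit_of_dom W le_rfl D hD)
  obtain ⟨j0, m0, h0⟩ := ex_leaf W hk hW1 hW3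
  have hc : ∀ c, C k r i c ∈ W := (leaf_force W hk hW3 j0 m0 h0).2
  by_cases hcD : ∃ c, (⟨C k r i c, hc c⟩ : ↥W) ∈ D
  · obtain ⟨c0, hc0⟩ := hcD
    refine concl W D F hFinj hFD _ hc0 ?_
    rintro ⟨j, hj⟩
    have := hFA j
    rw [hj] at this
    rcases this with h | ⟨m, h⟩ <;> simp [C, Hb, L] at h
  · push_neg at hcD
    have c0 : Fin (k - 1) := ⟨0, by omega⟩
    -- the center c0 is not in D, so it has a neighbor in D, which is a leaf
    have h := hD _ (hcD c0)
    have hne : (((SGraph k r i).induce W).neighborSet ⟨C k r i c0, hc c0⟩ ∩ D).Nonempty :=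
      Set.nonempty_of_ncard_ne_zero (by omega)
    obtain ⟨w, hwnb, hwD⟩ := hne
    have hwG := nb_to_G W hwnb
    rw [nbC] at hwG
    obtain ⟨j1, m1, hw1⟩ := hwG
    have hLW : L k r i j1 m1 ∈ W := hw1 ▸ w.2
    have hj1J : j1 ∈ J W := (leaf_force W hk hW3 j1 m1 hLW).1
    -- find a second leaf of j1 in W
    have h2le : 1 < {m : Fin (i j1) | L k r i j1 m ∈ W}.ncard := by
      have := hub_leaves W hW3 j1 hj1J
      omega
    obtain ⟨a, haW, b, hbW, hab⟩ := (Set.one_lt_ncard (Set.toFinite _)).mp h2le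
    obtain ⟨m2, hm2W, hm2ne⟩ : ∃ m2, L k r i j1 m2 ∈ W ∧ m2 ≠ m1 := by
      by_cases ham : a = m1
      · exact ⟨b, hbW, fun hbm => hab (by rw [ham, hbm])⟩
      · exact ⟨a, haW, ham⟩
    -- get two distinct elements of D ∩ AS W j1
    obtain ⟨x, y, hxD, hxA, hyD, hyA, hxy⟩ :
        ∃ x y : ↥W, x ∈ D ∧ x ∈ AS W j1 ∧ y ∈ D ∧ y ∈ AS W j1 ∧ x ≠ y := by
      by_cases hx2 : (⟨L k r i j1 m2, hm2W⟩ : ↥W) ∈ D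
      · refine ⟨w, _, hwD, Or.inr ⟨m1, hw1⟩, hx2, Or.inr ⟨m2, rfl⟩, ?_⟩
        intro hcontra
        have : L k r i j1 m1 = L k r i j1 m2 := by
          rw [← hw1, hcontra]
        exact hm2ne (L_inj j1 this).symm
      · have h' := hD _ hx2
        have hne' : (((SGraph k r i).induce W).neighborSet ⟨L k r i j1 m2, hm2W⟩
            ∩ D).Nonempty := Set.nonempty_of_ncard_ne_zero (by omega)
        obtain ⟨y, hynb, hyD⟩ := hne'
        have hyG := nb_to_G W hynb
        rw [nbL] at hyG
        rcases hyG with hyG | ⟨c, hyG⟩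
        · refine ⟨w, y, hwD, Or.inr ⟨m1, hw1⟩, hyD, Or.inl hyG, ?_⟩
          intro hcontra
          rw [hcontra] at hw1
          rw [hyG] at hw1
          simp [Hb, L] at hw1
        · exfalso
          rw [show y = ⟨C k r i c, hc c⟩ from Subtype.ext hyG] at hyD
          exact hcD c hyD
    -- one of x, y is not F ⟨j1, hj1J⟩
    have key : ∀ z : ↥W, z ∈ D → z ∈ AS W j1 → z ≠ F ⟨j1, hj1J⟩ → z ∉ Set.range F := by
      intro z hzD hzA hzF
      rintro ⟨j', rfl⟩
      have := AS_eq W (hFA j') hzA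
      exact hzF (by congr 1; exact Subtype.ext this)
    by_cases hxF : x = F ⟨j1, hj1J⟩
    · exact concl W D F hFinj hFD y hyD (key y hyD hyA (fun h => hxy (by rw [hxF, h])))
    · exact concl W D F hFinj hFD x hxD (key x hxD hxA hxF)


lemma L_eq {j j' : Fin r} {m : Fin (i j)} {m' : Fin (i j')}
    (h : L k r i j m = L k r i j' m') : j = j' := by
  simp only [L, Sum.inr.injEq, Sigma.mk.inj_iff] at h
  exact h.1

lemma gammak_lb (hk : 2 ≤ k) (hW1 : W.Nonempty)
    (hW3 : ∀ v, k ≤ (((SGraph k r i).induce W).neighborSet v).ncard)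
    (D : Set ↥W) (hD : IsKDomSet ((SGraph k r i).induce W) k D) :
    (k - 1) + (J W).ncard ≤ D.ncard := by
  obtain ⟨j0, m0, h0⟩ := ex_leaf W hk hW1 hW3
  have hc : ∀ c, C k r i c ∈ W := (leaf_force W hk hW3 j0 m0 h0).2
  have hj0J : j0 ∈ J W := (leaf_force W hk hW3 j0 m0 h0).1
  by_cases hcD : ∀ c, (⟨C k r i c, hc c⟩ : ↥W) ∈ D
  · -- all centers in D
    obtain ⟨F, hFinj, hFD, hFA⟩ := pick_range W D (hit_of_dom W (by omega) D hD)
    have hsub : CenterS W ∪ Set.range F ⊆ D := by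
      rintro x (⟨c, hcx⟩ | ⟨j, rfl⟩)
      · rw [show x = ⟨C k r i c, hc c⟩ from Subtype.ext hcx]
        exact hcD c
      · exact hFD j
    have hdisj : Disjoint (CenterS W) (Set.range F) := by
      rw [Set.disjoint_left]
      rintro x ⟨c, hcx⟩ ⟨j, rfl⟩
      rcases hFA j with h | ⟨m, h⟩ <;> rw [hcx] at h <;> simp [C, Hb, L] at h
    calc (k - 1) + (J W).ncard = (CenterS W ∪ Set.range F).ncard := by
          rw [Set.ncard_union_eq hdisj (Set.toFinite _) (Set.toFinite _),
            ncard_CenterS W hc, ncard_range _ hFinj, Nat.card_coe_set_eq]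
      _ ≤ D.ncard := Set.ncard_le_ncard hsub (Set.toFinite _)
  · -- some center not in D : then all leaves are in D
    push_neg at hcD
    obtain ⟨c0, hc0D⟩ := hcD
    have hleafD : ∀ (j : Fin r) (m : Fin (i j)) (h : L k r i j m ∈ W),
        (⟨L k r i j m, h⟩ : ↥W) ∈ D := by
      intro j m hLW
      by_contra hnot
      have hk' := hD _ hnot
      have himg : Subtype.val '' (((SGraph k r i).induce W).neighborSet ⟨L k r i j m, hLW⟩
          ∩ D) ⊆ Set.range (gL k r i j) \ {C k r i c0} := by
        rintro x ⟨y, ⟨hynb, hyD⟩, rfl⟩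
        constructor
        · have hg := nb_to_G W hynb
          rw [nbL, nbL_range] at hg
          exact hg
        · simp only [Set.mem_singleton_iff]
          intro hyc
          rw [show y = ⟨C k r i c0, hc c0⟩ from Subtype.ext hyc] at hyD
          exact hc0D hyD
      have h1 := Set.ncard_image_of_injective
        ((((SGraph k r i).induce W).neighborSet ⟨L k r i j m, hLW⟩ ∩ D))
        (Subtype.val_injective)
      have h2 := Set.ncard_le_ncard himg (Set.toFinite _)
      have h3 : (Set.range (gL k r i j) \ {C k r i c0}).ncard = k - 1 := by
        rw [Set.ncard_diff_singleton_of_mem (show C k r i c0 ∈ Set.range (gL k r i j) from ⟨some c0, rfl⟩),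
          ncard_range _ (gL_inj j)]
        simp only [Nat.card_eq_fintype_card, Fintype.card_option, Fintype.card_fin]
        omega
      omega
    -- build large subset of D out of leaves
    set S1 : Set (Fin (i j0)) := {m | L k r i j0 m ∈ W} with hS1def
    have hS1 : k ≤ S1.ncard := hub_leaves W hW3 j0 hj0J
    set B1 : Set ↥W := Set.range (fun (m : ↥S1) => (⟨L k r i j0 m.val, m.2⟩ : ↥W)) with hB1def
    have hB1card : B1.ncard = S1.ncard := by
      rw [hB1def, ncard_range, Nat.card_coe_set_eq]
      intro a b h
      simp only [Subtype.mk.injEq] at h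
      exact Subtype.ext (L_inj j0 h)
    have hlf : ∀ j : ↥(J W \ {j0}), ∃ m, L k r i j.val m ∈ W := by
      intro j
      have hle := hub_leaves W hW3 j.val j.2.1
      obtain ⟨m, hm⟩ := Set.nonempty_of_ncard_ne_zero (s := {m | L k r i j.val m ∈ W})
        (by omega)
      exact ⟨m, hm⟩
    set F2 : ↥(J W \ {j0}) → ↥W :=
      fun j => (⟨L k r i j.val (hlf j).choose, (hlf j).choose_spec⟩ : ↥W) with hF2def
    have hF2inj : Function.Injective F2 := by
      intro a b h
      simp only [hF2def, Subtype.mk.injEq] at h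
      exact Subtype.ext (L_eq h)
    set B2 : Set ↥W := Set.range F2 with hB2def
    have hB2card : B2.ncard = (J W).ncard - 1 := by
      rw [hB2def, ncard_range _ hF2inj, Nat.card_coe_set_eq,
        Set.ncard_diff_singleton_of_mem hj0J]
    have hdisj : Disjoint B1 B2 := by
      rw [Set.disjoint_left]
      rintro x ⟨m, rfl⟩ ⟨j, hj⟩
      have := congrArg Subtype.val hj
      simp only [hF2def] at this
      exact j.2.2 (L_eq this)
    have hsub : B1 ∪ B2 ⊆ D := by
      rintro x (⟨m, rfl⟩ | ⟨j, rfl⟩)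
      · exact hleafD j0 m.val m.2
      · exact hleafD j.val _ _
    have hJ1 : 1 ≤ (J W).ncard := one_le_ncard_of_mem hj0J
    have hle := Set.ncard_le_ncard hsub (Set.toFinite _)
    rw [Set.ncard_union_eq hdisj (Set.toFinite _) (Set.toFinite _), hB1card, hB2card] at hle
    omega

end W
end S15

/-- For all `k ≥ 2`, `r ≥ 1` and `i_j ≥ k`, the graph `G = S_k(i_1, …, i_r)`
is `(γ, γ_k)`-perfect: `G` has minimum degree at least `k`, and every
nonempty connected induced subgraph `H` of `G` with minimum degree at least
`k` satisfies `γ_k(H) = γ(H) + k − 2`. -/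
theorem statement15 (k r : ℕ) (hk : 2 ≤ k) (hr : 1 ≤ r)
    (i : Fin r → ℕ) (hi : ∀ j, k ≤ i j) :
    (∀ v, k ≤ ((SGraph k r i).neighborSet v).ncard) ∧
    ∀ W : Set (Fin (k - 1) ⊕ (Fin r ⊕ (Σ j : Fin r, Fin (i j)))),
      W.Nonempty → ((SGraph k r i).induce W).Connected →
      (∀ v, k ≤ (((SGraph k r i).induce W).neighborSet v).ncard) →
      kdomNum ((SGraph k r i).induce W) k
        = kdomNum ((SGraph k r i).induce W) 1 + (k - 2) := by
  constructor
  · exact fun v => S15.part1 hk hr hi v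
  · intro W hW1 _hW2 hW3
    obtain ⟨D1, hD1, hD1c⟩ := S15.gamma1_ub W hk hW1 hW3
    obtain ⟨Dk, hDk, hDkc⟩ := S15.gammak_ub W hk hW1 hW3
    have e1 : kdomNum ((SGraph k r i).induce W) 1 = (S15.J W).ncard + 1 := by
      apply le_antisymm
      · exact Nat.sInf_le ⟨D1, hD1, hD1c⟩
      · refine le_csInf ⟨_, D1, hD1, hD1c⟩ ?_
        rintro n ⟨D, hD, rfl⟩
        exact S15.gamma1_lb W hk hW1 hW3 D hD
    have ek : kdomNum ((SGraph k r i).induce W) k = (k - 1) + (S15.J W).ncard := by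
      apply le_antisymm
      · exact Nat.sInf_le ⟨Dk, hDk, hDkc⟩
      · refine le_csInf ⟨_, Dk, hDk, hDkc⟩ ?_
        rintro n ⟨D, hD, rfl⟩
        exact S15.gammak_lb W hk hW1 hW3 D hD
    rw [e1, ek]
    omega
end

section
/- Let G be a connected bipartite finite simple graph with minimum degree δ(G) ≥ 3 such that every nonempty connected induced subgraph H of G with δ(H) ≥ 3 satisfies γ_3(H) = γ(H) + 1, and let D be a minimum 3-dominating set of G. Then every vertex of G outside D has degree exactly 3 in G. -/
section Aux

variable {α : Type*}

lemma aux_one_le_ncard {s : Set α} {a : α} (ha : a ∈ s) (hs : s.Finite) : 1 ≤ s.ncard :=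
  (Set.ncard_pos hs).mpr ⟨a, ha⟩

lemma aux_ncard_three {a b c : α} (hab : a ≠ b) (hac : a ≠ c) (hbc : b ≠ c) :
    ({a, b, c} : Set α).ncard = 3 :=
  Set.ncard_eq_three.mpr ⟨a, b, c, hab, hac, hbc, rfl⟩

lemma aux_three_le_ncard {s : Set α} {a b c : α} (ha : a ∈ s) (hb : b ∈ s) (hc : c ∈ s)
    (hab : a ≠ b) (hac : a ≠ c) (hbc : b ≠ c) (hs : s.Finite) : 3 ≤ s.ncard := by
  rw [← aux_ncard_three hab hac hbc]
  refine Set.ncard_le_ncard ?_ hs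
  rintro x (rfl | rfl | rfl) <;> assumption

lemma aux_ncard_four {a b c d : α} (hab : a ≠ b) (hac : a ≠ c) (had : a ≠ d)
    (hbc : b ≠ c) (hbd : b ≠ d) (hcd : c ≠ d) : ({a, b, c, d} : Set α).ncard = 4 := by
  rw [Set.ncard_insert_of_notMem (by rintro (rfl | rfl | rfl); exacts [hab rfl, hac rfl, had rfl])
      (((Set.finite_singleton d).insert c).insert b), aux_ncard_three hbc hbd hcd]

lemma aux_four_le_ncard {s : Set α} {a b c d : α} (ha : a ∈ s) (hb : b ∈ s) (hc : c ∈ s)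
    (hd : d ∈ s) (hab : a ≠ b) (hac : a ≠ c) (had : a ≠ d) (hbc : b ≠ c) (hbd : b ≠ d)
    (hcd : c ≠ d) (hs : s.Finite) : 4 ≤ s.ncard := by
  rw [← aux_ncard_four hab hac had hbc hbd hcd]
  refine Set.ncard_le_ncard ?_ hs
  rintro x (rfl | rfl | rfl | rfl) <;> assumption

lemma aux_exists_two {s : Set α} (hs : s.Finite) (h : 2 ≤ s.ncard) :
    ∃ a b, a ∈ s ∧ b ∈ s ∧ a ≠ b := by
  have h0 : 0 < s.ncard := by omega
  obtain ⟨a, ha⟩ := (Set.ncard_pos hs).mp h0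
  obtain ⟨b, hb, hba⟩ := Set.exists_ne_of_one_lt_ncard (s := s) (by omega) a
  exact ⟨a, b, ha, hb, hba.symm⟩

lemma aux_exists_four {s : Set α} (hs : s.Finite) (h : 4 ≤ s.ncard) :
    ∃ a b c d, a ∈ s ∧ b ∈ s ∧ c ∈ s ∧ d ∈ s ∧
      a ≠ b ∧ a ≠ c ∧ a ≠ d ∧ b ≠ c ∧ b ≠ d ∧ c ≠ d := by
  have h0 : 0 < s.ncard := by omega
  obtain ⟨a, ha⟩ := (Set.ncard_pos hs).mp h0
  set s1 : Set α := s \ {a} with hs1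
  have hs1f : s1.Finite := hs.diff
  have h1 : 3 ≤ s1.ncard := by
    rw [hs1, Set.ncard_diff_singleton_of_mem ha]; omega
  obtain ⟨b, hb⟩ := (Set.ncard_pos hs1f).mp (by omega)
  set s2 : Set α := s1 \ {b} with hs2
  have hs2f : s2.Finite := hs1f.diff
  have h2 : 2 ≤ s2.ncard := by
    rw [hs2, Set.ncard_diff_singleton_of_mem hb]; omega
  obtain ⟨c, hc⟩ := (Set.ncard_pos hs2f).mp (by omega)
  set s3 : Set α := s2 \ {c} with hs3
  have hs3f : s3.Finite := hs2f.diff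
  have h3 : 1 ≤ s3.ncard := by
    rw [hs3, Set.ncard_diff_singleton_of_mem hc]; omega
  obtain ⟨d, hd⟩ := (Set.ncard_pos hs3f).mp (by omega)
  rw [hs3, hs2, hs1] at hd
  rw [hs2, hs1] at hc
  rw [hs1] at hb
  obtain ⟨⟨⟨hd1, hd2⟩, hd3⟩, hd4⟩ := hd
  obtain ⟨⟨hc1, hc2⟩, hc3⟩ := hc
  obtain ⟨hb1, hb2⟩ := hb
  exact ⟨a, b, c, d, ha, hb1, hc1, hd1,
    fun h => hb2 h.symm, fun h => hc2 h.symm, fun h => hd2 h.symm,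
    fun h => hc3 h.symm, fun h => hd3 h.symm, fun h => hd4 h.symm⟩

lemma isKDomSet_univ {V : Type*} (G : SimpleGraph V) (k : ℕ) :
    IsKDomSet G k Set.univ := fun v hv => absurd (Set.mem_univ v) hv

lemma kdomNum_le {V : Type*} {G : SimpleGraph V} {k : ℕ} {S : Set V} (h : IsKDomSet G k S) :
    kdomNum G k ≤ S.ncard := Nat.sInf_le ⟨S, h, rfl⟩

lemma le_kdomNum {V : Type*} {G : SimpleGraph V} {k n : ℕ}
    (h : ∀ S : Set V, IsKDomSet G k S → n ≤ S.ncard) : n ≤ kdomNum G k :=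
  le_csInf ⟨_, Set.univ, isKDomSet_univ G k, rfl⟩ (by rintro m ⟨S, hS, rfl⟩; exact h S hS)

lemma IsKDomSet.map_iso {V V' : Type*} {G : SimpleGraph V} {G' : SimpleGraph V'} (e : G ≃g G')
    {k : ℕ} {S : Set V} (h : IsKDomSet G k S) : IsKDomSet G' k (e '' S) := by
  intro v hv
  have hvS : e.symm v ∉ S := fun hm => hv ⟨e.symm v, hm, e.apply_symm_apply v⟩
  have key : G'.neighborSet v ∩ (e '' S) = e '' (G.neighborSet (e.symm v) ∩ S) := by
    ext y
    simp only [Set.mem_inter_iff, Set.mem_image, SimpleGraph.mem_neighborSet]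
    constructor
    · rintro ⟨hadj, x, hxS, rfl⟩
      refine ⟨x, ⟨?_, hxS⟩, rfl⟩
      rw [← e.apply_symm_apply v] at hadj
      exact e.map_adj_iff.mp hadj
    · rintro ⟨x, ⟨hadj, hxS⟩, rfl⟩
      refine ⟨?_, x, hxS, rfl⟩
      have := e.map_adj_iff.mpr hadj
      rwa [e.apply_symm_apply v] at this
  rw [key, Set.ncard_image_of_injective _ e.injective]
  exact h _ hvS

lemma kdomNum_congr {V V' : Type*} {G : SimpleGraph V} {G' : SimpleGraph V'} (e : G ≃g G')
    (k : ℕ) : kdomNum G k = kdomNum G' k := by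
  unfold kdomNum
  congr 1
  ext n
  constructor
  · rintro ⟨S, hS, rfl⟩
    exact ⟨e '' S, hS.map_iso e, Set.ncard_image_of_injective _ e.injective⟩
  · rintro ⟨S, hS, rfl⟩
    exact ⟨e.symm '' S, hS.map_iso e.symm, Set.ncard_image_of_injective _ e.symm.injective⟩

end Aux

/-- Let `G` be a connected bipartite finite graph with minimum degree at
least 3 such that every nonempty connected induced subgraph `H` with
`δ(H) ≥ 3` satisfies `γ_3(H) = γ(H) + 1`, and let `D` be a minimum
3-dominating set of `G`. Then every vertex outside `D` has degree exactly 3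
in `G`. -/
theorem statement17 {V : Type*} [Fintype V] (G : SimpleGraph V)
    (hconn : G.Connected)
    (hbip : ∃ A : Set V, ∀ u v : V, G.Adj u v → (u ∈ A ↔ v ∉ A))
    (hdeg : ∀ v, 3 ≤ (G.neighborSet v).ncard)
    (hper : ∀ W : Set V, W.Nonempty → (G.induce W).Connected →
        (∀ v, 3 ≤ ((G.induce W).neighborSet v).ncard) →
        kdomNum (G.induce W) 3 = kdomNum (G.induce W) 1 + 1)
    (D : Set V) (hD : IsKDomSet G 3 D) (hmin : D.ncard = kdomNum G 3) :
    ∀ v ∉ D, (G.neighborSet v).ncard = 3 := by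
  classical
  obtain ⟨A, hA⟩ := hbip
  have hfin : ∀ s : Set V, s.Finite := fun s => s.toFinite
  -- Transfer the periodicity hypothesis to `G` itself via `induce univ ≃g G`.
  have e := SimpleGraph.induceUnivIso G
  have hconn' : (G.induce (Set.univ : Set V)).Connected := e.connected_iff.mpr hconn
  have hdeg' : ∀ x : ↥(Set.univ : Set V), 3 ≤ ((G.induce (Set.univ : Set V)).neighborSet x).ncard := by
    intro x
    have hx : (G.induce (Set.univ : Set V)).neighborSet x
        = Subtype.val ⁻¹' (G.neighborSet x.1) := rfl
    rw [hx, Set.ncard_preimage_of_injective_subset_range Subtype.val_injective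
      (by rw [Subtype.range_val]; exact Set.subset_univ _)]
    exact hdeg x.1
  have hVne : Nonempty V := hconn.nonempty
  have huniv : kdomNum G 3 = kdomNum G 1 + 1 := by
    have h := hper Set.univ (by obtain ⟨x⟩ := hVne; exact ⟨x, trivial⟩) hconn' hdeg'
    rwa [kdomNum_congr e 3, kdomNum_congr e 1] at h
  have hDm : D.ncard = kdomNum G 1 + 1 := by rw [hmin, huniv]
  -- Step 1: every vertex outside `D` has all its neighbors in `D`.
  have hNsub : ∀ w, w ∉ D → ∀ y, G.Adj w y → y ∈ D := by
    intro w hwD y hwy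
    by_contra hyD
    obtain ⟨u₁, u₂, hu₁, hu₂, hu12⟩ :=
      aux_exists_two (hfin _) (le_trans (by norm_num) (hD w hwD))
    obtain ⟨x₁, x₂, hx₁, hx₂, hx12⟩ :=
      aux_exists_two (hfin _) (le_trans (by norm_num) (hD y hyD))
    obtain ⟨hu₁N, hu₁D⟩ := hu₁
    obtain ⟨hu₂N, hu₂D⟩ := hu₂
    obtain ⟨hx₁N, hx₁D⟩ := hx₁
    obtain ⟨hx₂N, hx₂D⟩ := hx₂
    have hau₁ : G.Adj w u₁ := hu₁N
    have hau₂ : G.Adj w u₂ := hu₂N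
    have hax₁ : G.Adj y x₁ := hx₁N
    have hax₂ : G.Adj y x₂ := hx₂N
    have hwy' : (w ∈ A ↔ y ∉ A) := hA w y hwy
    have hux : ∀ t₁ t₂ : V, G.Adj w t₁ → G.Adj y t₂ → t₁ ≠ t₂ := by
      intro t₁ t₂ h1 h2 he
      have e1 := hA w t₁ h1
      have e2 := hA y t₂ h2
      rw [he] at e1
      tauto
    set R : Set V := {u₁, u₂, x₁, x₂} with hR
    have hRD : R ⊆ D := by
      rw [hR]; rintro r (rfl | rfl | rfl | rfl) <;> assumption
    set S : Set V := insert w (insert y (D \ R)) with hSdef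
    have hwS : w ∈ S := Set.mem_insert _ _
    have hyS : y ∈ S := Set.mem_insert_of_mem _ (Set.mem_insert _ _)
    have hDRS : D \ R ⊆ S := fun t ht => Set.mem_insert_of_mem _ (Set.mem_insert_of_mem _ ht)
    have hdom : IsKDomSet G 1 S := by
      intro z hzS
      have conc : ∀ t : V, G.Adj z t → t ∈ S → 1 ≤ (G.neighborSet z ∩ S).ncard :=
        fun t ht hts => aux_one_le_ncard (Set.mem_inter ht hts) (hfin _)
      by_cases hzD : z ∈ D
      · have hzR : z ∈ R := by
          by_contra h
          exact hzS (hDRS ⟨hzD, h⟩)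
        rw [hR] at hzR
        rcases hzR with rfl | rfl | rfl | rfl
        · exact conc w hau₁.symm hwS
        · exact conc w hau₂.symm hwS
        · exact conc y hax₁.symm hyS
        · exact conc y hax₂.symm hyS
      · rcases Set.eq_empty_or_nonempty (G.neighborSet z ∩ (D \ R)) with hemp | ⟨t, htN, htDR⟩
        · exfalso
          have hsub : G.neighborSet z ∩ D ⊆ R := by
            rintro t ⟨htN', htD'⟩
            by_contra htR
            exact (Set.eq_empty_iff_forall_notMem.mp hemp t) ⟨htN', htD', htR⟩
          have h3 := hD z hzD
          have hsplit : (G.neighborSet z ∩ D ⊆ {u₁, u₂}) ∨ (G.neighborSet z ∩ D ⊆ {x₁, x₂}) := by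
            by_cases hzA : (z ∈ A ↔ w ∈ A)
            · left
              rintro t ⟨htN', htD'⟩
              have ht := hsub ⟨htN', htD'⟩
              have hzt := hA z t htN'
              rw [hR] at ht
              rcases ht with rfl | rfl | rfl | rfl
              · exact Set.mem_insert _ _
              · exact Set.mem_insert_of_mem _ rfl
              · exfalso; have h1 := hA y t hax₁; tauto
              · exfalso; have h1 := hA y t hax₂; tauto
            · right
              rintro t ⟨htN', htD'⟩
              have ht := hsub ⟨htN', htD'⟩
              have hzt := hA z t htN'
              rw [hR] at ht
              rcases ht with rfl | rfl | rfl | rfl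
              · exfalso; have h1 := hA w t hau₁; tauto
              · exfalso; have h1 := hA w t hau₂; tauto
              · exact Set.mem_insert _ _
              · exact Set.mem_insert_of_mem _ rfl
          have hle2 : (G.neighborSet z ∩ D).ncard ≤ 2 := by
            rcases hsplit with h | h
            · exact le_trans (Set.ncard_le_ncard h ((Set.finite_singleton _).insert _))
                (le_of_eq (Set.ncard_pair hu12))
            · exact le_trans (Set.ncard_le_ncard h ((Set.finite_singleton _).insert _))
                (le_of_eq (Set.ncard_pair hx12))
          omega
        · exact conc t htN (hDRS htDR)
    have hle := kdomNum_le hdom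
    have hR4 : R.ncard = 4 := by
      rw [hR]
      exact aux_ncard_four hu12 (hux u₁ x₁ hau₁ hax₁) (hux u₁ x₂ hau₁ hax₂)
        (hux u₂ x₁ hau₂ hax₁) (hux u₂ x₂ hau₂ hax₂) hx12
    have hD4 : 4 ≤ D.ncard := by
      rw [← hR4]; exact Set.ncard_le_ncard hRD (hfin _)
    have hwDR : w ∉ insert y (D \ R) := by
      rintro (rfl | ⟨h1, _⟩)
      · exact G.irrefl hwy
      · exact hwD h1
    have hyDR : y ∉ (D \ R) := fun h => hyD h.1
    have hSn : S.ncard = D.ncard - 4 + 2 := by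
      rw [hSdef, Set.ncard_insert_of_notMem hwDR (hfin _),
        Set.ncard_insert_of_notMem hyDR (hfin _), Set.ncard_diff hRD (hfin _), hR4]
    omega
  -- Step 2: main argument.
  intro v hvD
  by_contra hne3
  have h4 : 4 ≤ (G.neighborSet v).ncard := by
    have := hdeg v; omega
  obtain ⟨u₁, u₂, u₃, u₄, hu₁, hu₂, hu₃, hu₄, h12, h13, h14, h23, h24, h34⟩ :=
    aux_exists_four (hfin _) h4
  have ha₁ : G.Adj v u₁ := hu₁
  have ha₂ : G.Adj v u₂ := hu₂
  have ha₃ : G.Adj v u₃ := hu₃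
  have ha₄ : G.Adj v u₄ := hu₄
  have hd₁ : u₁ ∈ D := hNsub v hvD u₁ ha₁
  have hd₂ : u₂ ∈ D := hNsub v hvD u₂ ha₂
  have hd₃ : u₃ ∈ D := hNsub v hvD u₃ ha₃
  have hd₄ : u₄ ∈ D := hNsub v hvD u₄ ha₄
  have hD4 : 4 ≤ D.ncard := aux_four_le_ncard hd₁ hd₂ hd₃ hd₄ h12 h13 h14 h23 h24 h34 (hfin _)
  -- For each triple of neighbors there must be a "blocker".
  have hblock : ∀ T : Set V, T ⊆ G.neighborSet v → T.ncard = 3 →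
      ∃ w, w ∉ D ∧ w ≠ v ∧ G.neighborSet w = T := by
    intro T hTN hT3
    have hTD : T ⊆ D := fun t ht => hNsub v hvD t (hTN ht)
    by_contra hno
    push_neg at hno
    set S : Set V := insert v (D \ T) with hSdef
    have hdom : IsKDomSet G 1 S := by
      intro z hzS
      have conc : ∀ t : V, G.Adj z t → t ∈ S → 1 ≤ (G.neighborSet z ∩ S).ncard :=
        fun t ht hts => aux_one_le_ncard (Set.mem_inter ht hts) (hfin _)
      have hzv : z ≠ v := fun h => hzS (h ▸ Set.mem_insert _ _)
      by_cases hzD : z ∈ D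
      · have hzT : z ∈ T := by
          by_contra h
          exact hzS (Set.mem_insert_of_mem _ ⟨hzD, h⟩)
        exact conc v (hTN hzT).symm (Set.mem_insert _ _)
      · rcases Set.eq_empty_or_nonempty (G.neighborSet z ∩ (D \ T)) with hemp | ⟨t, htN, htDT⟩
        · exfalso
          have hsub : G.neighborSet z ⊆ T := by
            intro t htz
            have htD' : t ∈ D := hNsub z hzD t htz
            by_contra htT
            exact (Set.eq_empty_iff_forall_notMem.mp hemp t) ⟨htz, htD', htT⟩
          have heq : G.neighborSet z = T :=
            Set.eq_of_subset_of_ncard_le hsub (by rw [hT3]; exact hdeg z) (hfin _)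
          exact hno z hzD hzv heq
        · exact conc t htN (Set.mem_insert_of_mem _ htDT)
    have hle := kdomNum_le hdom
    have hvDT : v ∉ D \ T := fun h => hvD h.1
    have hSn : S.ncard = D.ncard - 3 + 1 := by
      rw [hSdef, Set.ncard_insert_of_notMem hvDT (hfin _), Set.ncard_diff hTD (hfin _), hT3]
    omega
  obtain ⟨w₁, hwD₁, hwv₁, hN₁⟩ := hblock {u₂, u₃, u₄}
    (by rintro a (rfl | rfl | rfl) <;> assumption) (aux_ncard_three h23 h24 h34)
  obtain ⟨w₂, hwD₂, hwv₂, hN₂⟩ := hblock {u₁, u₃, u₄}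
    (by rintro a (rfl | rfl | rfl) <;> assumption) (aux_ncard_three h13 h14 h34)
  obtain ⟨w₃, hwD₃, hwv₃, hN₃⟩ := hblock {u₁, u₂, u₄}
    (by rintro a (rfl | rfl | rfl) <;> assumption) (aux_ncard_three h12 h14 h24)
  obtain ⟨w₄, hwD₄, hwv₄, hN₄⟩ := hblock {u₁, u₂, u₃}
    (by rintro a (rfl | rfl | rfl) <;> assumption) (aux_ncard_three h12 h13 h23)
  -- adjacency facts
  have haw₁ : ∀ a ∈ ({u₂, u₃, u₄} : Set V), G.Adj w₁ a := by
    intro a ha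
    have : a ∈ G.neighborSet w₁ := by rw [hN₁]; exact ha
    exact this
  have haw₂ : ∀ a ∈ ({u₁, u₃, u₄} : Set V), G.Adj w₂ a := by
    intro a ha
    have : a ∈ G.neighborSet w₂ := by rw [hN₂]; exact ha
    exact this
  have haw₃ : ∀ a ∈ ({u₁, u₂, u₄} : Set V), G.Adj w₃ a := by
    intro a ha
    have : a ∈ G.neighborSet w₃ := by rw [hN₃]; exact ha
    exact this
  have haw₄ : ∀ a ∈ ({u₁, u₂, u₃} : Set V), G.Adj w₄ a := by
    intro a ha
    have : a ∈ G.neighborSet w₄ := by rw [hN₄]; exact ha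
    exact this
  -- distinctness of the blockers
  have hw12 : w₁ ≠ w₂ := by
    intro h
    have h' : u₁ ∈ G.neighborSet w₁ := by rw [h, hN₂]; exact Set.mem_insert _ _
    rw [hN₁] at h'
    rcases h' with h' | h' | h'
    exacts [h12 h', h13 h', h14 h']
  have hw13 : w₁ ≠ w₃ := by
    intro h
    have h' : u₁ ∈ G.neighborSet w₁ := by rw [h, hN₃]; exact Set.mem_insert _ _
    rw [hN₁] at h'
    rcases h' with h' | h' | h'
    exacts [h12 h', h13 h', h14 h']
  have hw14 : w₁ ≠ w₄ := by
    intro h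
    have h' : u₁ ∈ G.neighborSet w₁ := by rw [h, hN₄]; exact Set.mem_insert _ _
    rw [hN₁] at h'
    rcases h' with h' | h' | h'
    exacts [h12 h', h13 h', h14 h']
  have hw23 : w₂ ≠ w₃ := by
    intro h
    have h' : u₂ ∈ G.neighborSet w₂ := by
      rw [h, hN₃]; exact Set.mem_insert_of_mem _ (Set.mem_insert _ _)
    rw [hN₂] at h'
    rcases h' with h' | h' | h'
    exacts [h12 h'.symm, h23 h', h24 h']
  have hw24 : w₂ ≠ w₄ := by
    intro h
    have h' : u₂ ∈ G.neighborSet w₂ := by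
      rw [h, hN₄]; exact Set.mem_insert_of_mem _ (Set.mem_insert _ _)
    rw [hN₂] at h'
    rcases h' with h' | h' | h'
    exacts [h12 h'.symm, h23 h', h24 h']
  have hw34 : w₃ ≠ w₄ := by
    intro h
    have h' : u₃ ∈ G.neighborSet w₃ := by
      rw [h, hN₄]; exact Set.mem_insert_of_mem _ (Set.mem_insert_of_mem _ rfl)
    rw [hN₃] at h'
    rcases h' with h' | h' | h'
    exacts [h13 h'.symm, h23 h'.symm, h34 h']
  -- the induced subgraph on these nine vertices
  set W : Set V := {v, u₁, u₂, u₃, u₄, w₁, w₂, w₃, w₄} with hWdef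
  have hvW : v ∈ W := by rw [hWdef]; simp
  have hu1W : u₁ ∈ W := by rw [hWdef]; simp
  have hu2W : u₂ ∈ W := by rw [hWdef]; simp
  have hu3W : u₃ ∈ W := by rw [hWdef]; simp
  have hu4W : u₄ ∈ W := by rw [hWdef]; simp
  have hw1W : w₁ ∈ W := by rw [hWdef]; simp
  have hw2W : w₂ ∈ W := by rw [hWdef]; simp
  have hw3W : w₃ ∈ W := by rw [hWdef]; simp
  have hw4W : w₄ ∈ W := by rw [hWdef]; simp
  have hWfin : ∀ s : Set ↥W, s.Finite := fun s => s.toFinite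
  have hmkne : ∀ {a b : V} (ha : a ∈ W) (hb : b ∈ W), a ≠ b → (⟨a, ha⟩ : ↥W) ≠ ⟨b, hb⟩ :=
    fun _ _ h he => h (congrArg Subtype.val he)
  -- minimum degree at least three in the induced subgraph
  have hHdeg : ∀ x : ↥W, 3 ≤ ((G.induce W).neighborSet x).ncard := by
    rintro ⟨x, hxW⟩
    have hx' := hxW
    rw [hWdef] at hx'
    simp only [Set.mem_insert_iff, Set.mem_singleton_iff] at hx'
    rcases hx' with rfl | rfl | rfl | rfl | rfl | rfl | rfl | rfl | rfl
    · exact aux_three_le_ncard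
        (show (⟨u₁, hu1W⟩ : ↥W) ∈ (G.induce W).neighborSet ⟨x, hxW⟩ from ha₁)
        (show (⟨u₂, hu2W⟩ : ↥W) ∈ (G.induce W).neighborSet ⟨x, hxW⟩ from ha₂)
        (show (⟨u₃, hu3W⟩ : ↥W) ∈ (G.induce W).neighborSet ⟨x, hxW⟩ from ha₃)
        (hmkne _ _ h12) (hmkne _ _ h13) (hmkne _ _ h23) (hWfin _)
    · exact aux_three_le_ncard
        (show (⟨v, hvW⟩ : ↥W) ∈ (G.induce W).neighborSet ⟨x, hxW⟩ from ha₁.symm)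
        (show (⟨w₂, hw2W⟩ : ↥W) ∈ (G.induce W).neighborSet ⟨x, hxW⟩ from
          (haw₂ x (Set.mem_insert _ _)).symm)
        (show (⟨w₃, hw3W⟩ : ↥W) ∈ (G.induce W).neighborSet ⟨x, hxW⟩ from
          (haw₃ x (Set.mem_insert _ _)).symm)
        (hmkne _ _ (Ne.symm hwv₂)) (hmkne _ _ (Ne.symm hwv₃)) (hmkne _ _ hw23) (hWfin _)
    · exact aux_three_le_ncard
        (show (⟨v, hvW⟩ : ↥W) ∈ (G.induce W).neighborSet ⟨x, hxW⟩ from ha₂.symm)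
        (show (⟨w₁, hw1W⟩ : ↥W) ∈ (G.induce W).neighborSet ⟨x, hxW⟩ from
          (haw₁ x (Set.mem_insert _ _)).symm)
        (show (⟨w₃, hw3W⟩ : ↥W) ∈ (G.induce W).neighborSet ⟨x, hxW⟩ from
          (haw₃ x (Set.mem_insert_of_mem _ (Set.mem_insert _ _))).symm)
        (hmkne _ _ (Ne.symm hwv₁)) (hmkne _ _ (Ne.symm hwv₃)) (hmkne _ _ hw13) (hWfin _)
    · exact aux_three_le_ncard
        (show (⟨v, hvW⟩ : ↥W) ∈ (G.induce W).neighborSet ⟨x, hxW⟩ from ha₃.symm)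
        (show (⟨w₁, hw1W⟩ : ↥W) ∈ (G.induce W).neighborSet ⟨x, hxW⟩ from
          (haw₁ x (Set.mem_insert_of_mem _ (Set.mem_insert _ _))).symm)
        (show (⟨w₂, hw2W⟩ : ↥W) ∈ (G.induce W).neighborSet ⟨x, hxW⟩ from
          (haw₂ x (Set.mem_insert_of_mem _ (Set.mem_insert _ _))).symm)
        (hmkne _ _ (Ne.symm hwv₁)) (hmkne _ _ (Ne.symm hwv₂)) (hmkne _ _ hw12) (hWfin _)
    · exact aux_three_le_ncard
        (show (⟨v, hvW⟩ : ↥W) ∈ (G.induce W).neighborSet ⟨x, hxW⟩ from ha₄.symm)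
        (show (⟨w₁, hw1W⟩ : ↥W) ∈ (G.induce W).neighborSet ⟨x, hxW⟩ from
          (haw₁ x (Set.mem_insert_of_mem _ (Set.mem_insert_of_mem _ rfl))).symm)
        (show (⟨w₂, hw2W⟩ : ↥W) ∈ (G.induce W).neighborSet ⟨x, hxW⟩ from
          (haw₂ x (Set.mem_insert_of_mem _ (Set.mem_insert_of_mem _ rfl))).symm)
        (hmkne _ _ (Ne.symm hwv₁)) (hmkne _ _ (Ne.symm hwv₂)) (hmkne _ _ hw12) (hWfin _)
    · exact aux_three_le_ncard
        (show (⟨u₂, hu2W⟩ : ↥W) ∈ (G.induce W).neighborSet ⟨x, hxW⟩ from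
          haw₁ u₂ (Set.mem_insert _ _))
        (show (⟨u₃, hu3W⟩ : ↥W) ∈ (G.induce W).neighborSet ⟨x, hxW⟩ from
          haw₁ u₃ (Set.mem_insert_of_mem _ (Set.mem_insert _ _)))
        (show (⟨u₄, hu4W⟩ : ↥W) ∈ (G.induce W).neighborSet ⟨x, hxW⟩ from
          haw₁ u₄ (Set.mem_insert_of_mem _ (Set.mem_insert_of_mem _ rfl)))
        (hmkne _ _ h23) (hmkne _ _ h24) (hmkne _ _ h34) (hWfin _)
    · exact aux_three_le_ncard
        (show (⟨u₁, hu1W⟩ : ↥W) ∈ (G.induce W).neighborSet ⟨x, hxW⟩ from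
          haw₂ u₁ (Set.mem_insert _ _))
        (show (⟨u₃, hu3W⟩ : ↥W) ∈ (G.induce W).neighborSet ⟨x, hxW⟩ from
          haw₂ u₃ (Set.mem_insert_of_mem _ (Set.mem_insert _ _)))
        (show (⟨u₄, hu4W⟩ : ↥W) ∈ (G.induce W).neighborSet ⟨x, hxW⟩ from
          haw₂ u₄ (Set.mem_insert_of_mem _ (Set.mem_insert_of_mem _ rfl)))
        (hmkne _ _ h13) (hmkne _ _ h14) (hmkne _ _ h34) (hWfin _)
    · exact aux_three_le_ncard
        (show (⟨u₁, hu1W⟩ : ↥W) ∈ (G.induce W).neighborSet ⟨x, hxW⟩ from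
          haw₃ u₁ (Set.mem_insert _ _))
        (show (⟨u₂, hu2W⟩ : ↥W) ∈ (G.induce W).neighborSet ⟨x, hxW⟩ from
          haw₃ u₂ (Set.mem_insert_of_mem _ (Set.mem_insert _ _)))
        (show (⟨u₄, hu4W⟩ : ↥W) ∈ (G.induce W).neighborSet ⟨x, hxW⟩ from
          haw₃ u₄ (Set.mem_insert_of_mem _ (Set.mem_insert_of_mem _ rfl)))
        (hmkne _ _ h12) (hmkne _ _ h14) (hmkne _ _ h24) (hWfin _)
    · exact aux_three_le_ncard
        (show (⟨u₁, hu1W⟩ : ↥W) ∈ (G.induce W).neighborSet ⟨x, hxW⟩ from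
          haw₄ u₁ (Set.mem_insert _ _))
        (show (⟨u₂, hu2W⟩ : ↥W) ∈ (G.induce W).neighborSet ⟨x, hxW⟩ from
          haw₄ u₂ (Set.mem_insert_of_mem _ (Set.mem_insert _ _)))
        (show (⟨u₃, hu3W⟩ : ↥W) ∈ (G.induce W).neighborSet ⟨x, hxW⟩ from
          haw₄ u₃ (Set.mem_insert_of_mem _ (Set.mem_insert_of_mem _ rfl)))
        (hmkne _ _ h12) (hmkne _ _ h13) (hmkne _ _ h23) (hWfin _)
  -- connectivity of the induced subgraph
  have hWconn : (G.induce W).Connected := by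
    rw [SimpleGraph.connected_iff]
    refine ⟨?_, ⟨⟨v, hvW⟩⟩⟩
    have hr : ∀ x : ↥W, (G.induce W).Reachable x ⟨v, hvW⟩ := by
      rintro ⟨x, hxW⟩
      have hx' := hxW
      rw [hWdef] at hx'
      simp only [Set.mem_insert_iff, Set.mem_singleton_iff] at hx'
      rcases hx' with rfl | rfl | rfl | rfl | rfl | rfl | rfl | rfl | rfl
      · exact SimpleGraph.Reachable.refl _
      · exact SimpleGraph.Adj.reachable
          (show (G.induce W).Adj ⟨x, hxW⟩ ⟨v, hvW⟩ from ha₁.symm)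
      · exact SimpleGraph.Adj.reachable
          (show (G.induce W).Adj ⟨x, hxW⟩ ⟨v, hvW⟩ from ha₂.symm)
      · exact SimpleGraph.Adj.reachable
          (show (G.induce W).Adj ⟨x, hxW⟩ ⟨v, hvW⟩ from ha₃.symm)
      · exact SimpleGraph.Adj.reachable
          (show (G.induce W).Adj ⟨x, hxW⟩ ⟨v, hvW⟩ from ha₄.symm)
      · exact (SimpleGraph.Adj.reachable
          (show (G.induce W).Adj ⟨x, hxW⟩ ⟨u₂, hu2W⟩ from haw₁ u₂ (Set.mem_insert _ _))).trans
          (SimpleGraph.Adj.reachable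
            (show (G.induce W).Adj ⟨u₂, hu2W⟩ ⟨v, hvW⟩ from ha₂.symm))
      · exact (SimpleGraph.Adj.reachable
          (show (G.induce W).Adj ⟨x, hxW⟩ ⟨u₁, hu1W⟩ from haw₂ u₁ (Set.mem_insert _ _))).trans
          (SimpleGraph.Adj.reachable
            (show (G.induce W).Adj ⟨u₁, hu1W⟩ ⟨v, hvW⟩ from ha₁.symm))
      · exact (SimpleGraph.Adj.reachable
          (show (G.induce W).Adj ⟨x, hxW⟩ ⟨u₁, hu1W⟩ from haw₃ u₁ (Set.mem_insert _ _))).trans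
          (SimpleGraph.Adj.reachable
            (show (G.induce W).Adj ⟨u₁, hu1W⟩ ⟨v, hvW⟩ from ha₁.symm))
      · exact (SimpleGraph.Adj.reachable
          (show (G.induce W).Adj ⟨x, hxW⟩ ⟨u₁, hu1W⟩ from haw₄ u₁ (Set.mem_insert _ _))).trans
          (SimpleGraph.Adj.reachable
            (show (G.induce W).Adj ⟨u₁, hu1W⟩ ⟨v, hvW⟩ from ha₁.symm))
    exact fun x y => (hr x).trans (hr y).symm
  -- lower bound: every 3-dominating set of the induced graph has at least 4 vertices
  have hpreim3 : ∀ Ti : Set V, Ti ⊆ W → Ti.ncard = 3 →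
      (Subtype.val ⁻¹' Ti : Set ↥W).ncard = 3 := by
    intro Ti hTiW h3
    rw [Set.ncard_preimage_of_injective_subset_range Subtype.val_injective
      (by rw [Subtype.range_val]; exact hTiW)]
    exact h3
  have hlow : 4 ≤ kdomNum (G.induce W) 3 := by
    refine le_kdomNum ?_
    intro S hS
    have hfail : ∀ (wi : V) (hwiW : wi ∈ W) (Ti : Set V), G.neighborSet wi = Ti → Ti ⊆ W →
        Ti.ncard = 3 → (⟨wi, hwiW⟩ : ↥W) ∉ S →
        ∀ (a : V) (haW : a ∈ W), a ∈ Ti → (⟨a, haW⟩ : ↥W) ∈ S := by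
      intro wi hwiW Ti hNi hTiW h3 hwiS a haW haTi
      have h1 := hS _ hwiS
      have hNH : (G.induce W).neighborSet ⟨wi, hwiW⟩ = Subtype.val ⁻¹' Ti := by
        show Subtype.val ⁻¹' (G.neighborSet wi) = _
        rw [hNi]
      rw [hNH] at h1
      have heq : (Subtype.val ⁻¹' Ti) ∩ S = Subtype.val ⁻¹' Ti :=
        Set.eq_of_subset_of_ncard_le Set.inter_subset_left
          (by rw [hpreim3 Ti hTiW h3]; exact h1) (hWfin _)
      have hmem : (⟨a, haW⟩ : ↥W) ∈ (Subtype.val ⁻¹' Ti) ∩ S := by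
        rw [heq]; exact haTi
      exact hmem.2
    have hf₁ := hfail w₁ hw1W {u₂, u₃, u₄} hN₁
      (by rintro a (rfl | rfl | rfl) <;> assumption) (aux_ncard_three h23 h24 h34)
    have hf₂ := hfail w₂ hw2W {u₁, u₃, u₄} hN₂
      (by rintro a (rfl | rfl | rfl) <;> assumption) (aux_ncard_three h13 h14 h34)
    have hf₃ := hfail w₃ hw3W {u₁, u₂, u₄} hN₃
      (by rintro a (rfl | rfl | rfl) <;> assumption) (aux_ncard_three h12 h14 h24)
    have hf₄ := hfail w₄ hw4W {u₁, u₂, u₃} hN₄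
      (by rintro a (rfl | rfl | rfl) <;> assumption) (aux_ncard_three h12 h13 h23)
    have hsucc : ∀ x y z : ↥W, x.1 ∉ D → y.1 ∉ D → z.1 ∉ D → x ≠ y → x ≠ z → y ≠ z →
        x ∈ S → y ∈ S → z ∈ S → x.1 ≠ v → y.1 ≠ v → z.1 ≠ v → 4 ≤ S.ncard := by
      intro x y z hx hy hz hxy hxz hyz hxS hyS hzS hxv hyv hzv
      by_cases hvS : (⟨v, hvW⟩ : ↥W) ∈ S
      · exact aux_four_le_ncard hvS hxS hyS hzS
          (fun h => hxv (congrArg Subtype.val h).symm)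
          (fun h => hyv (congrArg Subtype.val h).symm)
          (fun h => hzv (congrArg Subtype.val h).symm) hxy hxz hyz (hWfin _)
      · have h1 := hS _ hvS
        have hne0 : ((G.induce W).neighborSet ⟨v, hvW⟩ ∩ S).Nonempty :=
          Set.nonempty_of_ncard_ne_zero (by omega)
        obtain ⟨t, htN, htS⟩ := hne0
        have htD : t.1 ∈ D := hNsub v hvD t.1 htN
        exact aux_four_le_ncard htS hxS hyS hzS
          (fun h => hx (h ▸ htD)) (fun h => hy (h ▸ htD)) (fun h => hz (h ▸ htD))
          hxy hxz hyz (hWfin _)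
    by_cases h1 : (⟨w₁, hw1W⟩ : ↥W) ∈ S
    · by_cases h2 : (⟨w₂, hw2W⟩ : ↥W) ∈ S
      · by_cases h3 : (⟨w₃, hw3W⟩ : ↥W) ∈ S
        · exact hsucc ⟨w₁, hw1W⟩ ⟨w₂, hw2W⟩ ⟨w₃, hw3W⟩ hwD₁ hwD₂ hwD₃
            (hmkne _ _ hw12) (hmkne _ _ hw13) (hmkne _ _ hw23) h1 h2 h3 hwv₁ hwv₂ hwv₃
        · by_cases h4 : (⟨w₄, hw4W⟩ : ↥W) ∈ S
          · exact hsucc ⟨w₁, hw1W⟩ ⟨w₂, hw2W⟩ ⟨w₄, hw4W⟩ hwD₁ hwD₂ hwD₄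
              (hmkne _ _ hw12) (hmkne _ _ hw14) (hmkne _ _ hw24) h1 h2 h4 hwv₁ hwv₂ hwv₄
          · -- w₃, w₄ ∉ S : all u's belong to S
            exact aux_four_le_ncard
              (hf₃ h3 u₁ hu1W (by simp)) (hf₃ h3 u₂ hu2W (by simp))
              (hf₄ h4 u₃ hu3W (by simp)) (hf₃ h3 u₄ hu4W (by simp))
              (hmkne _ _ h12) (hmkne _ _ h13) (hmkne _ _ h14)
              (hmkne _ _ h23) (hmkne _ _ h24) (hmkne _ _ h34) (hWfin _)
      · by_cases h3 : (⟨w₃, hw3W⟩ : ↥W) ∈ S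
        · by_cases h4 : (⟨w₄, hw4W⟩ : ↥W) ∈ S
          · exact hsucc ⟨w₁, hw1W⟩ ⟨w₃, hw3W⟩ ⟨w₄, hw4W⟩ hwD₁ hwD₃ hwD₄
              (hmkne _ _ hw13) (hmkne _ _ hw14) (hmkne _ _ hw34) h1 h3 h4 hwv₁ hwv₃ hwv₄
          · -- w₂, w₄ ∉ S
            exact aux_four_le_ncard
              (hf₂ h2 u₁ hu1W (by simp)) (hf₄ h4 u₂ hu2W (by simp))
              (hf₂ h2 u₃ hu3W (by simp)) (hf₂ h2 u₄ hu4W (by simp))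
              (hmkne _ _ h12) (hmkne _ _ h13) (hmkne _ _ h14)
              (hmkne _ _ h23) (hmkne _ _ h24) (hmkne _ _ h34) (hWfin _)
        · -- w₂, w₃ ∉ S
          exact aux_four_le_ncard
            (hf₂ h2 u₁ hu1W (by simp)) (hf₃ h3 u₂ hu2W (by simp))
            (hf₂ h2 u₃ hu3W (by simp)) (hf₂ h2 u₄ hu4W (by simp))
            (hmkne _ _ h12) (hmkne _ _ h13) (hmkne _ _ h14)
            (hmkne _ _ h23) (hmkne _ _ h24) (hmkne _ _ h34) (hWfin _)
    · by_cases h2 : (⟨w₂, hw2W⟩ : ↥W) ∈ S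
      · by_cases h3 : (⟨w₃, hw3W⟩ : ↥W) ∈ S
        · by_cases h4 : (⟨w₄, hw4W⟩ : ↥W) ∈ S
          · exact hsucc ⟨w₂, hw2W⟩ ⟨w₃, hw3W⟩ ⟨w₄, hw4W⟩ hwD₂ hwD₃ hwD₄
              (hmkne _ _ hw23) (hmkne _ _ hw24) (hmkne _ _ hw34) h2 h3 h4 hwv₂ hwv₃ hwv₄
          · -- w₁, w₄ ∉ S
            exact aux_four_le_ncard
              (hf₄ h4 u₁ hu1W (by simp)) (hf₁ h1 u₂ hu2W (by simp))
              (hf₁ h1 u₃ hu3W (by simp)) (hf₁ h1 u₄ hu4W (by simp))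
              (hmkne _ _ h12) (hmkne _ _ h13) (hmkne _ _ h14)
              (hmkne _ _ h23) (hmkne _ _ h24) (hmkne _ _ h34) (hWfin _)
        · -- w₁, w₃ ∉ S
          exact aux_four_le_ncard
            (hf₃ h3 u₁ hu1W (by simp)) (hf₁ h1 u₂ hu2W (by simp))
            (hf₁ h1 u₃ hu3W (by simp)) (hf₁ h1 u₄ hu4W (by simp))
            (hmkne _ _ h12) (hmkne _ _ h13) (hmkne _ _ h14)
            (hmkne _ _ h23) (hmkne _ _ h24) (hmkne _ _ h34) (hWfin _)
      · -- w₁, w₂ ∉ S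
        exact aux_four_le_ncard
          (hf₂ h2 u₁ hu1W (by simp)) (hf₁ h1 u₂ hu2W (by simp))
          (hf₁ h1 u₃ hu3W (by simp)) (hf₁ h1 u₄ hu4W (by simp))
          (hmkne _ _ h12) (hmkne _ _ h13) (hmkne _ _ h14)
          (hmkne _ _ h23) (hmkne _ _ h24) (hmkne _ _ h34) (hWfin _)
  -- upper bound: {u₁, w₁} is a dominating set of the induced graph
  have hup : kdomNum (G.induce W) 1 ≤ 2 := by
    have hdom : IsKDomSet (G.induce W) 1 ({⟨u₁, hu1W⟩, ⟨w₁, hw1W⟩} : Set ↥W) := by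
      rintro ⟨z, hzW⟩ hzS
      have conc : ∀ t : ↥W, (G.induce W).Adj ⟨z, hzW⟩ t →
          t ∈ ({⟨u₁, hu1W⟩, ⟨w₁, hw1W⟩} : Set ↥W) →
          1 ≤ ((G.induce W).neighborSet ⟨z, hzW⟩ ∩ {⟨u₁, hu1W⟩, ⟨w₁, hw1W⟩}).ncard :=
        fun t ht hts => aux_one_le_ncard (Set.mem_inter ht hts) (hWfin _)
      have hz' := hzW
      rw [hWdef] at hz'
      simp only [Set.mem_insert_iff, Set.mem_singleton_iff] at hz'
      rcases hz' with rfl | rfl | rfl | rfl | rfl | rfl | rfl | rfl | rfl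
      · exact conc ⟨u₁, hu1W⟩ ha₁ (Set.mem_insert _ _)
      · exact absurd (Or.inl rfl) hzS
      · exact conc ⟨w₁, hw1W⟩ (haw₁ z (Set.mem_insert _ _)).symm
          (Set.mem_insert_of_mem _ rfl)
      · exact conc ⟨w₁, hw1W⟩ (haw₁ z (Set.mem_insert_of_mem _ (Set.mem_insert _ _))).symm
          (Set.mem_insert_of_mem _ rfl)
      · exact conc ⟨w₁, hw1W⟩
          (haw₁ z (Set.mem_insert_of_mem _ (Set.mem_insert_of_mem _ rfl))).symm
          (Set.mem_insert_of_mem _ rfl)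
      · exact absurd (Or.inr rfl) hzS
      · exact conc ⟨u₁, hu1W⟩ (haw₂ u₁ (Set.mem_insert _ _)) (Set.mem_insert _ _)
      · exact conc ⟨u₁, hu1W⟩ (haw₃ u₁ (Set.mem_insert _ _)) (Set.mem_insert _ _)
      · exact conc ⟨u₁, hu1W⟩ (haw₄ u₁ (Set.mem_insert _ _)) (Set.mem_insert _ _)
    have h2 := kdomNum_le hdom
    have hc2 : ({⟨u₁, hu1W⟩, ⟨w₁, hw1W⟩} : Set ↥W).ncard = 2 :=
      Set.ncard_pair (hmkne _ _ (fun h => hwD₁ (h ▸ hd₁)))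
    rw [hc2] at h2
    exact h2
  have hkey := hper W ⟨v, hvW⟩ hWconn hHdeg
  omega
end
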